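/- arXiv:2211.02841 — 4 statements merged into one kernel-verified Lean document; each statement's English description precedes it below -/
import Mathlib

section
/- For every tensor A ∈ ℂ^{n1×n2×n3} there exists a unique tensor X ∈ ℂ^{n2×n1×n3} satisfying A *_c X *_c A = A, X *_c A *_c X = X, (A *_c X)^H = A *_c X, and (X *_c A)^H = X *_c A; that is, the Moore-Penrose inverse A^† of A under the C-product exists and is unique. -/
noncomputable section

/-- A third-order tensor: a family of frontal slices. -/
abbrev Tensor (n1 n2 n3 : ℕ) : Type := Fin n3 → Matrix (Fin n1) (Fin n2) ℂ

namespace Tensor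

/-- The block Toeplitz-plus-Hankel matrix `mat(A)` associated to a tensor. -/
def matT {n1 n2 n3 : ℕ} (A : Tensor n1 n2 n3) :
    Matrix (Fin n3 × Fin n1) (Fin n3 × Fin n2) ℂ := fun p q =>
  A ⟨p.1.1 - q.1.1 + (q.1.1 - p.1.1), by
        have h1 := p.1.isLt; have h2 := q.1.isLt; omega⟩ p.2 q.2 +
    (if h : p.1.1 + q.1.1 + 2 ≤ n3 then A ⟨p.1.1 + q.1.1 + 1, by omega⟩ p.2 q.2
     else if h2 : n3 ≤ p.1.1 + q.1.1 then
       A ⟨2 * n3 - (p.1.1 + q.1.1) - 1, by have h1 := p.1.isLt; omega⟩ p.2 q.2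
     else 0)

/-- `ten`, the inverse of `mat` on its range: the slices of a tensor are recovered
from the first block-column of its `mat` by an alternating sum. -/
def tenT {n1 n2 n3 : ℕ} (M : Matrix (Fin n3 × Fin n1) (Fin n3 × Fin n2) ℂ) :
    Tensor n1 n2 n3 := fun i => Matrix.of fun a b =>
  ∑ t : Fin n3, if i.1 ≤ t.1 then (-1 : ℂ) ^ (t.1 - i.1) * M (t, a) (⟨0, i.pos⟩, b) else 0

/-- The C-product of two tensors: the unique tensor whose `mat` is `mat(A) * mat(B)`. -/
def cmul {n1 n2 l n3 : ℕ} (A : Tensor n1 n2 n3) (B : Tensor n2 l n3) : Tensor n1 l n3 :=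
  tenT (matT A * matT B)

/-- The conjugate transpose of a tensor, taken slice-wise. -/
def conjT {n1 n2 n3 : ℕ} (A : Tensor n1 n2 n3) : Tensor n2 n1 n3 := fun i => (A i).conjTranspose

/-- The identity tensor: the tensor whose `mat` is the identity matrix. -/
def idT {n n3 : ℕ} : Tensor n n n3 := fun i => if i.1 = 0 then 1 else 0

/-- A tensor is unitary if `Qᴴ *c Q = Q *c Qᴴ = I`. -/
def Unitary {n n3 : ℕ} (Q : Tensor n n n3) : Prop :=
  cmul (conjT Q) Q = idT ∧ cmul Q (conjT Q) = idT

/-- `X` is the inverse of the square tensor `B` under the C-product. -/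
def IsInverse {n n3 : ℕ} (B X : Tensor n n n3) : Prop :=
  cmul B X = idT ∧ cmul X B = idT

/-- `X` is the Moore-Penrose inverse of `A` under the C-product. -/
def IsMP {n1 n2 n3 : ℕ} (A : Tensor n1 n2 n3) (X : Tensor n2 n1 n3) : Prop :=
  cmul (cmul A X) A = A ∧ cmul (cmul X A) X = X ∧
    conjT (cmul A X) = cmul A X ∧ conjT (cmul X A) = cmul X A

/-- Powers of a square tensor with respect to the C-product. -/
def cpow {n n3 : ℕ} (A : Tensor n n n3) : ℕ → Tensor n n n3
  | 0 => idT
  | m + 1 => cmul (cpow A m) A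

/-- `ind(A) = k`: `k` is the smallest nonnegative integer with
`rank(mat(A)^k) = rank(mat(A)^(k+1))`. -/
def IsIndex {n n3 : ℕ} (A : Tensor n n n3) (k : ℕ) : Prop :=
  (matT A ^ k).rank = (matT A ^ (k + 1)).rank ∧
    ∀ j < k, (matT A ^ j).rank ≠ (matT A ^ (j + 1)).rank

/-- `X` is the Drazin inverse of `A` (of index `k`) under the C-product. -/
def IsDrazin {n n3 : ℕ} (A : Tensor n n n3) (k : ℕ) (X : Tensor n n n3) : Prop :=
  cmul (cpow A (k + 1)) X = cpow A k ∧ cmul (cmul X A) X = X ∧ cmul A X = cmul X A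

/-- `X` is an inverse of `A` along `G` under the C-product. -/
def IsInvAlong {n1 n2 n3 : ℕ} (A : Tensor n1 n2 n3) (G X : Tensor n2 n1 n3) : Prop :=
  cmul (cmul X A) G = G ∧ cmul (cmul G A) X = G ∧
    (∃ U : Tensor n1 n1 n3, X = cmul G U) ∧
    (∃ V : Tensor n2 n2 n3, conjT X = cmul (conjT G) V)

/-- All frontal slices are diagonal. -/
def FDiag {n1 n2 n3 : ℕ} (A : Tensor n1 n2 n3) : Prop :=
  ∀ (i : Fin n3) (a : Fin n1) (b : Fin n2), (a : ℕ) ≠ (b : ℕ) → A i a b = 0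

/-- All frontal slices are upper triangular. -/
def FUpper {n1 n2 n3 : ℕ} (A : Tensor n1 n2 n3) : Prop :=
  ∀ (i : Fin n3) (a : Fin n1) (b : Fin n2), (b : ℕ) < (a : ℕ) → A i a b = 0

/-- All frontal slices are lower triangular. -/
def FLower {n1 n2 n3 : ℕ} (A : Tensor n1 n2 n3) : Prop :=
  ∀ (i : Fin n3) (a : Fin n1) (b : Fin n2), (a : ℕ) < (b : ℕ) → A i a b = 0

/-- Slice-wise 2×2 block tensor `[[A, B],[C, D]]`. -/
def blockT {r s t u n3 : ℕ} (A : Tensor r t n3) (B : Tensor r u n3)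
    (C : Tensor s t n3) (D : Tensor s u n3) : Tensor (r + s) (t + u) n3 := fun i =>
  Matrix.reindex finSumFinEquiv finSumFinEquiv (Matrix.fromBlocks (A i) (B i) (C i) (D i))

/-- The mode-3 product of a tensor with an `n3 × n3` matrix. -/
def mode3 {n1 n2 n3 : ℕ} (A : Tensor n1 n2 n3) (M : Matrix (Fin n3) (Fin n3) ℂ) :
    Tensor n1 n2 n3 := fun l => ∑ i, M l i • A i

end Tensor

open Tensor

namespace MPAux
open Matrix Polynomial

variable {m : Type*} [Fintype m] [DecidableEq m]

def Phi {B : Matrix m m ℂ} (hB : B.IsHermitian) (f : ℝ → ℂ) : Matrix m m ℂ :=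
  (hB.eigenvectorUnitary : Matrix m m ℂ) * diagonal (fun i => f (hB.eigenvalues i)) *
    star (hB.eigenvectorUnitary : Matrix m m ℂ)

variable {B : Matrix m m ℂ} (hB : B.IsHermitian)

lemma Phi_mul (f g : ℝ → ℂ) : Phi hB f * Phi hB g = Phi hB (fun x => f x * g x) := by
  unfold Phi
  have h1 : (star (hB.eigenvectorUnitary : Matrix m m ℂ)) *
      (hB.eigenvectorUnitary : Matrix m m ℂ) = 1 := Unitary.coe_star_mul_self _
  calc (hB.eigenvectorUnitary : Matrix m m ℂ) * diagonal (fun i => f (hB.eigenvalues i)) *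
      star (hB.eigenvectorUnitary : Matrix m m ℂ) *
      ((hB.eigenvectorUnitary : Matrix m m ℂ) * diagonal (fun i => g (hB.eigenvalues i)) *
      star (hB.eigenvectorUnitary : Matrix m m ℂ))
      = (hB.eigenvectorUnitary : Matrix m m ℂ) * (diagonal (fun i => f (hB.eigenvalues i)) *
        ((star (hB.eigenvectorUnitary : Matrix m m ℂ) * (hB.eigenvectorUnitary : Matrix m m ℂ)) *
        diagonal (fun i => g (hB.eigenvalues i)))) * star (hB.eigenvectorUnitary : Matrix m m ℂ) := by
        simp only [Matrix.mul_assoc]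
    _ = _ := by rw [h1, one_mul, diagonal_mul_diagonal]

lemma Phi_conjT (f : ℝ → ℂ) : (Phi hB f)ᴴ = Phi hB (fun x => starRingEnd ℂ (f x)) := by
  unfold Phi
  rw [← Matrix.star_eq_conjTranspose, StarMul.star_mul, StarMul.star_mul, star_star,
    ← Matrix.mul_assoc]
  congr 1
  rw [Matrix.star_eq_conjTranspose, diagonal_conjTranspose]
  congr 1

lemma Phi_one : Phi hB (fun _ => 1) = 1 := by
  unfold Phi
  rw [diagonal_one, mul_one]
  exact Unitary.coe_mul_star_self _

lemma Phi_B : Phi hB (fun x => (x : ℂ)) = B := by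
  conv_rhs => rw [hB.spectral_theorem]
  rfl


lemma conj_pow (U D : Matrix m m ℂ) (hU : star U * U = 1) (hU' : U * star U = 1) (k : ℕ) :
    (U * D * star U) ^ k = U * D ^ k * star U := by
  induction k with
  | zero => simp [hU']
  | succ k ih =>
      rw [pow_succ, pow_succ, ih]
      calc U * D ^ k * star U * (U * D * star U)
          = U * D ^ k * ((star U * U) * (D * star U)) := by simp only [Matrix.mul_assoc]
        _ = U * (D ^ k * D) * star U := by rw [hU, one_mul]; simp only [Matrix.mul_assoc]

lemma aeval_conj (U D : Matrix m m ℂ) (hU : star U * U = 1) (hU' : U * star U = 1) (p : ℂ[X]) :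
    aeval (U * D * star U) p = U * aeval D p * star U := by
  refine Polynomial.induction_on' p ?_ ?_
  · intro a b ha hb
    simp only [map_add, ha, hb, Matrix.mul_add, Matrix.add_mul]
  · intro n a
    rw [aeval_monomial, aeval_monomial, conj_pow U D hU hU' n]
    simp only [Algebra.algebraMap_eq_smul_one, smul_mul_assoc, one_mul, Matrix.mul_smul,
      mul_smul_comm]

lemma aeval_diagonal (d : m → ℂ) (p : ℂ[X]) :
    aeval (diagonal d) p = diagonal (fun i => p.eval (d i)) := by
  refine Polynomial.induction_on' p ?_ ?_
  · intro a b ha hb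
    rw [map_add, ha, hb, diagonal_add]
    congr 1
    funext i
    simp [eval_add]
  · intro n a
    rw [aeval_monomial]
    simp only [eval_monomial]
    rw [diagonal_pow]
    ext i j
    rcases eq_or_ne i j with rfl | hij
    · simp [Matrix.mul_apply, diagonal, Algebra.algebraMap_eq_smul_one, Matrix.one_apply,
        Finset.sum_ite_eq, Pi.pow_apply]
    · simp [Matrix.diagonal_apply_ne _ hij, Matrix.mul_apply, diagonal,
        Algebra.algebraMap_eq_smul_one, Matrix.one_apply, hij, Pi.pow_apply]

lemma commute_aeval {K B : Matrix m m ℂ} (h : K * B = B * K) (p : ℂ[X]) :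
    K * aeval B p = aeval B p * K := by
  have hc : Commute K B := h
  refine Polynomial.induction_on' p ?_ ?_
  · intro a b ha hb
    simp only [map_add, Matrix.mul_add, Matrix.add_mul, ha, hb]
  · intro n a
    rw [aeval_monomial]
    simp only [Algebra.algebraMap_eq_smul_one, smul_mul_assoc, one_mul, mul_smul_comm]
    rw [(hc.pow_right n).eq]


lemma Phi_congr {f g : ℝ → ℂ} (h : ∀ x, f x = g x) : Phi hB f = Phi hB g := by
  rw [funext h]

lemma Phi_sub (f g : ℝ → ℂ) : Phi hB f - Phi hB g = Phi hB (fun x => f x - g x) := by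
  unfold Phi
  rw [← Matrix.sub_mul, ← Matrix.mul_sub]
  congr 2
  rw [diagonal_sub]

lemma Phi_zero : Phi hB (fun _ => 0) = 0 := by
  unfold Phi
  have : (diagonal (fun _ : m => (0 : ℂ))) = 0 := diagonal_zero
  rw [this, Matrix.mul_zero, Matrix.zero_mul]

section pinv

open ComplexOrder

variable {pp qq : Type*} [Fintype pp] [DecidableEq pp] [Fintype qq] [DecidableEq qq]
variable (M : Matrix pp qq ℂ)

lemma hGram : (Mᴴ * M).IsHermitian := (posSemidef_conjTranspose_mul_self M).1

/-- pseudoinverse of the Gram matrix -/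
def Bp : Matrix qq qq ℂ := Phi (hGram M) (fun x => ((x⁻¹ : ℝ) : ℂ))

/-- Moore-Penrose inverse -/
def mpinv : Matrix qq pp ℂ := Bp M * Mᴴ

lemma Bp_herm : (Bp M)ᴴ = Bp M := by
  rw [Bp, Phi_conjT]
  exact Phi_congr _ (fun x => Complex.conj_ofReal _)

lemma Phi_mul_B (f : ℝ → ℂ) : Phi hB f * B = Phi hB (fun x => f x * (x : ℂ)) := by
  rw [← Phi_mul hB f (fun x => (x : ℂ)), Phi_B]

lemma BpB : Bp M * (Mᴴ * M) = Phi (hGram M) (fun x => ((x⁻¹ * x : ℝ) : ℂ)) := by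
  rw [Bp, Phi_mul_B]
  exact Phi_congr _ (fun x => by push_cast; ring)

lemma mpinv_mul : mpinv M * M = Phi (hGram M) (fun x => ((x⁻¹ * x : ℝ) : ℂ)) := by
  rw [mpinv, Matrix.mul_assoc, BpB]

lemma mpinv_mul_herm : (mpinv M * M)ᴴ = mpinv M * M := by
  rw [mpinv_mul, Phi_conjT]
  exact Phi_congr _ (fun x => Complex.conj_ofReal _)

lemma mul_mpinv_mul : M * mpinv M * M = M := by
  have hMP : M * mpinv M * M = M * Phi (hGram M) (fun x => ((x⁻¹ * x : ℝ) : ℂ)) := by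
    rw [Matrix.mul_assoc, mpinv_mul]
  set P := Phi (hGram M) (fun x => ((x⁻¹ * x : ℝ) : ℂ)) with hP
  have hsub : P - 1 = Phi (hGram M) (fun x => ((x⁻¹ * x : ℝ) : ℂ) - 1) := by
    rw [hP, ← Phi_one (hGram M), Phi_sub]
  have hfun : (M * P - M)ᴴ * (M * P - M) = 0 := by
    have h1 : M * P - M = M * (P - 1) := by rw [Matrix.mul_sub, Matrix.mul_one]
    have hherm : (P - 1)ᴴ = P - 1 := by
      rw [hsub, Phi_conjT]
      exact Phi_congr _ (fun x => by simp [Complex.conj_ofReal])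
    rw [h1, conjTranspose_mul, hherm, Matrix.mul_assoc, ← Matrix.mul_assoc Mᴴ M (P - 1)]
    have hB0 : Mᴴ * M = Phi (hGram M) (fun x => (x : ℂ)) := (Phi_B (hGram M)).symm
    rw [hB0, hsub, Phi_mul, Phi_mul]
    have hz : Phi (hGram M)
        (fun x => (((x⁻¹ * x : ℝ) : ℂ) - 1) * ((x : ℂ) * (((x⁻¹ * x : ℝ) : ℂ) - 1)))
        = Phi (hGram M) (fun _ => (0 : ℂ)) := by
      refine Phi_congr _ (fun x => ?_)
      rcases eq_or_ne x 0 with rfl | hx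
      · simp
      · rw [inv_mul_cancel₀ hx]
        push_cast
        ring
    rw [hz, Phi_zero]
  have h0 := conjTranspose_mul_self_eq_zero.mp hfun
  rw [hMP, sub_eq_zero.mp h0]

lemma mpinv_mul_mpinv : mpinv M * M * mpinv M = mpinv M := by
  have h1 : mpinv M * M * mpinv M = (Bp M * (Mᴴ * M) * Bp M) * Mᴴ := by
    rw [mpinv]
    simp only [Matrix.mul_assoc]
  have h2 : Bp M * (Mᴴ * M) * Bp M = Bp M := by
    rw [BpB, Bp, Phi_mul]
    refine Phi_congr _ (fun x => ?_)
    rcases eq_or_ne x 0 with rfl | hx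
    · simp
    · rw [inv_mul_cancel₀ hx]
      simp
  rw [h1, h2, mpinv]

lemma mul_mpinv_herm : (M * mpinv M)ᴴ = M * mpinv M := by
  rw [mpinv, ← Matrix.mul_assoc, conjTranspose_mul, conjTranspose_mul,
    conjTranspose_conjTranspose, Bp_herm]
  simp only [Matrix.mul_assoc]

lemma Bp_commute {K : Matrix qq qq ℂ} (h : K * (Mᴴ * M) = (Mᴴ * M) * K) :
    K * Bp M = Bp M * K := by
  classical
  set lam := (hGram M).eigenvalues with hlam
  set s : Finset ℝ := Finset.image lam Finset.univ with hs
  set p : Polynomial ℝ := Lagrange.interpolate s id (fun x => x⁻¹) with hp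
  have hrep : Bp M = Polynomial.aeval (Mᴴ * M) (p.map (algebraMap ℝ ℂ)) := by
    have hU : star ((hGram M).eigenvectorUnitary : Matrix qq qq ℂ) *
        ((hGram M).eigenvectorUnitary : Matrix qq qq ℂ) = 1 := Unitary.coe_star_mul_self _
    have hU' : ((hGram M).eigenvectorUnitary : Matrix qq qq ℂ) *
        star ((hGram M).eigenvectorUnitary : Matrix qq qq ℂ) = 1 := Unitary.coe_mul_star_self _
    conv_rhs => rw [(hGram M).spectral_theorem]
    rw [Unitary.conjStarAlgAut_apply, aeval_conj _ _ hU hU', aeval_diagonal]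
    have hd : (fun i => Polynomial.eval (((RCLike.ofReal ∘ lam) i : ℂ)) (p.map (algebraMap ℝ ℂ)))
        = (fun i => (((lam i)⁻¹ : ℝ) : ℂ)) := by
      funext i
      have h1 : ((p.map (algebraMap ℝ ℂ)).eval (((RCLike.ofReal ∘ lam) i : ℂ)))
          = algebraMap ℝ ℂ (p.eval (lam i)) := by
        rw [eval_map]
        exact eval₂_at_apply (algebraMap ℝ ℂ) (lam i)
      have h2 : Polynomial.eval (lam i) p = (lam i)⁻¹ := by
        have h3 := Lagrange.eval_interpolate_at_node (s := s) (v := id)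
          (r := fun x => x⁻¹) (i := lam i) (Set.injOn_id _)
          (by rw [hs]; exact Finset.mem_image_of_mem lam (Finset.mem_univ i))
        simpa [hp] using h3
      rw [h1, h2]
      rfl
    rw [hd]
    rfl
  rw [hrep]
  exact commute_aeval h _

lemma mp_unique (X Y : Matrix qq pp ℂ)
    (h1 : M*X*M = M) (h2 : X*M*X = X) (h3 : (M*X)ᴴ = M*X) (h4 : (X*M)ᴴ = X*M)
    (g1 : M*Y*M = M) (g2 : Y*M*Y = Y) (g3 : (M*Y)ᴴ = M*Y) (g4 : (Y*M)ᴴ = Y*M) : X = Y := by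
  have hMX : M*X = M*Y := by
    calc M*X = (M*X)ᴴ := h3.symm
      _ = ((M*Y*M)*X)ᴴ := by rw [g1]
      _ = ((M*Y)*(M*X))ᴴ := by simp only [Matrix.mul_assoc]
      _ = (M*X)ᴴ * (M*Y)ᴴ := conjTranspose_mul _ _
      _ = (M*X)*(M*Y) := by rw [h3, g3]
      _ = (M*X*M)*Y := by simp only [Matrix.mul_assoc]
      _ = M*Y := by rw [h1]
  have hXM : X*M = Y*M := by
    calc X*M = (X*M)ᴴ := h4.symm
      _ = (X*(M*Y*M))ᴴ := by rw [g1]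
      _ = ((X*M)*(Y*M))ᴴ := by simp only [Matrix.mul_assoc]
      _ = (Y*M)ᴴ*(X*M)ᴴ := conjTranspose_mul _ _
      _ = (Y*M)*(X*M) := by rw [h4, g4]
      _ = Y*(M*X*M) := by simp only [Matrix.mul_assoc]
      _ = Y*M := by rw [h1]
  calc X = X*M*X := h2.symm
    _ = Y*M*X := by rw [hXM]
    _ = Y*(M*X) := by rw [Matrix.mul_assoc]
    _ = Y*(M*Y) := by rw [hMX]
    _ = Y*M*Y := by rw [Matrix.mul_assoc]
    _ = Y := g2

end pinv

end MPAux

namespace TAux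
open Tensor Matrix MPAux

variable {n1 n2 n3 : ℕ}

/-- periodic/reflected extension of the slices -/
def Aext (A : Tensor n1 n2 n3) (k : ℕ) : Matrix (Fin n1) (Fin n2) ℂ :=
  if h : k % (2*n3) < n3 then A ⟨k % (2*n3), h⟩
  else if h2 : 2*n3 - k % (2*n3) < n3 then A ⟨2*n3 - k % (2*n3), h2⟩ else 0

lemma Aext_lt (A : Tensor n1 n2 n3) {k : ℕ} (h : k < n3) : Aext A k = A ⟨k, h⟩ := by
  unfold Aext
  have hm : k % (2*n3) = k := Nat.mod_eq_of_lt (by omega)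
  simp only [hm]
  rw [dif_pos h]

lemma Aext_n3 (A : Tensor n1 n2 n3) (hn : 0 < n3) : Aext A n3 = 0 := by
  unfold Aext
  have hm : n3 % (2*n3) = n3 := Nat.mod_eq_of_lt (by omega)
  simp only [hm]
  rw [dif_neg (by omega), dif_neg (by omega)]

lemma Aext_refl (A : Tensor n1 n2 n3) {r : ℕ} (hn : 0 < n3) (h : r ≤ n3) :
    Aext A (n3 + r) = Aext A (n3 - r) := by
  rcases Nat.eq_zero_or_pos r with rfl | hr
  · rw [Nat.add_zero, Nat.sub_zero]
  rcases eq_or_lt_of_le h with heq | hrn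
  · have h1 : Aext A (n3 + r) = A ⟨0, hn⟩ := by
      unfold Aext
      have hm : (n3 + r) % (2*n3) = 0 := by
        rw [heq, show n3 + n3 = 2*n3 from by ring]
        exact Nat.mod_self _
      simp only [hm]
      rw [dif_pos hn]
    rw [h1, heq, Nat.sub_self, Aext_lt A hn]
  · have h1 : Aext A (n3 + r) = A ⟨2*n3 - (n3 + r), by omega⟩ := by
      unfold Aext
      have hm : (n3 + r) % (2*n3) = n3 + r := Nat.mod_eq_of_lt (by omega)
      simp only [hm]
      rw [dif_neg (by omega), dif_pos (by omega)]
    rw [h1, Aext_lt A (show n3 - r < n3 by omega)]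
    simp only [show 2*n3 - (n3 + r) = n3 - r from by omega]

lemma matT_apply (A : Tensor n1 n2 n3) (p : Fin n3 × Fin n1) (q : Fin n3 × Fin n2) :
    matT A p q = Aext A (p.1.1 - q.1.1 + (q.1.1 - p.1.1)) p.2 q.2
      + Aext A (p.1.1 + q.1.1 + 1) p.2 q.2 := by
  obtain ⟨⟨i, hi⟩, a⟩ := p
  obtain ⟨⟨j, hj⟩, b⟩ := q
  simp only [matT]
  congr 1
  · rw [Aext_lt A (show i - j + (j - i) < n3 by omega)]
  · split_ifs with h h2
    · rw [Aext_lt A (show i + j + 1 < n3 by omega)]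
    · have h1 : Aext A (i + j + 1) = A ⟨2*n3 - (i + j + 1), by omega⟩ := by
        unfold Aext
        have hm : (i + j + 1) % (2*n3) = i + j + 1 := Nat.mod_eq_of_lt (by omega)
        simp only [hm]
        rw [dif_neg (by omega), dif_pos (by omega)]
      rw [h1]
      simp only [show 2*n3 - (i + j + 1) = 2*n3 - (i + j) - 1 from by omega]
    · have hn : 0 < n3 := by omega
      have : i + j + 1 = n3 := by omega
      rw [this, Aext_n3 A hn]
      rfl

/-- The "free boundary Laplacian-like" block matrix commuting with every `matT`. -/
def Kmat (n m3 : ℕ) : Matrix (Fin m3 × Fin n) (Fin m3 × Fin n) ℂ := fun p q =>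
  if p.2 = q.2 then
    ((if p.1.1 + 1 = q.1.1 then 1 else 0) + (if q.1.1 + 1 = p.1.1 then 1 else 0) +
     (if p.1.1 = q.1.1 ∧ q.1.1 = 0 then 1 else 0) +
     (if p.1.1 = q.1.1 ∧ q.1.1 + 1 = m3 then 1 else 0))
  else 0

lemma sum_ite_fin (f : Fin n3 → ℂ) (k : ℕ) :
    (∑ t : Fin n3, if k = t.1 then f t else 0) = if h : k < n3 then f ⟨k, h⟩ else 0 := by
  split_ifs with h
  · rw [Finset.sum_eq_single (⟨k, h⟩ : Fin n3)]
    · rw [if_pos rfl]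
    · intro t _ ht
      exact if_neg (fun hc => ht (Fin.ext hc.symm))
    · intro hm
      exact absurd (Finset.mem_univ _) hm
  · exact Finset.sum_eq_zero fun t _ => if_neg (fun hc => h (by rw [hc]; exact t.isLt))


lemma Kmat_mul_apply {n : ℕ} {kk : Type*} [Fintype kk] (M : Matrix (Fin n3 × Fin n) kk ℂ)
    (i : Fin n3) (a : Fin n) (q : kk) :
    (Kmat n n3 * M) (i, a) q =
      (if h : i.1 + 1 < n3 then M (⟨i.1 + 1, h⟩, a) q else 0) +
      (if 0 < i.1 then M (⟨i.1 - 1, lt_of_le_of_lt (Nat.sub_le _ _) i.isLt⟩, a) q else 0) +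
      (if i.1 = 0 then M (i, a) q else 0) +
      (if i.1 + 1 = n3 then M (i, a) q else 0) := by
  rw [Matrix.mul_apply, Fintype.sum_prod_type]
  have hinner : ∀ t : Fin n3, (∑ b : Fin n, Kmat n n3 (i, a) (t, b) * M (t, b) q)
      = ((if i.1 + 1 = t.1 then (1:ℂ) else 0) + (if t.1 + 1 = i.1 then 1 else 0) +
         (if i.1 = t.1 ∧ t.1 = 0 then 1 else 0) + (if i.1 = t.1 ∧ t.1 + 1 = n3 then 1 else 0))
        * M (t, a) q := by
    intro t
    rw [Finset.sum_eq_single a]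
    · rw [show Kmat n n3 (i, a) (t, a)
        = ((if i.1 + 1 = t.1 then (1:ℂ) else 0) + (if t.1 + 1 = i.1 then 1 else 0) +
           (if i.1 = t.1 ∧ t.1 = 0 then 1 else 0) + (if i.1 = t.1 ∧ t.1 + 1 = n3 then 1 else 0))
        from if_pos rfl]
    · intro b _ hb
      rw [show Kmat n n3 (i, a) (t, b) = 0 from if_neg (fun hc => hb hc.symm), zero_mul]
    · intro hm
      exact absurd (Finset.mem_univ _) hm
  simp only [hinner, add_mul]
  rw [Finset.sum_add_distrib, Finset.sum_add_distrib, Finset.sum_add_distrib]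
  congr 1
  congr 1
  congr 1
  · simp only [ite_mul, one_mul, zero_mul]
    rw [sum_ite_fin (fun t => M (t, a) q) (i.1 + 1)]
  · simp only [ite_mul, one_mul, zero_mul]
    by_cases h0 : 0 < i.1
    · have hrw : ∀ t : Fin n3, (if t.1 + 1 = i.1 then M (t, a) q else 0)
          = (if i.1 - 1 = t.1 then M (t, a) q else 0) := fun t => if_congr (by omega) rfl rfl
      simp only [hrw]
      rw [sum_ite_fin (fun t => M (t, a) q) (i.1 - 1),
        dif_pos (lt_of_le_of_lt (Nat.sub_le _ _) i.isLt), if_pos h0]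
    · rw [if_neg h0]
      exact Finset.sum_eq_zero fun t _ => if_neg (by omega)
  · simp only [ite_mul, one_mul, zero_mul]
    by_cases h0 : i.1 = 0
    · have hrw : ∀ t : Fin n3, (if i.1 = t.1 ∧ t.1 = 0 then M (t, a) q else 0)
          = (if i.1 = t.1 then M (t, a) q else 0) := fun t => if_congr (by omega) rfl rfl
      simp only [hrw]
      rw [sum_ite_fin (fun t => M (t, a) q) i.1, dif_pos i.isLt, if_pos h0]
    · rw [if_neg h0]
      exact Finset.sum_eq_zero fun t _ => if_neg (by omega)
  · simp only [ite_mul, one_mul, zero_mul]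
    by_cases h0 : i.1 + 1 = n3
    · have hrw : ∀ t : Fin n3, (if i.1 = t.1 ∧ t.1 + 1 = n3 then M (t, a) q else 0)
          = (if i.1 = t.1 then M (t, a) q else 0) := fun t => if_congr (by omega) rfl rfl
      simp only [hrw]
      rw [sum_ite_fin (fun t => M (t, a) q) i.1, dif_pos i.isLt, if_pos h0]
    · rw [if_neg h0]
      exact Finset.sum_eq_zero fun t _ => if_neg (by omega)

lemma mul_Kmat_apply {n : ℕ} {kk : Type*} [Fintype kk] (M : Matrix kk (Fin n3 × Fin n) ℂ)
    (p : kk) (j : Fin n3) (b : Fin n) :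
    (M * Kmat n n3) p (j, b) =
      (if 0 < j.1 then M p (⟨j.1 - 1, lt_of_le_of_lt (Nat.sub_le _ _) j.isLt⟩, b) else 0) +
      (if h : j.1 + 1 < n3 then M p (⟨j.1 + 1, h⟩, b) else 0) +
      (if j.1 = 0 then M p (j, b) else 0) +
      (if j.1 + 1 = n3 then M p (j, b) else 0) := by
  rw [Matrix.mul_apply, Fintype.sum_prod_type]
  have hinner : ∀ t : Fin n3, (∑ c : Fin n, M p (t, c) * Kmat n n3 (t, c) (j, b))
      = ((if t.1 + 1 = j.1 then (1:ℂ) else 0) + (if j.1 + 1 = t.1 then 1 else 0) +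
         (if t.1 = j.1 ∧ j.1 = 0 then 1 else 0) + (if t.1 = j.1 ∧ j.1 + 1 = n3 then 1 else 0))
        * M p (t, b) := by
    intro t
    rw [Finset.sum_eq_single b]
    · rw [show Kmat n n3 (t, b) (j, b)
        = ((if t.1 + 1 = j.1 then (1:ℂ) else 0) + (if j.1 + 1 = t.1 then 1 else 0) +
           (if t.1 = j.1 ∧ j.1 = 0 then 1 else 0) + (if t.1 = j.1 ∧ j.1 + 1 = n3 then 1 else 0))
        from if_pos rfl, mul_comm]
    · intro c _ hc
      rw [show Kmat n n3 (t, c) (j, b) = 0 from if_neg (fun hx => hc hx), mul_zero]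
    · intro hm
      exact absurd (Finset.mem_univ _) hm
  simp only [hinner, add_mul]
  rw [Finset.sum_add_distrib, Finset.sum_add_distrib, Finset.sum_add_distrib]
  congr 1
  congr 1
  congr 1
  · simp only [ite_mul, one_mul, zero_mul]
    by_cases h0 : 0 < j.1
    · have hrw : ∀ t : Fin n3, (if t.1 + 1 = j.1 then M p (t, b) else 0)
          = (if j.1 - 1 = t.1 then M p (t, b) else 0) := fun t => if_congr (by omega) rfl rfl
      simp only [hrw]
      rw [sum_ite_fin (fun t => M p (t, b)) (j.1 - 1),
        dif_pos (lt_of_le_of_lt (Nat.sub_le _ _) j.isLt), if_pos h0]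
    · rw [if_neg h0]
      exact Finset.sum_eq_zero fun t _ => if_neg (by omega)
  · simp only [ite_mul, one_mul, zero_mul]
    rw [sum_ite_fin (fun t => M p (t, b)) (j.1 + 1)]
  · simp only [ite_mul, one_mul, zero_mul]
    by_cases h0 : j.1 = 0
    · have hrw : ∀ t : Fin n3, (if t.1 = j.1 ∧ j.1 = 0 then M p (t, b) else 0)
          = (if j.1 = t.1 then M p (t, b) else 0) := fun t => if_congr (by omega) rfl rfl
      simp only [hrw]
      rw [sum_ite_fin (fun t => M p (t, b)) j.1, dif_pos j.isLt, if_pos h0]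
    · rw [if_neg h0]
      exact Finset.sum_eq_zero fun t _ => if_neg (by omega)
  · simp only [ite_mul, one_mul, zero_mul]
    by_cases h0 : j.1 + 1 = n3
    · have hrw : ∀ t : Fin n3, (if t.1 = j.1 ∧ j.1 + 1 = n3 then M p (t, b) else 0)
          = (if j.1 = t.1 then M p (t, b) else 0) := fun t => if_congr (by omega) rfl rfl
      simp only [hrw]
      rw [sum_ite_fin (fun t => M p (t, b)) j.1, dif_pos j.isLt, if_pos h0]
    · rw [if_neg h0]
      exact Finset.sum_eq_zero fun t _ => if_neg (by omega)


set_option maxHeartbeats 1600000 in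
lemma KcommT (A : Tensor n1 n2 n3) : Kmat n1 n3 * matT A = matT A * Kmat n2 n3 := by
  ext ⟨i, a⟩ ⟨j, b⟩
  rw [Kmat_mul_apply, mul_Kmat_apply]
  simp only [matT_apply, dite_eq_ite]
  have hn : 0 < n3 := i.pos
  have hi : (i:ℕ) < n3 := i.isLt
  have hj : (j:ℕ) < n3 := j.isLt
  have e1 : ((if (i:ℕ) + 1 < n3 then
        Aext A ((i:ℕ) + 1 - (j:ℕ) + ((j:ℕ) - ((i:ℕ) + 1))) a b
          + Aext A ((i:ℕ) + 1 + (j:ℕ) + 1) a b else 0)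
      + (if (i:ℕ) + 1 = n3 then
        Aext A ((i:ℕ) - (j:ℕ) + ((j:ℕ) - (i:ℕ))) a b
          + Aext A ((i:ℕ) + (j:ℕ) + 1) a b else 0))
      = Aext A ((i:ℕ) + 1 - (j:ℕ) + ((j:ℕ) - ((i:ℕ) + 1))) a b
        + Aext A ((i:ℕ) + (j:ℕ) + 2) a b := by
    by_cases h : (i:ℕ) + 1 < n3
    · rw [if_pos h, if_neg (by omega), add_zero,
        show (i:ℕ) + 1 + (j:ℕ) + 1 = (i:ℕ) + (j:ℕ) + 2 from by omega]
    · rw [if_neg h, if_pos (by omega), zero_add,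
        show (i:ℕ) - (j:ℕ) + ((j:ℕ) - (i:ℕ)) = n3 - ((j:ℕ) + 1) from by omega,
        show (i:ℕ) + (j:ℕ) + 1 = n3 + (j:ℕ) from by omega,
        show (i:ℕ) + 1 - (j:ℕ) + ((j:ℕ) - ((i:ℕ) + 1)) = n3 - (j:ℕ) from by omega,
        show (i:ℕ) + (j:ℕ) + 2 = n3 + ((j:ℕ) + 1) from by omega,
        Aext_refl A hn (show (j:ℕ) ≤ n3 from by omega),
        Aext_refl A hn (show (j:ℕ) + 1 ≤ n3 from by omega)]
      ring
  have e2 : ((if 0 < (i:ℕ) then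
        Aext A ((i:ℕ) - 1 - (j:ℕ) + ((j:ℕ) - ((i:ℕ) - 1))) a b
          + Aext A ((i:ℕ) - 1 + (j:ℕ) + 1) a b else 0)
      + (if (i:ℕ) = 0 then
        Aext A ((i:ℕ) - (j:ℕ) + ((j:ℕ) - (i:ℕ))) a b
          + Aext A ((i:ℕ) + (j:ℕ) + 1) a b else 0))
      = Aext A ((i:ℕ) - ((j:ℕ) + 1) + ((j:ℕ) + 1 - (i:ℕ))) a b
        + Aext A ((i:ℕ) + (j:ℕ)) a b := by
    by_cases h : 0 < (i:ℕ)
    · rw [if_pos h, if_neg (by omega), add_zero,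
        show (i:ℕ) - 1 - (j:ℕ) + ((j:ℕ) - ((i:ℕ) - 1))
          = (i:ℕ) - ((j:ℕ) + 1) + ((j:ℕ) + 1 - (i:ℕ)) from by omega,
        show (i:ℕ) - 1 + (j:ℕ) + 1 = (i:ℕ) + (j:ℕ) from by omega]
    · rw [if_neg h, if_pos (by omega), zero_add,
        show (i:ℕ) - (j:ℕ) + ((j:ℕ) - (i:ℕ)) = (j:ℕ) from by omega,
        show (i:ℕ) + (j:ℕ) + 1 = (j:ℕ) + 1 from by omega,
        show (i:ℕ) - ((j:ℕ) + 1) + ((j:ℕ) + 1 - (i:ℕ)) = (j:ℕ) + 1 from by omega,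
        show (i:ℕ) + (j:ℕ) = (j:ℕ) from by omega]
      ring
  have f1 : ((if (j:ℕ) + 1 < n3 then
        Aext A ((i:ℕ) - ((j:ℕ) + 1) + ((j:ℕ) + 1 - (i:ℕ))) a b
          + Aext A ((i:ℕ) + ((j:ℕ) + 1) + 1) a b else 0)
      + (if (j:ℕ) + 1 = n3 then
        Aext A ((i:ℕ) - (j:ℕ) + ((j:ℕ) - (i:ℕ))) a b
          + Aext A ((i:ℕ) + (j:ℕ) + 1) a b else 0))
      = Aext A ((i:ℕ) - ((j:ℕ) + 1) + ((j:ℕ) + 1 - (i:ℕ))) a b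
        + Aext A ((i:ℕ) + (j:ℕ) + 2) a b := by
    by_cases h : (j:ℕ) + 1 < n3
    · rw [if_pos h, if_neg (by omega), add_zero,
        show (i:ℕ) + ((j:ℕ) + 1) + 1 = (i:ℕ) + (j:ℕ) + 2 from by omega]
    · rw [if_neg h, if_pos (by omega), zero_add,
        show (i:ℕ) - (j:ℕ) + ((j:ℕ) - (i:ℕ)) = n3 - ((i:ℕ) + 1) from by omega,
        show (i:ℕ) + (j:ℕ) + 1 = n3 + (i:ℕ) from by omega,
        show (i:ℕ) - ((j:ℕ) + 1) + ((j:ℕ) + 1 - (i:ℕ)) = n3 - (i:ℕ) from by omega,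
        show (i:ℕ) + (j:ℕ) + 2 = n3 + ((i:ℕ) + 1) from by omega,
        Aext_refl A hn (show (i:ℕ) ≤ n3 from by omega),
        Aext_refl A hn (show (i:ℕ) + 1 ≤ n3 from by omega)]
      ring
  have f2 : ((if 0 < (j:ℕ) then
        Aext A ((i:ℕ) - ((j:ℕ) - 1) + ((j:ℕ) - 1 - (i:ℕ))) a b
          + Aext A ((i:ℕ) + ((j:ℕ) - 1) + 1) a b else 0)
      + (if (j:ℕ) = 0 then
        Aext A ((i:ℕ) - (j:ℕ) + ((j:ℕ) - (i:ℕ))) a b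
          + Aext A ((i:ℕ) + (j:ℕ) + 1) a b else 0))
      = Aext A ((i:ℕ) + 1 - (j:ℕ) + ((j:ℕ) - ((i:ℕ) + 1))) a b
        + Aext A ((i:ℕ) + (j:ℕ)) a b := by
    by_cases h : 0 < (j:ℕ)
    · rw [if_pos h, if_neg (by omega), add_zero,
        show (i:ℕ) - ((j:ℕ) - 1) + ((j:ℕ) - 1 - (i:ℕ))
          = (i:ℕ) + 1 - (j:ℕ) + ((j:ℕ) - ((i:ℕ) + 1)) from by omega,
        show (i:ℕ) + ((j:ℕ) - 1) + 1 = (i:ℕ) + (j:ℕ) from by omega]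
    · rw [if_neg h, if_pos (by omega), zero_add,
        show (i:ℕ) - (j:ℕ) + ((j:ℕ) - (i:ℕ)) = (i:ℕ) from by omega,
        show (i:ℕ) + (j:ℕ) + 1 = (i:ℕ) + 1 from by omega,
        show (i:ℕ) + 1 - (j:ℕ) + ((j:ℕ) - ((i:ℕ) + 1)) = (i:ℕ) + 1 from by omega,
        show (i:ℕ) + (j:ℕ) = (i:ℕ) from by omega]
      ring
  linear_combination e1 + e2 - f1 - f2


lemma alt_sum (f : ℕ → ℂ) (i : ℕ) : ∀ n, i ≤ n →
    (∑ t ∈ Finset.Ico i n, (-1:ℂ)^(t-i) * (f t + f (t+1))) = f i - (-1:ℂ)^(n-i) * f n := by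
  intro n
  induction n with
  | zero => intro h; interval_cases i; simp
  | succ n ih =>
      intro h
      rcases eq_or_lt_of_le h with heq | hlt
      · rw [← heq]
        simp
      · have hin : i ≤ n := by omega
        rw [Finset.sum_Ico_succ_top hin, ih hin,
          show n + 1 - i = (n - i) + 1 from by omega, pow_succ]
        ring

lemma fin_sum_to_Ico (g : ℕ → ℂ) (i : ℕ) :
    (∑ t : Fin n3, if i ≤ t.1 then g t.1 else 0) = ∑ t ∈ Finset.Ico i n3, g t := by
  rw [Fin.sum_univ_eq_sum_range (fun k => if i ≤ k then g k else 0) n3, ← Finset.sum_filter]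
  apply Finset.sum_congr _ (fun _ _ => rfl)
  ext k
  simp only [Finset.mem_filter, Finset.mem_range, Finset.mem_Ico]
  omega

lemma tenT_matT (A : Tensor n1 n2 n3) : tenT (matT A) = A := by
  funext i
  ext a b
  show (∑ t : Fin n3, if i.1 ≤ t.1 then
      (-1:ℂ)^(t.1 - i.1) * matT A (t, a) (⟨0, i.pos⟩, b) else 0) = A i a b
  have hcol : ∀ t : Fin n3, matT A (t, a) (⟨0, i.pos⟩, b)
      = Aext A t.1 a b + Aext A (t.1 + 1) a b := by
    intro t
    rw [matT_apply]
    dsimp only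
    rw [show (t.1 : ℕ) - 0 + (0 - t.1) = t.1 from by omega,
      show (t.1 : ℕ) + 0 + 1 = t.1 + 1 from by omega]
  simp only [hcol]
  rw [fin_sum_to_Ico (fun k => (-1:ℂ)^(k - i.1) * (Aext A k a b + Aext A (k+1) a b)) i.1,
    alt_sum (fun k => Aext A k a b) i.1 n3 (le_of_lt i.isLt), Aext_n3 A i.pos,
    Aext_lt A i.isLt]
  simp

lemma split_bot (g : Fin n3 → ℂ) (u : Fin n3) :
    (∑ t : Fin n3, if u.1 ≤ t.1 then g t else 0)
      = g u + ∑ t : Fin n3, if u.1 + 1 ≤ t.1 then g t else 0 := by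
  have hsplit : ∀ t : Fin n3, (if u.1 ≤ t.1 then g t else 0)
      = (if u.1 = t.1 then g t else 0) + (if u.1 + 1 ≤ t.1 then g t else 0) := by
    intro t
    by_cases h2 : u.1 + 1 ≤ t.1
    · rw [if_pos (by omega), if_neg (by omega), if_pos h2, zero_add]
    · by_cases h1 : u.1 = t.1
      · rw [if_pos (by omega), if_pos h1, if_neg h2, add_zero]
      · rw [if_neg (by omega), if_neg h1, if_neg h2, add_zero]
  simp only [hsplit]
  rw [Finset.sum_add_distrib]
  congr 1
  rw [sum_ite_fin g u.1, dif_pos u.isLt]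

lemma firstcol_split (M : Matrix (Fin n3 × Fin n1) (Fin n3 × Fin n2) ℂ)
    (a : Fin n1) (b : Fin n2) (u : Fin n3) :
    (tenT M) u a b + (if h : u.1 + 1 < n3 then (tenT M) ⟨u.1 + 1, h⟩ a b else 0)
      = M (u, a) (⟨0, u.pos⟩, b) := by
  have hval : ∀ (v : Fin n3), (tenT M) v a b
      = ∑ t : Fin n3, if v.1 ≤ t.1 then (-1:ℂ)^(t.1 - v.1) * M (t, a) (⟨0, u.pos⟩, b) else 0 := by
    intro v
    rfl
  by_cases h : u.1 + 1 < n3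
  · rw [dif_pos h, hval u, hval ⟨u.1 + 1, h⟩]
    dsimp only
    rw [split_bot (fun t => (-1:ℂ)^(t.1 - u.1) * M (t, a) (⟨0, u.pos⟩, b)) u]
    rw [Nat.sub_self, pow_zero, one_mul]
    have hneg : ∀ t : Fin n3,
        (if u.1 + 1 ≤ t.1 then (-1:ℂ)^(t.1 - u.1) * M (t, a) (⟨0, u.pos⟩, b) else 0)
        = -(if u.1 + 1 ≤ t.1 then (-1:ℂ)^(t.1 - (u.1 + 1)) * M (t, a) (⟨0, u.pos⟩, b) else 0) := by
      intro t
      by_cases h2 : u.1 + 1 ≤ t.1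
      · rw [if_pos h2, if_pos h2, show t.1 - u.1 = (t.1 - (u.1 + 1)) + 1 from by omega, pow_succ]
        ring
      · rw [if_neg h2, if_neg h2, neg_zero]
    simp only [hneg]
    rw [Finset.sum_neg_distrib]
    ring
  · rw [dif_neg h, add_zero, hval u]
    have hiff : ∀ t : Fin n3, (if u.1 ≤ t.1 then (-1:ℂ)^(t.1 - u.1) * M (t, a) (⟨0, u.pos⟩, b) else 0)
        = (if u.1 = t.1 then (-1:ℂ)^(t.1 - u.1) * M (t, a) (⟨0, u.pos⟩, b) else 0) := by
      intro t
      exact if_congr (by have := t.isLt; have := u.isLt; omega) rfl rfl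
    simp only [hiff]
    rw [sum_ite_fin (fun t => (-1:ℂ)^(t.1 - u.1) * M (t, a) (⟨0, u.pos⟩, b)) u.1, dif_pos u.isLt]
    simp


set_option maxHeartbeats 1600000 in
lemma col_induction {M N : Matrix (Fin n3 × Fin n1) (Fin n3 × Fin n2) ℂ} (hn : 0 < n3)
    (hM : Kmat n1 n3 * M = M * Kmat n2 n3) (hN : Kmat n1 n3 * N = N * Kmat n2 n3)
    (h0 : ∀ (p : Fin n3 × Fin n1) (b : Fin n2), M p (⟨0, hn⟩, b) = N p (⟨0, hn⟩, b)) :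
    M = N := by
  have key : ∀ j : ℕ, ∀ (hj : j < n3), ∀ (p : Fin n3 × Fin n1) (b : Fin n2),
      M p (⟨j, hj⟩, b) = N p (⟨j, hj⟩, b) := by
    intro j
    induction j using Nat.strong_induction_on with
    | _ j ih =>
      rcases j with _ | j'
      · intro hj p b
        exact h0 p b
      · intro hj p b
        obtain ⟨pi, pa⟩ := p
        have hj' : j' < n3 := by omega
        have eM : (Kmat n1 n3 * M) (pi, pa) (⟨j', hj'⟩, b)
            = (M * Kmat n2 n3) (pi, pa) (⟨j', hj'⟩, b) := by rw [hM]
        have eN : (Kmat n1 n3 * N) (pi, pa) (⟨j', hj'⟩, b)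
            = (N * Kmat n2 n3) (pi, pa) (⟨j', hj'⟩, b) := by rw [hN]
        rw [Kmat_mul_apply, mul_Kmat_apply] at eM eN
        dsimp only at eM eN
        rw [dif_pos hj, if_neg (show ¬ (j' + 1 = n3) from by omega)] at eM eN
        have ihj : ∀ (p : Fin n3 × Fin n1) (b : Fin n2),
            M p (⟨j', hj'⟩, b) = N p (⟨j', hj'⟩, b) := ih j' (by omega) hj'
        have ihj1 : ∀ (p : Fin n3 × Fin n1) (b : Fin n2),
            M p (⟨j' - 1, lt_of_le_of_lt (Nat.sub_le _ _) hj'⟩, b)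
              = N p (⟨j' - 1, lt_of_le_of_lt (Nat.sub_le _ _) hj'⟩, b) :=
          ih (j' - 1) (by omega) (lt_of_le_of_lt (Nat.sub_le _ _) hj')
        simp only [ihj, ihj1] at eM
        linear_combination eN - eM
  ext ⟨pi, pa⟩ ⟨qj, b⟩
  have := key qj.1 qj.isLt (pi, pa) b
  simpa using this


lemma matT_tenT {M : Matrix (Fin n3 × Fin n1) (Fin n3 × Fin n2) ℂ} (hn : 0 < n3)
    (hM : Kmat n1 n3 * M = M * Kmat n2 n3) : matT (tenT M) = M := by
  apply col_induction hn (KcommT (tenT M)) hM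
  intro p b
  obtain ⟨t, a⟩ := p
  rw [matT_apply]
  dsimp only
  rw [show (t.1 : ℕ) - 0 + (0 - t.1) = t.1 from by omega,
    show (t.1 : ℕ) + 0 + 1 = t.1 + 1 from by omega]
  have h1 : Aext (tenT M) t.1 a b = (tenT M) t a b := by
    rw [Aext_lt (tenT M) t.isLt]
  have h2 : Aext (tenT M) (t.1 + 1) a b
      = (if h : t.1 + 1 < n3 then (tenT M) ⟨t.1 + 1, h⟩ a b else 0) := by
    by_cases h : t.1 + 1 < n3
    · rw [dif_pos h, Aext_lt (tenT M) h]
    · rw [dif_neg h, show t.1 + 1 = n3 from by omega, Aext_n3 (tenT M) hn]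
      rfl
  rw [h1, h2, firstcol_split M a b t]

lemma matT_inj : Function.Injective (matT : Tensor n1 n2 n3 → _) := by
  intro A B h
  rw [← tenT_matT A, ← tenT_matT B, h]

lemma matT_cmul {l : ℕ} (hn : 0 < n3) (A : Tensor n1 n2 n3) (B : Tensor n2 l n3) :
    matT (cmul A B) = matT A * matT B := by
  apply matT_tenT hn
  calc Kmat n1 n3 * (matT A * matT B) = (Kmat n1 n3 * matT A) * matT B := by
        rw [Matrix.mul_assoc]
    _ = (matT A * Kmat n2 n3) * matT B := by rw [KcommT A]
    _ = matT A * (Kmat n2 n3 * matT B) := by rw [Matrix.mul_assoc]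
    _ = matT A * (matT B * Kmat l n3) := by rw [KcommT B]
    _ = matT A * matT B * Kmat l n3 := by rw [Matrix.mul_assoc]

lemma Aext_conjT (A : Tensor n1 n2 n3) (k : ℕ) (a : Fin n1) (b : Fin n2) :
    Aext (conjT A) k b a = starRingEnd ℂ (Aext A k a b) := by
  unfold Aext
  split_ifs with h1 h2
  · rfl
  · rfl
  · simp

lemma matT_conjT (A : Tensor n1 n2 n3) : matT (conjT A) = (matT A)ᴴ := by
  ext ⟨i, b⟩ ⟨j, a⟩
  rw [Matrix.conjTranspose_apply, matT_apply, matT_apply]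
  dsimp only
  rw [Aext_conjT, Aext_conjT,
    show (j:ℕ) - (i:ℕ) + ((i:ℕ) - (j:ℕ)) = (i:ℕ) - (j:ℕ) + ((j:ℕ) - (i:ℕ)) from by omega,
    show (j:ℕ) + (i:ℕ) + 1 = (i:ℕ) + (j:ℕ) + 1 from by omega, star_add]
  rfl

end TAux

theorem stmt1 {n1 n2 n3 : ℕ} (A : Tensor n1 n2 n3) :
    ∃! X : Tensor n2 n1 n3, IsMP A X := by
  rcases Nat.eq_zero_or_pos n3 with h0 | hn
  · subst h0
    have hall : ∀ {a b : ℕ} (T S : Tensor a b 0), T = S :=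
      fun T S => funext fun i => i.elim0
    exact ⟨fun i => i.elim0, ⟨hall _ _, hall _ _, hall _ _, hall _ _⟩, fun Y _ => hall _ _⟩
  · have hMH : TAux.Kmat n2 n3 * (matT A).conjTranspose = (matT A).conjTranspose * TAux.Kmat n1 n3 := by
      rw [← TAux.matT_conjT]
      exact TAux.KcommT (conjT A)
    have hKM := TAux.KcommT A
    have hB : TAux.Kmat n2 n3 * ((matT A).conjTranspose * matT A)
        = ((matT A).conjTranspose * matT A) * TAux.Kmat n2 n3 := by
      calc TAux.Kmat n2 n3 * ((matT A).conjTranspose * matT A)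
          = (TAux.Kmat n2 n3 * (matT A).conjTranspose) * matT A := by rw [Matrix.mul_assoc]
        _ = (matT A).conjTranspose * (TAux.Kmat n1 n3 * matT A) := by rw [hMH, Matrix.mul_assoc]
        _ = (matT A).conjTranspose * (matT A * TAux.Kmat n2 n3) := by rw [hKM]
        _ = ((matT A).conjTranspose * matT A) * TAux.Kmat n2 n3 := by rw [Matrix.mul_assoc]
    have hBp := MPAux.Bp_commute (matT A) hB
    have hP : TAux.Kmat n2 n3 * MPAux.mpinv (matT A)
        = MPAux.mpinv (matT A) * TAux.Kmat n1 n3 := by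
      unfold MPAux.mpinv
      calc TAux.Kmat n2 n3 * (MPAux.Bp (matT A) * (matT A).conjTranspose)
          = (TAux.Kmat n2 n3 * MPAux.Bp (matT A)) * (matT A).conjTranspose := by rw [Matrix.mul_assoc]
        _ = MPAux.Bp (matT A) * (TAux.Kmat n2 n3 * (matT A).conjTranspose) := by
            rw [hBp, Matrix.mul_assoc]
        _ = (MPAux.Bp (matT A) * (matT A).conjTranspose) * TAux.Kmat n1 n3 := by
            rw [hMH, ← Matrix.mul_assoc]
    have hX : matT (tenT (MPAux.mpinv (matT A))) = MPAux.mpinv (matT A) :=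
      TAux.matT_tenT hn hP
    set X := tenT (MPAux.mpinv (matT A)) with hXdef
    have e1 : cmul (cmul A X) A = A := by
      apply TAux.matT_inj
      rw [TAux.matT_cmul hn, TAux.matT_cmul hn, hX]
      exact MPAux.mul_mpinv_mul (matT A)
    have e2 : cmul (cmul X A) X = X := by
      apply TAux.matT_inj
      rw [TAux.matT_cmul hn, TAux.matT_cmul hn, hX]
      exact MPAux.mpinv_mul_mpinv (matT A)
    have e3 : conjT (cmul A X) = cmul A X := by
      apply TAux.matT_inj
      rw [TAux.matT_conjT, TAux.matT_cmul hn, hX]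
      exact MPAux.mul_mpinv_herm (matT A)
    have e4 : conjT (cmul X A) = cmul X A := by
      apply TAux.matT_inj
      rw [TAux.matT_conjT, TAux.matT_cmul hn, hX]
      exact MPAux.mpinv_mul_herm (matT A)
    refine ⟨X, ⟨e1, e2, e3, e4⟩, ?_⟩
    intro Y hY
    obtain ⟨f1, f2, f3, f4⟩ := hY
    apply TAux.matT_inj
    rw [hX]
    have g1 : matT A * matT Y * matT A = matT A := by
      have := congrArg matT f1
      rwa [TAux.matT_cmul hn, TAux.matT_cmul hn] at this
    have g2 : matT Y * matT A * matT Y = matT Y := by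
      have := congrArg matT f2
      rwa [TAux.matT_cmul hn, TAux.matT_cmul hn] at this
    have g3 : (matT A * matT Y).conjTranspose = matT A * matT Y := by
      have := congrArg matT f3
      rwa [TAux.matT_conjT, TAux.matT_cmul hn] at this
    have g4 : (matT Y * matT A).conjTranspose = matT Y * matT A := by
      have := congrArg matT f4
      rwa [TAux.matT_conjT, TAux.matT_cmul hn] at this
    exact MPAux.mp_unique (matT A) (matT Y) (MPAux.mpinv (matT A)) g1 g2 g3 g4
      (MPAux.mul_mpinv_mul (matT A)) (MPAux.mpinv_mul_mpinv (matT A))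
      (MPAux.mul_mpinv_herm (matT A)) (MPAux.mpinv_mul_herm (matT A))
end
end

section
/- Let A ∈ ℂ^{n1×n2×n3} and suppose A = U *_c S *_c V^H, where U ∈ ℂ^{n1×n1×n3} and V ∈ ℂ^{n2×n2×n3} are unitary tensors and S ∈ ℂ^{n1×n2×n3} is an F-diagonal tensor (a C-SVD of A). Then the Moore-Penrose inverse of A is A^† = V *_c S^† *_c U^H. -/
noncomputable section

open Tensor
namespace CProof
open Tensor

/-- Tridiagonal matrix with corner entries, tensored with identity. -/
def Tb (n3 n : ℕ) : Matrix (Fin n3 × Fin n) (Fin n3 × Fin n) ℂ := fun p q =>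
  if (p.1.1 + 1 = q.1.1 ∨ q.1.1 + 1 = p.1.1 ∨ (p.1.1 = q.1.1 ∧ (p.1.1 = 0 ∨ p.1.1 + 1 = n3)))
      ∧ p.2 = q.2 then 1 else 0

/-- scalar version of the `matT` entry pattern -/
def smv (N : ℕ) (v : ℕ → ℂ) (i j : ℕ) : ℂ :=
  v (i - j + (j - i)) +
    (if i + j + 2 ≤ N then v (i + j + 1)
     else if N ≤ i + j then v (2 * N - (i + j) - 1) else 0)

/-- reflected extension -/
def uext (N : ℕ) (v : ℕ → ℂ) (t : ℕ) : ℂ :=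
  if t < N then v t else if N < t ∧ t ≤ 2 * N then v (2 * N - t) else 0

lemma u_sym {N : ℕ} (v : ℕ → ℂ) {a b : ℕ} (hab : a + b = 2 * N) :
    uext N v a = uext N v b := by
  unfold uext
  split_ifs <;> first | rfl | (congr 1; omega) | (exfalso; omega)

lemma smv_eq_u {N : ℕ} (v : ℕ → ℂ) {i j : ℕ} (hi : i < N) (hj : j < N) :
    smv N v i j = uext N v (i - j + (j - i)) + uext N v (i + j + 1) := by
  unfold smv uext
  split_ifs <;> first | rfl | (congr 1 <;> first | rfl | (congr 1; omega) | omega) | (exfalso; omega)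

end CProof
namespace CProof

lemma key (N : ℕ) (v : ℕ → ℂ) {I J : ℕ} (hI : I < N) (hJ : J < N) :
    ((if I + 1 < N then smv N v (I + 1) J else 0)
      + (if 0 < I then smv N v (I - 1) J else 0)
      + (if I = 0 ∨ I + 1 = N then smv N v I J else 0))
    = ((if J + 1 < N then smv N v I (J + 1) else 0)
      + (if 0 < J then smv N v I (J - 1) else 0)
      + (if J = 0 ∨ J + 1 = N then smv N v I J else 0)) := by
  by_cases hI0 : I = 0 <;> by_cases hI1 : I + 1 = N <;>
    by_cases hJ0 : J = 0 <;> by_cases hJ1 : J + 1 = N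
  -- TTTT : N = 1, I = J = 0
  · rw [if_neg (by omega), if_neg (by omega), if_pos (by omega),
        if_neg (by omega), if_neg (by omega), if_pos (by omega)]
  · exfalso; omega
  · exfalso; omega
  · exfalso; omega
  -- TFTT : impossible
  · exfalso; omega
  -- TFTF : I = 0, J = 0, N ≥ 2
  · rw [if_pos (by omega), if_neg (by omega), if_pos (by omega),
        if_pos (by omega), if_neg (by omega), if_pos (by omega)]
    rw [smv_eq_u (i := I+1) (j := J) v (by omega) hJ, smv_eq_u (i := I) (j := J+1) v hI (by omega)]
    rw [show I + 1 - J + (J - (I + 1)) = I - (J + 1) + (J + 1 - I) from by omega,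
        show I + 1 + J + 1 = I + (J + 1) + 1 from by omega]
  -- TFFT : I = 0, J = N - 1 ≥ 1
  · rw [if_pos (by omega), if_neg (by omega), if_pos (by omega),
        if_neg (by omega), if_pos (by omega), if_pos (by omega)]
    rw [smv_eq_u (i := I+1) (j := J) v (by omega) hJ, smv_eq_u (i := I) (j := J-1) v hI (by omega)]
    rw [show I + 1 - J + (J - (I + 1)) = I - (J - 1) + (J - 1 - I) from by omega]
    rw [u_sym v (show (I + 1 + J + 1) + (I + (J - 1) + 1) = 2 * N from by omega)]
    ring
  -- TFFF : I = 0, J mid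
  · rw [if_pos (by omega), if_neg (by omega), if_pos (by omega),
        if_pos (by omega), if_pos (by omega), if_neg (by omega)]
    rw [smv_eq_u (i := I+1) (j := J) v (by omega) hJ, smv_eq_u (i := I) (j := J) v hI hJ,
        smv_eq_u (i := I) (j := J+1) v hI (by omega), smv_eq_u (i := I) (j := J-1) v hI (by omega)]
    rw [show I + 1 - J + (J - (I + 1)) = I - (J - 1) + (J - 1 - I) from by omega,
        show I + 1 + J + 1 = I + (J + 1) + 1 from by omega,
        show I - J + (J - I) = I + (J - 1) + 1 from by omega,
        show I + J + 1 = I - (J + 1) + (J + 1 - I) from by omega]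
    ring
  -- FTTT : impossible
  · exfalso; omega
  -- FTTF : I = N - 1 ≥ 1, J = 0
  · rw [if_neg (by omega), if_pos (by omega), if_pos (by omega),
        if_pos (by omega), if_neg (by omega), if_pos (by omega)]
    rw [smv_eq_u (i := I-1) (j := J) v (by omega) hJ, smv_eq_u (i := I) (j := J+1) v hI (by omega)]
    rw [show I - 1 - J + (J - (I - 1)) = I - (J + 1) + (J + 1 - I) from by omega]
    rw [u_sym v (show (I + (J + 1) + 1) + (I - 1 + J + 1) = 2 * N from by omega)]
    ring
  -- FTFT : I = N - 1 = J, N ≥ 2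
  · rw [if_neg (by omega), if_pos (by omega), if_pos (by omega),
        if_neg (by omega), if_pos (by omega), if_pos (by omega)]
    rw [smv_eq_u (i := I-1) (j := J) v (by omega) hJ, smv_eq_u (i := I) (j := J-1) v hI (by omega)]
    rw [show I - 1 - J + (J - (I - 1)) = I - (J - 1) + (J - 1 - I) from by omega,
        show I - 1 + J + 1 = I + (J - 1) + 1 from by omega]
  -- FTFF : I = N - 1, J mid
  · rw [if_neg (by omega), if_pos (by omega), if_pos (by omega),
        if_pos (by omega), if_pos (by omega), if_neg (by omega)]
    rw [smv_eq_u (i := I-1) (j := J) v (by omega) hJ, smv_eq_u (i := I) (j := J) v hI hJ,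
        smv_eq_u (i := I) (j := J+1) v hI (by omega), smv_eq_u (i := I) (j := J-1) v hI (by omega)]
    rw [show I - 1 - J + (J - (I - 1)) = I - (J + 1) + (J + 1 - I) from by omega,
        show I - 1 + J + 1 = I + (J - 1) + 1 from by omega]
    rw [u_sym v (show (I - J + (J - I)) + (I + (J + 1) + 1) = 2 * N from by omega),
        u_sym v (show (I + J + 1) + (I - (J - 1) + (J - 1 - I)) = 2 * N from by omega)]
    ring
  -- FFTT : impossible
  · exfalso; omega
  -- FFTF : I mid, J = 0
  · rw [if_pos (by omega), if_pos (by omega), if_neg (by omega),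
        if_pos (by omega), if_neg (by omega), if_pos (by omega)]
    rw [smv_eq_u (i := I+1) (j := J) v (by omega) hJ, smv_eq_u (i := I-1) (j := J) v (by omega) hJ,
        smv_eq_u (i := I) (j := J+1) v hI (by omega), smv_eq_u (i := I) (j := J) v hI hJ]
    rw [show I + 1 - J + (J - (I + 1)) = I + J + 1 from by omega,
        show I + 1 + J + 1 = I + (J + 1) + 1 from by omega,
        show I - 1 - J + (J - (I - 1)) = I - (J + 1) + (J + 1 - I) from by omega,
        show I - 1 + J + 1 = I - J + (J - I) from by omega]
    ring
  -- FFFT : I mid, J = N - 1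
  · rw [if_pos (by omega), if_pos (by omega), if_neg (by omega),
        if_neg (by omega), if_pos (by omega), if_pos (by omega)]
    rw [smv_eq_u (i := I+1) (j := J) v (by omega) hJ, smv_eq_u (i := I-1) (j := J) v (by omega) hJ,
        smv_eq_u (i := I) (j := J-1) v hI (by omega), smv_eq_u (i := I) (j := J) v hI hJ]
    rw [show I + 1 - J + (J - (I + 1)) = I - (J - 1) + (J - 1 - I) from by omega,
        show I - 1 + J + 1 = I + (J - 1) + 1 from by omega]
    rw [u_sym v (show (I + 1 + J + 1) + (I - J + (J - I)) = 2 * N from by omega),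
        u_sym v (show (I - 1 - J + (J - (I - 1))) + (I + J + 1) = 2 * N from by omega)]
    ring
  -- FFFF : interior
  · rw [if_pos (by omega), if_pos (by omega), if_neg (by omega),
        if_pos (by omega), if_pos (by omega), if_neg (by omega)]
    rw [smv_eq_u (i := I+1) (j := J) v (by omega) hJ, smv_eq_u (i := I-1) (j := J) v (by omega) hJ,
        smv_eq_u (i := I) (j := J+1) v hI (by omega), smv_eq_u (i := I) (j := J-1) v hI (by omega)]
    rw [show (I:ℕ) + 1 + J + 1 = I + (J + 1) + 1 from by omega,
        show (I:ℕ) - 1 + J + 1 = I + (J - 1) + 1 from by omega,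
        show I + 1 - J + (J - (I + 1)) = I - (J - 1) + (J - 1 - I) from by omega,
        show I - 1 - J + (J - (I - 1)) = I - (J + 1) + (J + 1 - I) from by omega]
    ring

end CProof
namespace CProof

variable {n1 n2 n3 m n l : ℕ}

lemma sum_pick {N : ℕ} (P : Fin N → Prop) [DecidablePred P] (F : Fin N → ℂ) (x : Fin N)
    (hx : P x) (huniq : ∀ t, P t → t = x) :
    (∑ t, if P t then F t else 0) = F x := by
  rw [Finset.sum_eq_single x]
  · rw [if_pos hx]
  · intro t _ ht; rw [if_neg (fun hP => ht (huniq t hP))]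
  · intro h; exact absurd (Finset.mem_univ _) h

lemma sum_none {N : ℕ} (P : Fin N → Prop) [DecidablePred P] (F : Fin N → ℂ)
    (h : ∀ t, ¬ P t) : (∑ t, if P t then F t else 0) = 0 :=
  Finset.sum_eq_zero fun t _ => if_neg (h t)

lemma Tb_mul_apply {κ : Type*} [Fintype κ] (M : Matrix (Fin n3 × Fin m) κ ℂ)
    (k : ℕ) (hk : k < n3) (a : Fin m) (q : κ) :
    (Tb n3 m * M) (⟨k, hk⟩, a) q =
      ((if h : k + 1 < n3 then M (⟨k + 1, h⟩, a) q else 0)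
        + (if h : 0 < k then M (⟨k - 1, by omega⟩, a) q else 0)
        + (if k = 0 ∨ k + 1 = n3 then M (⟨k, hk⟩, a) q else 0)) := by
  rw [Matrix.mul_apply, Fintype.sum_prod_type]
  have inner : ∀ t : Fin n3, (∑ c : Fin m, Tb n3 m (⟨k, hk⟩, a) (t, c) * M (t, c) q)
      = ((if k + 1 = ↑t then M (t, a) q else 0) + (if ↑t + 1 = k then M (t, a) q else 0)
        + (if (k = ↑t ∧ (k = 0 ∨ k + 1 = n3)) then M (t, a) q else 0)) := by
    intro t
    simp only [Tb, ite_mul, one_mul, zero_mul]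
    by_cases hP : (k + 1 = ↑t ∨ ↑t + 1 = k ∨ (k = ↑t ∧ (k = 0 ∨ k + 1 = n3)))
    · simp only [hP, true_and]
      rw [Finset.sum_ite_eq Finset.univ a (fun c => M (t, c) q)]
      simp only [Finset.mem_univ, if_true]
      rcases hP with h1 | h2 | h3
      · rw [if_pos h1, if_neg (by omega), if_neg (by omega)]; ring
      · rw [if_neg (by omega), if_pos h2, if_neg (by omega)]; ring
      · rw [if_neg (by omega), if_neg (by omega), if_pos h3]; ring
    · rw [Finset.sum_eq_zero (fun c _ => if_neg (fun hc => hP hc.1))]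
      rw [if_neg (fun h1 => hP (Or.inl h1)), if_neg (fun h2 => hP (Or.inr (Or.inl h2))),
        if_neg (fun h3 => hP (Or.inr (Or.inr h3)))]
      ring
  rw [Finset.sum_congr rfl (fun t _ => inner t), Finset.sum_add_distrib,
    Finset.sum_add_distrib]
  have S1 : (∑ t : Fin n3, if k + 1 = ↑t then M (t, a) q else 0)
      = (if h : k + 1 < n3 then M (⟨k + 1, h⟩, a) q else 0) := by
    by_cases h : k + 1 < n3
    · rw [dif_pos h]
      exact sum_pick _ _ ⟨k + 1, h⟩ rfl (fun t hP => Fin.ext hP.symm)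
    · rw [dif_neg h]
      exact sum_none _ _ (fun t hP => by have := t.isLt; omega)
  have S2 : (∑ t : Fin n3, if ↑t + 1 = k then M (t, a) q else 0)
      = (if h : 0 < k then M (⟨k - 1, by omega⟩, a) q else 0) := by
    by_cases h : 0 < k
    · rw [dif_pos h]
      exact sum_pick _ _ ⟨k - 1, by omega⟩ (show k - 1 + 1 = k from by omega)
        (fun t hP => Fin.ext (show (t : Fin n3).1 = k - 1 from by omega))
    · rw [dif_neg h]
      exact sum_none _ _ (fun t hP => by omega)
  have S3 : (∑ t : Fin n3, if (k = ↑t ∧ (k = 0 ∨ k + 1 = n3)) then M (t, a) q else 0)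
      = (if k = 0 ∨ k + 1 = n3 then M (⟨k, hk⟩, a) q else 0) := by
    by_cases h : k = 0 ∨ k + 1 = n3
    · rw [if_pos h]
      exact sum_pick _ _ ⟨k, hk⟩ ⟨rfl, h⟩ (fun t hP => Fin.ext hP.1.symm)
    · rw [if_neg h]
      exact sum_none _ _ (fun t hP => h hP.2)
  rw [S1, S2, S3]

lemma mul_Tb_apply {κ : Type*} [Fintype κ] (M : Matrix κ (Fin n3 × Fin n) ℂ)
    (k : ℕ) (hk : k < n3) (b : Fin n) (q : κ) :
    (M * Tb n3 n) q (⟨k, hk⟩, b) =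
      ((if h : k + 1 < n3 then M q (⟨k + 1, h⟩, b) else 0)
        + (if h : 0 < k then M q (⟨k - 1, by omega⟩, b) else 0)
        + (if k = 0 ∨ k + 1 = n3 then M q (⟨k, hk⟩, b) else 0)) := by
  rw [Matrix.mul_apply, Fintype.sum_prod_type]
  have inner : ∀ t : Fin n3, (∑ c : Fin n, M q (t, c) * Tb n3 n (t, c) (⟨k, hk⟩, b))
      = ((if k + 1 = ↑t then M q (t, b) else 0) + (if ↑t + 1 = k then M q (t, b) else 0)
        + (if (↑t = k ∧ ((t : Fin n3).1 = 0 ∨ ↑t + 1 = n3)) then M q (t, b) else 0)) := by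
    intro t
    simp only [Tb, mul_ite, mul_one, mul_zero]
    by_cases hP : (↑t + 1 = k ∨ k + 1 = ↑t ∨ ((t : Fin n3).1 = k ∧ ((t : Fin n3).1 = 0 ∨ ↑t + 1 = n3)))
    · simp only [hP, true_and]
      rw [Finset.sum_ite_eq' Finset.univ b (fun c => M q (t, c))]
      simp only [Finset.mem_univ, if_true]
      rcases hP with h1 | h2 | h3
      · rw [if_neg (by omega), if_pos h1, if_neg (by omega)]; ring
      · rw [if_pos h2, if_neg (by omega), if_neg (by omega)]; ring
      · rw [if_neg (by omega), if_neg (by omega), if_pos h3]; ring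
    · rw [Finset.sum_eq_zero (fun c _ => if_neg (fun hc => hP hc.1))]
      rw [if_neg (fun h2 => hP (Or.inr (Or.inl h2))), if_neg (fun h1 => hP (Or.inl h1)),
        if_neg (fun h3 => hP (Or.inr (Or.inr h3)))]
      ring
  rw [Finset.sum_congr rfl (fun t _ => inner t), Finset.sum_add_distrib,
    Finset.sum_add_distrib]
  have S1 : (∑ t : Fin n3, if k + 1 = ↑t then M q (t, b) else 0)
      = (if h : k + 1 < n3 then M q (⟨k + 1, h⟩, b) else 0) := by
    by_cases h : k + 1 < n3
    · rw [dif_pos h]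
      exact sum_pick _ _ ⟨k + 1, h⟩ rfl (fun t hP => Fin.ext hP.symm)
    · rw [dif_neg h]
      exact sum_none _ _ (fun t hP => by have := t.isLt; omega)
  have S2 : (∑ t : Fin n3, if ↑t + 1 = k then M q (t, b) else 0)
      = (if h : 0 < k then M q (⟨k - 1, by omega⟩, b) else 0) := by
    by_cases h : 0 < k
    · rw [dif_pos h]
      exact sum_pick _ _ ⟨k - 1, by omega⟩ (show k - 1 + 1 = k from by omega)
        (fun t hP => Fin.ext (show (t : Fin n3).1 = k - 1 from by omega))
    · rw [dif_neg h]
      exact sum_none _ _ (fun t hP => by omega)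
  have S3 : (∑ t : Fin n3, if (↑t = k ∧ ((t : Fin n3).1 = 0 ∨ ↑t + 1 = n3)) then M q (t, b) else 0)
      = (if k = 0 ∨ k + 1 = n3 then M q (⟨k, hk⟩, b) else 0) := by
    by_cases h : k = 0 ∨ k + 1 = n3
    · rw [if_pos h]
      exact sum_pick _ _ ⟨k, hk⟩ ⟨rfl, show k = 0 ∨ k + 1 = n3 from h⟩ (fun t hP => Fin.ext hP.1)
    · rw [if_neg h]
      exact sum_none _ _ (fun t hP => by omega)
  rw [S1, S2, S3]

end CProof
namespace CProof
open Tensor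

variable {n1 n2 n3 m n l : ℕ}

lemma matT_apply (A : Tensor m n n3) (x y : ℕ) (hx : x < n3) (hy : y < n3)
    (a : Fin m) (b : Fin n) :
    matT A (⟨x, hx⟩, a) (⟨y, hy⟩, b)
      = smv n3 (fun k => if h : k < n3 then A ⟨k, h⟩ a b else 0) x y := by
  simp only [matT, smv]
  rw [dif_pos (show x - y + (y - x) < n3 from by omega)]
  congr 1
  split_ifs <;> first | rfl | (exfalso; omega)

/-- the slice-extraction function -/
def vf (A : Tensor m n n3) (a : Fin m) (b : Fin n) : ℕ → ℂ :=
  fun k => if h : k < n3 then A ⟨k, h⟩ a b else 0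

lemma Tb_matT (A : Tensor m n n3) : Tb n3 m * matT A = matT A * Tb n3 n := by
  ext p q
  obtain ⟨⟨i, hi⟩, a⟩ := p
  obtain ⟨⟨j, hj⟩, b⟩ := q
  rw [Tb_mul_apply (matT A) i hi a, mul_Tb_apply (matT A) j hj b]
  simp only [matT_apply A _ _ _ _ a b, dite_eq_ite]
  exact key n3 (vf A a b) hi hj

lemma tele (g : ℕ → ℂ) (mm : ℕ) :
    (∑ s ∈ Finset.range mm, (-1 : ℂ) ^ s * (g s + g (s + 1)))
      = g 0 - (-1 : ℂ) ^ mm * g mm := by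
  induction mm with
  | zero => simp
  | succ p ih => rw [Finset.sum_range_succ, ih, pow_succ]; ring

lemma vf_top (A : Tensor m n n3) (a : Fin m) (b : Fin n) {s : ℕ} (hs : n3 ≤ s) :
    vf A a b s = 0 := by
  rw [vf, dif_neg (by omega)]

lemma smv_zero (A : Tensor m n n3) (a : Fin m) (b : Fin n) {t : ℕ} (ht : t < n3) :
    smv n3 (vf A a b) t 0 = vf A a b t + vf A a b (t + 1) := by
  rw [smv, show t - 0 + (0 - t) = t from by omega]
  congr 1
  split_ifs with h1 h2
  · rw [show t + 0 + 1 = t + 1 from by omega]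
  · omega
  · exact (vf_top A a b (by omega)).symm

lemma matT_col0 (A : Tensor m n n3) {i : ℕ} (hi : i < n3) (h0 : 0 < n3)
    (a : Fin m) (b : Fin n) :
    matT A (⟨i, hi⟩, a) (⟨0, h0⟩, b) = vf A a b i + vf A a b (i + 1) := by
  rw [matT_apply A i 0 hi h0 a b]
  exact smv_zero A a b hi

lemma tenT_matT (A : Tensor m n n3) : tenT (matT A) = A := by
  funext i
  ext a b
  show (∑ t : Fin n3, if i.1 ≤ t.1
      then (-1 : ℂ) ^ (t.1 - i.1) * matT A (t, a) (⟨0, i.pos⟩, b) else 0) = A i a b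
  have hterm : ∀ t : Fin n3,
      (if i.1 ≤ t.1 then (-1 : ℂ) ^ (t.1 - i.1) * matT A (t, a) (⟨0, i.pos⟩, b) else 0)
        = (if i.1 ≤ t.1 then (-1 : ℂ) ^ (t.1 - i.1) * (vf A a b t.1 + vf A a b (t.1 + 1))
            else 0) := by
    intro t
    obtain ⟨tv, htv⟩ := t
    rw [matT_col0 A htv i.pos a b]
  rw [Finset.sum_congr rfl (fun t _ => hterm t)]
  rw [Fin.sum_univ_eq_sum_range
    (fun tv => if i.1 ≤ tv then (-1 : ℂ) ^ (tv - i.1) * (vf A a b tv + vf A a b (tv + 1)) else 0) n3]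
  rw [Finset.range_eq_Ico,
    ← Finset.sum_subset (Finset.Ico_subset_Ico (Nat.zero_le i.1) (le_refl n3))
      (fun x hx hx' => if_neg (fun hle => hx' (Finset.mem_Ico.mpr
        ⟨hle, (Finset.mem_Ico.mp hx).2⟩)))]
  rw [Finset.sum_Ico_eq_sum_range]
  rw [Finset.sum_congr rfl (fun s _ => by
    rw [if_pos (Nat.le_add_right i.1 s), Nat.add_sub_cancel_left, Nat.add_assoc i.1 s 1])]
  rw [tele (fun s => vf A a b (i.1 + s)) (n3 - i.1)]
  rw [show i.1 + (n3 - i.1) = n3 from by omega, vf_top A a b (le_refl n3)]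
  rw [Nat.add_zero, mul_zero, sub_zero, vf, dif_pos i.isLt, Fin.eta]

end CProof
namespace CProof
open Tensor

variable {n1 n2 n3 m n l : ℕ}

lemma matT_tenT_col0 (M : Matrix (Fin n3 × Fin m) (Fin n3 × Fin n) ℂ)
    {i : ℕ} (hi : i < n3) (h0 : 0 < n3) (a : Fin m) (b : Fin n) :
    matT (tenT M) (⟨i, hi⟩, a) (⟨0, h0⟩, b) = M (⟨i, hi⟩, a) (⟨0, h0⟩, b) := by
  have hvf : ∀ k, k ≤ n3 → vf (tenT M) a b k
      = ∑ t : Fin n3, (if k ≤ t.1 then (-1 : ℂ) ^ (t.1 - k) * M (t, a) (⟨0, h0⟩, b) else 0) := by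
    intro k hk
    rcases lt_or_eq_of_le hk with hk' | hk'
    · rw [vf, dif_pos hk']; rfl
    · rw [vf, dif_neg (by omega)]
      exact (Finset.sum_eq_zero fun t _ => if_neg (by have := t.isLt; omega)).symm
  rw [matT_col0 (tenT M) hi h0 a b, hvf i (by omega), hvf (i + 1) (by omega),
    ← Finset.sum_add_distrib]
  have hterm : ∀ t : Fin n3,
      ((if i ≤ t.1 then (-1 : ℂ) ^ (t.1 - i) * M (t, a) (⟨0, h0⟩, b) else 0)
        + (if i + 1 ≤ t.1 then (-1 : ℂ) ^ (t.1 - (i + 1)) * M (t, a) (⟨0, h0⟩, b) else 0))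
      = (if t.1 = i then M (t, a) (⟨0, h0⟩, b) else 0) := by
    intro t
    by_cases h1 : t.1 < i
    · rw [if_neg (by omega), if_neg (by omega), if_neg (by omega), add_zero]
    · by_cases h2 : t.1 = i
      · rw [if_pos (by omega), if_neg (by omega), if_pos h2,
          show t.1 - i = 0 from by omega, pow_zero, one_mul, add_zero]
      · rw [if_pos (by omega), if_pos (by omega), if_neg h2,
          show t.1 - i = (t.1 - (i + 1)) + 1 from by omega, pow_succ]
        ring
  rw [Finset.sum_congr rfl (fun t _ => hterm t),
    sum_pick (fun t : Fin n3 => t.1 = i) (fun t => M (t, a) (⟨0, h0⟩, b)) ⟨i, hi⟩ rfl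
      (fun t ht => Fin.ext ht)]

lemma eq_of_comm_col0 {M N : Matrix (Fin n3 × Fin m) (Fin n3 × Fin n) ℂ}
    (hM : Tb n3 m * M = M * Tb n3 n) (hN : Tb n3 m * N = N * Tb n3 n)
    (h0 : ∀ (p : Fin n3 × Fin m) (b : Fin n) (h : 0 < n3), M p (⟨0, h⟩, b) = N p (⟨0, h⟩, b)) :
    M = N := by
  have keycol : ∀ (k : ℕ), ∀ (hk : k < n3) (p : Fin n3 × Fin m) (b : Fin n),
      M p (⟨k, hk⟩, b) = N p (⟨k, hk⟩, b) := by
    intro k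
    induction k using Nat.strong_induction_on with
    | _ k ih =>
      cases k with
      | zero => intro hk p b; exact h0 p b hk
      | succ k' =>
        intro hk p b
        obtain ⟨⟨i, hi⟩, a⟩ := p
        have hk' : k' < n3 := by omega
        have hk2 : k' + 1 < n3 := hk
        have e1 : (Tb n3 m * M) (⟨i, hi⟩, a) (⟨k', hk'⟩, b)
            = (M * Tb n3 n) (⟨i, hi⟩, a) (⟨k', hk'⟩, b) := by rw [hM]
        have e2 : (Tb n3 m * N) (⟨i, hi⟩, a) (⟨k', hk'⟩, b)
            = (N * Tb n3 n) (⟨i, hi⟩, a) (⟨k', hk'⟩, b) := by rw [hN]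
        rw [Tb_mul_apply, mul_Tb_apply, dif_pos hk2] at e1 e2
        have c1 : ∀ (p' : Fin n3 × Fin m) (h : k' < n3),
            M p' (⟨k', h⟩, b) = N p' (⟨k', h⟩, b) := fun p' h => ih k' (by omega) h p' b
        have c2 : ∀ (p' : Fin n3 × Fin m) (h : k' - 1 < n3),
            M p' (⟨k' - 1, h⟩, b) = N p' (⟨k' - 1, h⟩, b) :=
          fun p' h => ih (k' - 1) (by omega) h p' b
        simp only [c1, c2] at e1
        show M (⟨i, hi⟩, a) (⟨k' + 1, hk2⟩, b) = N (⟨i, hi⟩, a) (⟨k' + 1, hk2⟩, b)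
        linear_combination e2 - e1
  ext p q
  obtain ⟨j, b⟩ := q
  have := keycol j.1 j.isLt p b
  simpa [Fin.eta] using this

lemma matT_cmul (A : Tensor m n n3) (B : Tensor n l n3) :
    matT (cmul A B) = matT A * matT B := by
  refine eq_of_comm_col0 (Tb_matT _) ?_ ?_
  · rw [← Matrix.mul_assoc, Tb_matT A, Matrix.mul_assoc, Tb_matT B, Matrix.mul_assoc]
  · intro p b h
    obtain ⟨⟨i, hi⟩, a⟩ := p
    exact matT_tenT_col0 (matT A * matT B) hi h a b

lemma matT_inj {A B : Tensor m n n3} (h : matT A = matT B) : A = B := by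
  have := congrArg tenT h
  rwa [tenT_matT, tenT_matT] at this

end CProof
namespace CProof
open Tensor

variable {n1 n2 n3 m n l : ℕ}

lemma matT_conjT (A : Tensor m n n3) : matT (conjT A) = (matT A).conjTranspose := by
  ext p q
  obtain ⟨⟨i, hi⟩, a⟩ := p
  obtain ⟨⟨j, hj⟩, b⟩ := q
  rw [Matrix.conjTranspose_apply]
  simp only [matT, conjT, Matrix.conjTranspose_apply]
  have hAA : ∀ (x y : ℕ) (hx : x < n3) (hy : y < n3), x = y →
      star (A ⟨x, hx⟩ b a) = star (A ⟨y, hy⟩ b a) := by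
    rintro x y hx hy rfl; rfl
  rw [star_add]
  congr 1
  · exact hAA _ _ _ _ (by omega)
  · split_ifs <;> first | (exact hAA _ _ _ _ (by omega)) | (exfalso; omega) | simp

lemma vf_idT (a b : Fin n) (h0 : 0 < n3) :
    ∀ k, vf (idT : Tensor n n n3) a b k
      = if k = 0 then (if a = b then (1 : ℂ) else 0) else 0 := by
  intro k
  rw [vf]
  by_cases hk : k < n3
  · rw [dif_pos hk]
    show (if k = 0 then (1 : Matrix (Fin n) (Fin n) ℂ) else 0) a b = _
    by_cases hk0 : k = 0
    · rw [if_pos hk0, if_pos hk0, Matrix.one_apply]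
    · rw [if_neg hk0, if_neg hk0, Matrix.zero_apply]
  · rw [dif_neg hk, if_neg (fun hc => hk (by rw [hc]; omega))]

lemma matT_idT (h0 : 0 < n3) : matT (idT : Tensor n n n3) = 1 := by
  ext p q
  obtain ⟨⟨i, hi⟩, a⟩ := p
  obtain ⟨⟨j, hj⟩, b⟩ := q
  rw [matT_apply (idT : Tensor n n n3) i j hi hj a b,
    show (fun k => if h : k < n3 then (idT : Tensor n n n3) ⟨k, h⟩ a b else 0)
      = vf (idT : Tensor n n n3) a b from rfl, smv]
  simp only [vf_idT a b h0]
  have hone : ((1 : Matrix (Fin n3 × Fin n) (Fin n3 × Fin n) ℂ) (⟨i, hi⟩, a) (⟨j, hj⟩, b))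
      = if i = j ∧ a = b then 1 else 0 := by
    rw [Matrix.one_apply]
    by_cases h : i = j ∧ a = b
    · rw [if_pos h, if_pos (by obtain ⟨h1, h2⟩ := h; subst h1; subst h2; rfl)]
    · rw [if_neg h, if_neg (fun hc =>
        h ⟨congrArg (fun x => (Prod.fst x).1) hc, congrArg Prod.snd hc⟩)]
  rw [hone]
  have hH : (if i + j + 2 ≤ n3 then (if i + j + 1 = 0 then (if a = b then (1:ℂ) else 0) else 0)
      else if n3 ≤ i + j then
        (if 2 * n3 - (i + j) - 1 = 0 then (if a = b then (1:ℂ) else 0) else 0) else 0) = 0 := by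
    split_ifs <;> first | rfl | (exfalso; omega) | simp_all
  rw [hH, add_zero]
  by_cases hij : i = j
  · rw [if_pos (by omega)]
    by_cases hab : a = b
    · rw [if_pos hab, if_pos ⟨hij, hab⟩]
    · rw [if_neg hab, if_neg (fun hc => hab hc.2)]
  · rw [if_neg (by omega), if_neg (fun hc => hij hc.1)]

end CProof

open CProof

theorem stmt2 {n1 n2 n3 : ℕ} (A : Tensor n1 n2 n3)
    (U : Tensor n1 n1 n3) (S : Tensor n1 n2 n3) (V : Tensor n2 n2 n3)
    (Sd : Tensor n2 n1 n3)
    (hU : Unitary U) (hV : Unitary V) (hS : FDiag S)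
    (hA : A = cmul (cmul U S) (conjT V))
    (hSd : IsMP S Sd) :
    IsMP A (cmul (cmul V Sd) (conjT U)) := by
  rcases Nat.eq_zero_or_pos n3 with h0 | h0
  · subst h0
    exact ⟨funext fun i => i.elim0, funext fun i => i.elim0,
      funext fun i => i.elim0, funext fun i => i.elim0⟩
  obtain ⟨hU1, hU2⟩ := hU
  obtain ⟨hV1, hV2⟩ := hV
  obtain ⟨hS1, hS2, hS3, hS4⟩ := hSd
  have mU1 : (matT U).conjTranspose * matT U = 1 := by
    have h := congrArg matT hU1
    rwa [matT_cmul, matT_conjT, matT_idT h0] at h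
  have mV1 : (matT V).conjTranspose * matT V = 1 := by
    have h := congrArg matT hV1
    rwa [matT_cmul, matT_conjT, matT_idT h0] at h
  have mS1 : matT S * matT Sd * matT S = matT S := by
    have h := congrArg matT hS1
    rwa [matT_cmul, matT_cmul] at h
  have mS2 : matT Sd * matT S * matT Sd = matT Sd := by
    have h := congrArg matT hS2
    rwa [matT_cmul, matT_cmul] at h
  have mS3 : (matT S * matT Sd).conjTranspose = matT S * matT Sd := by
    have h := congrArg matT hS3
    rwa [matT_conjT, matT_cmul] at h
  have mS4 : (matT Sd * matT S).conjTranspose = matT Sd * matT S := by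
    have h := congrArg matT hS4
    rwa [matT_conjT, matT_cmul] at h
  have hmA : matT A = matT U * matT S * (matT V).conjTranspose := by
    rw [hA, matT_cmul, matT_cmul, matT_conjT]
  have cU : ∀ {κ : Type} (Z : Matrix (Fin n3 × Fin n1) κ ℂ),
      (matT U).conjTranspose * (matT U * Z) = Z := fun Z => by
    rw [← Matrix.mul_assoc, mU1, Matrix.one_mul]
  have cV : ∀ {κ : Type} (Z : Matrix (Fin n3 × Fin n2) κ ℂ),
      (matT V).conjTranspose * (matT V * Z) = Z := fun Z => by
    rw [← Matrix.mul_assoc, mV1, Matrix.one_mul]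
  have mS1' : ∀ {κ : Type} (Z : Matrix (Fin n3 × Fin n2) κ ℂ),
      matT S * (matT Sd * (matT S * Z)) = matT S * Z := fun Z => by
    have h : (matT S * matT Sd * matT S) * Z = matT S * Z := by rw [mS1]
    simpa only [Matrix.mul_assoc] using h
  have mS2' : ∀ {κ : Type} (Z : Matrix (Fin n3 × Fin n1) κ ℂ),
      matT Sd * (matT S * (matT Sd * Z)) = matT Sd * Z := fun Z => by
    have h : (matT Sd * matT S * matT Sd) * Z = matT Sd * Z := by rw [mS2]
    simpa only [Matrix.mul_assoc] using h
  have hAX : matT A * (matT V * matT Sd * (matT U).conjTranspose)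
      = matT U * (matT S * matT Sd) * (matT U).conjTranspose := by
    rw [hmA]; simp only [Matrix.mul_assoc]; rw [cV]
  have hXA : (matT V * matT Sd * (matT U).conjTranspose) * matT A
      = matT V * (matT Sd * matT S) * (matT V).conjTranspose := by
    rw [hmA]; simp only [Matrix.mul_assoc]; rw [cU]
  refine ⟨?_, ?_, ?_, ?_⟩
  · apply matT_inj
    simp only [matT_cmul, matT_conjT]
    rw [hmA]
    simp only [Matrix.mul_assoc]
    rw [cU, cV, mS1']
  · apply matT_inj
    simp only [matT_cmul, matT_conjT]
    rw [hmA]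
    simp only [Matrix.mul_assoc]
    rw [cU, cV, mS2']
  · apply matT_inj
    simp only [matT_cmul, matT_conjT]
    rw [hAX, Matrix.conjTranspose_mul, Matrix.conjTranspose_mul,
      Matrix.conjTranspose_conjTranspose, mS3]
    simp only [Matrix.mul_assoc]
  · apply matT_inj
    simp only [matT_cmul, matT_conjT]
    rw [hXA, Matrix.conjTranspose_mul, Matrix.conjTranspose_mul,
      Matrix.conjTranspose_conjTranspose, mS4]
    simp only [Matrix.mul_assoc]
end
end

section
/- Let A ∈ ℂ^{n×n×n3} and suppose A = U *_c [[S_r *_c K, S_r *_c L],[O, O]] *_c U^H, where U ∈ ℂ^{n×n×n3} is unitary, S_r ∈ ℂ^{r×r×n3} is invertible, K ∈ ℂ^{r×r×n3}, L ∈ ℂ^{r×(n−r)×n3}, and K *_c K^H + L *_c L^H = I_r (the identity tensor in ℂ^{r×r×n3}) — a C-HS decomposition of A. Then the Moore-Penrose inverse of A is A^† = U *_c [[K^H *_c S_r^{-1}, O],[L^H *_c S_r^{-1}, O]] *_c U^H. -/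
noncomputable section

namespace CHS

open Tensor
open scoped Matrix

/-- scalar indicator entries of the basis matrices -/
def φnat (n3 m t q : ℕ) : ℕ :=
  (if (t - q) + (q - t) = m then 1 else 0) +
  (if t + q + 2 ≤ n3 ∧ t + q + 1 = m then 1 else 0) +
  (if n3 ≤ t + q ∧ t + q + 1 + m = 2 * n3 then 1 else 0)

/-- structured matrix with coefficient tensor C -/
def SM {n1 n2 n3 : ℕ} (C : Tensor n1 n2 n3) :
    Matrix (Fin n3 × Fin n1) (Fin n3 × Fin n2) ℂ := Matrix.of fun p q =>
  ∑ m : Fin n3, (φnat n3 m.1 p.1.1 q.1.1 : ℂ) * C m p.2 q.2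

lemma sumIf {n3 : ℕ} (v : ℕ) (hv : v < n3) (f : Fin n3 → ℂ) :
    (∑ m : Fin n3, (if v = (m : ℕ) then (1:ℂ) else 0) * f m) = f ⟨v, hv⟩ := by
  rw [Finset.sum_eq_single (⟨v, hv⟩ : Fin n3)]
  · simp
  · intro b _ hb
    rw [if_neg, zero_mul]
    intro h; exact hb (Fin.ext h.symm)
  · intro h; exact absurd (Finset.mem_univ _) h

lemma sumIf0 {n3 : ℕ} (P : ℕ → Prop) [DecidablePred P] (hP : ∀ m, m < n3 → ¬ P m)
    (f : Fin n3 → ℂ) : (∑ m : Fin n3, (if P m.1 then (1:ℂ) else 0) * f m) = 0 := by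
  apply Finset.sum_eq_zero
  intro m _
  rw [if_neg (hP m.1 m.2), zero_mul]

lemma L1 {n1 n2 n3 : ℕ} (A : Tensor n1 n2 n3) : matT A = SM A := by
  ext ⟨t, a⟩ ⟨q, b⟩
  simp only [matT, SM, Matrix.of_apply]
  have htq : t.1 - q.1 + (q.1 - t.1) < n3 := by have := t.2; have := q.2; omega
  -- expand the cast
  have hcast : ∀ m : Fin n3, (φnat n3 m.1 t.1 q.1 : ℂ) * A m a b =
      (if t.1 - q.1 + (q.1 - t.1) = m.1 then (1:ℂ) else 0) * A m a b +
      (if t.1 + q.1 + 2 ≤ n3 ∧ t.1 + q.1 + 1 = m.1 then (1:ℂ) else 0) * A m a b +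
      (if n3 ≤ t.1 + q.1 ∧ t.1 + q.1 + 1 + m.1 = 2 * n3 then (1:ℂ) else 0) * A m a b := by
    intro m
    unfold φnat
    push_cast
    ring
  rw [Finset.sum_congr rfl (fun m _ => hcast m), Finset.sum_add_distrib, Finset.sum_add_distrib]
  rw [sumIf _ htq]
  by_cases h1 : t.1 + q.1 + 2 ≤ n3
  · have e2 : (∑ m : Fin n3, (if t.1 + q.1 + 2 ≤ n3 ∧ t.1 + q.1 + 1 = m.1 then (1:ℂ) else 0) * A m a b)
        = A ⟨t.1 + q.1 + 1, by omega⟩ a b := by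
      have hc : ∀ m : Fin n3, (if t.1 + q.1 + 2 ≤ n3 ∧ t.1 + q.1 + 1 = m.1 then (1:ℂ) else 0) * A m a b
          = (if t.1 + q.1 + 1 = m.1 then (1:ℂ) else 0) * A m a b := by
        intro m
        rw [if_congr (Iff.intro (fun h => h.2) (fun h => ⟨h1, h⟩)) rfl rfl]
      rw [Finset.sum_congr rfl (fun m _ => hc m)]
      exact sumIf _ (by omega) _
    have e3 : (∑ m : Fin n3, (if n3 ≤ t.1 + q.1 ∧ t.1 + q.1 + 1 + m.1 = 2 * n3 then (1:ℂ) else 0) * A m a b) = 0 := by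
      apply sumIf0 (fun m => n3 ≤ t.1 + q.1 ∧ t.1 + q.1 + 1 + m = 2 * n3)
      intro m _ hm; omega
    rw [e2, e3, dif_pos h1, add_zero]
  · by_cases h2 : n3 ≤ t.1 + q.1
    · have e2 : (∑ m : Fin n3, (if t.1 + q.1 + 2 ≤ n3 ∧ t.1 + q.1 + 1 = m.1 then (1:ℂ) else 0) * A m a b) = 0 := by
        apply sumIf0 (fun m => t.1 + q.1 + 2 ≤ n3 ∧ t.1 + q.1 + 1 = m)
        intro m _ hm; omega
      have e3 : (∑ m : Fin n3, (if n3 ≤ t.1 + q.1 ∧ t.1 + q.1 + 1 + m.1 = 2 * n3 then (1:ℂ) else 0) * A m a b)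
          = A ⟨2 * n3 - (t.1 + q.1) - 1, by have := t.2; omega⟩ a b := by
        have hc : ∀ m : Fin n3, (if n3 ≤ t.1 + q.1 ∧ t.1 + q.1 + 1 + m.1 = 2 * n3 then (1:ℂ) else 0) * A m a b
            = (if 2 * n3 - (t.1 + q.1) - 1 = m.1 then (1:ℂ) else 0) * A m a b := by
          intro m
          have hm2 := m.2; have ht2 := t.2; have hq2 := q.2
          have hiff : (n3 ≤ t.1 + q.1 ∧ t.1 + q.1 + 1 + m.1 = 2 * n3) ↔
              (2 * n3 - (t.1 + q.1) - 1 = m.1) := by omega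
          rw [if_congr hiff rfl rfl]
        rw [Finset.sum_congr rfl (fun m _ => hc m)]
        exact sumIf _ (by have := t.2; omega) _
      rw [e2, e3, dif_neg h1, dif_pos h2, add_zero]
    · have e2 : (∑ m : Fin n3, (if t.1 + q.1 + 2 ≤ n3 ∧ t.1 + q.1 + 1 = m.1 then (1:ℂ) else 0) * A m a b) = 0 := by
        apply sumIf0 (fun m => t.1 + q.1 + 2 ≤ n3 ∧ t.1 + q.1 + 1 = m)
        intro m _ hm; omega
      have e3 : (∑ m : Fin n3, (if n3 ≤ t.1 + q.1 ∧ t.1 + q.1 + 1 + m.1 = 2 * n3 then (1:ℂ) else 0) * A m a b) = 0 := by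
        apply sumIf0 (fun m => n3 ≤ t.1 + q.1 ∧ t.1 + q.1 + 1 + m = 2 * n3)
        intro m _ hm; omega
      rw [e2, e3, dif_neg h1, dif_neg h2]
      ring


lemma telescope (n i : ℕ) (hi : i < n) (g : ℕ → ℂ) :
    (∑ t ∈ Finset.range n, if i ≤ t then (-1:ℂ) ^ (t - i) * (g t + g (t+1)) else 0)
      = g i + (-1:ℂ) ^ (n - 1 - i) * g n := by
  induction n with
  | zero => omega
  | succ n ih =>
    rw [Finset.sum_range_succ]
    rcases Nat.lt_or_ge i n with h | h
    · rw [ih h, if_pos (by omega)]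
      have hpow : (-1:ℂ) ^ (n - i) = -(-1:ℂ) ^ (n - 1 - i) := by
        rw [show n - i = (n - 1 - i) + 1 by omega, pow_succ]
        ring
      rw [show n + 1 - 1 - i = n - i by omega]
      rw [hpow]
      ring
    · have hin : i = n := by omega
      subst hin
      rw [Finset.sum_eq_zero, if_pos le_rfl]
      · simp
      · intro t ht
        rw [if_neg]
        exact fun hc => absurd (Finset.mem_range.mp ht) (by omega)

open Tensor in
lemma L2 {n1 n2 n3 : ℕ} (C : Tensor n1 n2 n3) : tenT (SM C) = C := by
  funext i
  ext a b
  set g : ℕ → ℂ := fun s => if h : s < n3 then C ⟨s, h⟩ a b else 0 with hg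
  have hSM : ∀ t : Fin n3, SM C (t, a) (⟨0, i.pos⟩, b) = g t.1 + g (t.1 + 1) := by
    intro t
    have hcast : ∀ m : Fin n3, (φnat n3 m.1 t.1 0 : ℂ) * C m a b =
        (if t.1 - 0 + (0 - t.1) = m.1 then (1:ℂ) else 0) * C m a b +
        (if t.1 + 0 + 2 ≤ n3 ∧ t.1 + 0 + 1 = m.1 then (1:ℂ) else 0) * C m a b +
        (if n3 ≤ t.1 + 0 ∧ t.1 + 0 + 1 + m.1 = 2 * n3 then (1:ℂ) else 0) * C m a b := by
      intro m; unfold φnat; push_cast; ring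
    show (∑ m : Fin n3, (φnat n3 m.1 t.1 0 : ℂ) * C m a b) = _
    rw [Finset.sum_congr rfl (fun m _ => hcast m), Finset.sum_add_distrib,
      Finset.sum_add_distrib]
    have e1 : (∑ m : Fin n3, (if t.1 - 0 + (0 - t.1) = m.1 then (1:ℂ) else 0) * C m a b)
        = g t.1 := by
      have : t.1 - 0 + (0 - t.1) = t.1 := by omega
      rw [Finset.sum_congr rfl (fun m _ => by rw [this]), sumIf t.1 t.2]
      simp only [hg]; rw [dif_pos t.2]
    have e3 : (∑ m : Fin n3, (if n3 ≤ t.1 + 0 ∧ t.1 + 0 + 1 + m.1 = 2 * n3 then (1:ℂ) else 0) * C m a b) = 0 := by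
      apply sumIf0 (fun m => n3 ≤ t.1 + 0 ∧ t.1 + 0 + 1 + m = 2 * n3)
      intro m _ hm; have := t.2; omega
    by_cases h1 : t.1 + 2 ≤ n3
    · have e2 : (∑ m : Fin n3, (if t.1 + 0 + 2 ≤ n3 ∧ t.1 + 0 + 1 = m.1 then (1:ℂ) else 0) * C m a b)
          = g (t.1 + 1) := by
        have hiff : ∀ m : Fin n3, (t.1 + 0 + 2 ≤ n3 ∧ t.1 + 0 + 1 = m.1) ↔ (t.1 + 1 = m.1) := by
          intro m; omega
        rw [Finset.sum_congr rfl (fun m _ => by rw [if_congr (hiff m) rfl rfl]),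
          sumIf (t.1+1) (by omega)]
        simp only [hg]; rw [dif_pos (by omega : t.1 + 1 < n3)]
      rw [e1, e2, e3, add_zero]
    · have e2 : (∑ m : Fin n3, (if t.1 + 0 + 2 ≤ n3 ∧ t.1 + 0 + 1 = m.1 then (1:ℂ) else 0) * C m a b) = 0 := by
        apply sumIf0 (fun m => t.1 + 0 + 2 ≤ n3 ∧ t.1 + 0 + 1 = m)
        intro m _ hm; omega
      have hgt : g (t.1 + 1) = 0 := by simp only [hg]; rw [dif_neg (by omega : ¬ (t.1 + 1 < n3))]
      rw [e1, e2, e3, hgt, add_zero, add_zero]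
  show (∑ t : Fin n3, if i.1 ≤ t.1 then (-1:ℂ) ^ (t.1 - i.1) * SM C (t, a) (⟨0, i.pos⟩, b) else 0)
      = C i a b
  rw [Finset.sum_congr rfl (fun t _ => by rw [hSM t])]
  have := telescope n3 i.1 i.2 g
  rw [Fin.sum_univ_eq_sum_range (fun s => if i.1 ≤ s then (-1:ℂ) ^ (s - i.1) * (g s + g (s+1)) else 0) n3]
  rw [this]
  have hgn : g n3 = 0 := by simp only [hg]; rw [dif_neg (lt_irrefl n3)]
  rw [hgn, mul_zero, add_zero]
  simp only [hg]
  rw [dif_pos i.2]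


open Tensor

lemma tenT_matT {n1 n2 n3 : ℕ} (A : Tensor n1 n2 n3) : tenT (matT A) = A := by
  rw [L1, L2]

lemma matT_inj {n1 n2 n3 : ℕ} {A B : Tensor n1 n2 n3} (h : matT A = matT B) : A = B := by
  rw [← tenT_matT A, ← tenT_matT B, h]

lemma matT_zero {n1 n2 n3 : ℕ} : matT (0 : Tensor n1 n2 n3) = 0 := by
  ext ⟨t, a⟩ ⟨q, b⟩
  simp only [matT]
  split_ifs <;> simp

lemma matT_add {n1 n2 n3 : ℕ} (A B : Tensor n1 n2 n3) :
    matT (A + B) = matT A + matT B := by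
  ext ⟨t, a⟩ ⟨q, b⟩
  simp only [matT, Matrix.add_apply, Pi.add_apply]
  split_ifs <;> (first | (simp; try ring) | rfl | ring)

lemma matT_conjT {n1 n2 n3 : ℕ} (A : Tensor n1 n2 n3) :
    matT (conjT A) = (matT A)ᴴ := by
  ext ⟨t, a⟩ ⟨q, b⟩
  have ht := t.2
  have hq := q.2
  simp only [matT, conjT, Matrix.conjTranspose_apply, Matrix.add_apply]
  rw [star_add]
  congr 1
  · have e : (⟨q.1 - t.1 + (t.1 - q.1), by omega⟩ : Fin n3) = ⟨t.1 - q.1 + (q.1 - t.1), by omega⟩ :=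
      Fin.mk_eq_mk.mpr (by omega)
    rw [e]
  · by_cases h1 : t.1 + q.1 + 2 ≤ n3
    · rw [dif_pos h1, dif_pos (by omega : q.1 + t.1 + 2 ≤ n3)]
      have e : (⟨q.1 + t.1 + 1, by omega⟩ : Fin n3) = ⟨t.1 + q.1 + 1, by omega⟩ :=
        Fin.mk_eq_mk.mpr (by omega)
      rw [e]
    · rw [dif_neg h1, dif_neg (by omega : ¬ (q.1 + t.1 + 2 ≤ n3))]
      by_cases h2 : n3 ≤ t.1 + q.1
      · rw [dif_pos h2, dif_pos (by omega : n3 ≤ q.1 + t.1)]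
        have e : (⟨2 * n3 - (q.1 + t.1) - 1, by omega⟩ : Fin n3) = ⟨2 * n3 - (t.1 + q.1) - 1, by omega⟩ :=
          Fin.mk_eq_mk.mpr (by omega)
        rw [e]
      · rw [dif_neg h2, dif_neg (by omega : ¬ (n3 ≤ q.1 + t.1))]
        simp

lemma matT_idT {n n3 : ℕ} : matT (idT : Tensor n n n3) = 1 := by
  ext ⟨t, a⟩ ⟨q, b⟩
  have ht := t.2
  have hq := q.2
  simp only [matT, idT]
  rw [Matrix.one_apply]
  split_ifs <;>
    simp_all [Prod.ext_iff, Fin.ext_iff, Matrix.one_apply, Matrix.zero_apply] <;>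
    omega

/-! ### the commutative algebra generated by the basis -/

def cc (n3 : ℕ) (x : ℤ) : ℕ := if (2 * (n3:ℤ)) ∣ x then 1 else 0

lemma cc_neg (n3 : ℕ) (x : ℤ) : cc n3 (-x) = cc n3 x := by
  unfold cc
  simp only [dvd_neg]

lemma cc_per (n3 : ℕ) (x : ℤ) : cc n3 (x + 2 * n3) = cc n3 x := by
  unfold cc
  congr 1
  simp only [eq_iff_iff]
  constructor
  · intro h
    have := dvd_sub h (dvd_refl (2 * (n3:ℤ)))
    simpa using this
  · intro h
    exact dvd_add h (dvd_refl _)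

lemma dvd_small (d x : ℤ) (hd : 0 < d) (h1 : -(2*d) < x) (h2 : x < 2*d) :
    (d ∣ x) ↔ (x = -d ∨ x = 0 ∨ x = d) := by
  constructor
  · rintro ⟨k, rfl⟩
    have hk1 : -2 < k := by nlinarith
    have hk2 : k < 2 := by nlinarith
    interval_cases k <;> simp <;> ring
  · rintro (rfl | rfl | rfl)
    · exact ⟨-1, by ring⟩
    · exact ⟨0, by ring⟩
    · exact ⟨1, by ring⟩

lemma cc_eq (n3 : ℕ) (x : ℤ) (hn : 0 < n3) (h1 : -(4*(n3:ℤ)) < x) (h2 : x < 4*(n3:ℤ)) :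
    cc n3 x = if x = -(2*(n3:ℤ)) ∨ x = 0 ∨ x = 2*(n3:ℤ) then 1 else 0 := by
  unfold cc
  congr 1
  simp only [eq_iff_iff]
  rw [dvd_small (2*(n3:ℤ)) x (by positivity) (by omega) (by omega)]

def ww (n3 m : ℕ) (a : ℤ) : ℕ := cc n3 (a - m) + cc n3 (a + m)

lemma ww_sym (n3 m : ℕ) (a : ℤ) : ww n3 m (-a) = ww n3 m a := by
  unfold ww
  have e1 : -a - (m:ℤ) = -(a + m) := by ring
  have e2 : -a + (m:ℤ) = -(a - m) := by ring
  rw [e1, e2, cc_neg, cc_neg]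
  omega

lemma ww_per (n3 m : ℕ) (a : ℤ) : ww n3 m (a + 2 * n3) = ww n3 m a := by
  unfold ww
  have e1 : a + 2*(n3:ℤ) - m = (a - m) + 2*n3 := by ring
  have e2 : a + 2*(n3:ℤ) + m = (a + m) + 2*n3 := by ring
  rw [e1, e2, cc_per, cc_per]

lemma ww_id (n3 m : ℕ) (a : ℤ) (hm : 1 ≤ m) :
    ww n3 m (a + 1) + ww n3 m (a - 1) = ww n3 (m+1) a + ww n3 (m-1) a := by
  unfold ww
  have hc : ((m-1 : ℕ) : ℤ) = (m:ℤ) - 1 := by omega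
  rw [hc]
  push_cast
  have e1 : a + 1 - (m:ℤ) = a - ((m:ℤ) - 1) := by ring
  have e2 : a + 1 + (m:ℤ) = a + ((m:ℤ) + 1) := by ring
  have e3 : a - 1 - (m:ℤ) = a - ((m:ℤ) + 1) := by ring
  have e4 : a - 1 + (m:ℤ) = a + ((m:ℤ) - 1) := by ring
  rw [e1, e2, e3, e4]
  omega

/-- scalar entries of the N matrices -/
def nuN (n3 m u q : ℕ) : ℕ := ww n3 m ((u:ℤ) - q) + ww n3 m ((u:ℤ) + q + 1)

lemma keyR (n3 m t q : ℕ) (hm : 1 ≤ m) (ht : t < n3) (hq : q < n3) (h2 : 2 ≤ n3) :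
    (if t+1 < n3 then nuN n3 m (t+1) q else 0) + (if 1 ≤ t then nuN n3 m (t-1) q else 0)
    + (if t = 0 then nuN n3 m 0 q else 0) + (if t+1 = n3 then nuN n3 m (n3-1) q else 0)
    = nuN n3 (m+1) t q + nuN n3 (m-1) t q := by
  have A := ww_id n3 m ((t:ℤ) - q) hm
  have B := ww_id n3 m ((t:ℤ) + q + 1) hm
  rcases Nat.eq_zero_or_pos t with ht0 | htpos
  · -- t = 0
    rw [if_pos (by omega), if_neg (by omega), if_pos ht0, if_neg (by omega)]
    unfold nuN
    rw [show ((t+1:ℕ):ℤ) - (q:ℤ) = -(q:ℤ) + 1 by omega,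
        show ((t+1:ℕ):ℤ) + (q:ℤ) + 1 = ((q:ℤ) + 1) + 1 by omega,
        show ((0:ℕ):ℤ) - (q:ℤ) = -(q:ℤ) by omega,
        show ((0:ℕ):ℤ) + (q:ℤ) + 1 = (q:ℤ) + 1 by omega,
        show ((t:ℕ):ℤ) - (q:ℤ) = -(q:ℤ) by omega,
        show ((t:ℕ):ℤ) + (q:ℤ) + 1 = (q:ℤ) + 1 by omega]
    have A' := ww_id n3 m (-(q:ℤ)) hm
    have B' := ww_id n3 m ((q:ℤ) + 1) hm
    have s1 : ww n3 m (-(q:ℤ) - 1) = ww n3 m ((q:ℤ) + 1) := by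
      rw [show -(q:ℤ) - 1 = -((q:ℤ)+1) by ring, ww_sym]
    have s2 : ww n3 m ((q:ℤ) + 1 - 1) = ww n3 m (-(q:ℤ)) := by
      rw [show (q:ℤ) + 1 - 1 = (q:ℤ) by ring, ← ww_sym n3 m (q:ℤ)]
    omega
  · rcases Nat.lt_or_ge (t+1) n3 with hmid | hend
    · -- interior
      rw [if_pos hmid, if_pos (show 1 ≤ t by omega), if_neg (by omega), if_neg (by omega)]
      unfold nuN
      rw [show ((t+1:ℕ):ℤ) - (q:ℤ) = ((t:ℤ) - q) + 1 by omega,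
          show ((t+1:ℕ):ℤ) + (q:ℤ) + 1 = ((t:ℤ) + q + 1) + 1 by omega,
          show ((t-1:ℕ):ℤ) - (q:ℤ) = ((t:ℤ) - q) - 1 by omega,
          show ((t-1:ℕ):ℤ) + (q:ℤ) + 1 = ((t:ℤ) + q + 1) - 1 by omega]
      omega
    · -- t = n3 - 1
      have htn : t + 1 = n3 := by omega
      rw [if_neg (by omega), if_pos (show 1 ≤ t by omega), if_neg (by omega), if_pos htn]
      unfold nuN
      rw [show ((t-1:ℕ):ℤ) - (q:ℤ) = ((t:ℤ) - q) - 1 by omega,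
          show ((t-1:ℕ):ℤ) + (q:ℤ) + 1 = ((t:ℤ) + q + 1) - 1 by omega,
          show ((n3-1:ℕ):ℤ) - (q:ℤ) = (t:ℤ) - q by omega,
          show ((n3-1:ℕ):ℤ) + (q:ℤ) + 1 = (t:ℤ) + q + 1 by omega]
      have f1 : ww n3 m ((t:ℤ) + q + 1 + 1) = ww n3 m ((t:ℤ) - q) := by
        have e : (t:ℤ) + q + 1 + 1 = ((q:ℤ) + 1 - n3) + 2*n3 := by omega
        rw [e, ww_per, show ((q:ℤ) + 1 - n3) = -((t:ℤ) - q) by omega, ww_sym]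
      have f2 : ww n3 m ((t:ℤ) - q + 1) = ww n3 m ((t:ℤ) + q + 1) := by
        rw [show (t:ℤ) - q + 1 = -(((t:ℤ) + q + 1) - 2*n3) by omega, ww_sym,
          show ((t:ℤ) + q + 1) - 2*n3 = ((t:ℤ) + q + 1 - 2*n3) by ring]
        have hp := ww_per n3 m ((t:ℤ) + q + 1 - 2*n3)
        rw [show ((t:ℤ) + q + 1 - 2*n3) + 2*n3 = (t:ℤ) + q + 1 by ring] at hp
        rw [hp]
      omega

/-! ### matrix level -/

def Φm (n3 m : ℕ) : Matrix (Fin n3) (Fin n3) ℂ :=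
  Matrix.of fun t q => (φnat n3 m t.1 q.1 : ℂ)

def NNm (n3 m : ℕ) : Matrix (Fin n3) (Fin n3) ℂ :=
  Matrix.of fun t q => (nuN n3 m t.1 q.1 : ℂ)

def ψv (n3 : ℕ) : ℕ → Matrix (Fin n3) (Fin n3) ℂ
  | 0 => (2:ℂ) • 1
  | 1 => Φm n3 1
  | (m+2) => Φm n3 1 * ψv n3 (m+1) - ψv n3 m

lemma ψv_rec (n3 m : ℕ) : ψv n3 (m+2) = Φm n3 1 * ψv n3 (m+1) - ψv n3 m := rfl

lemma φnat_symm (n3 m t q : ℕ) : φnat n3 m t q = φnat n3 m q t := by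
  unfold φnat
  split_ifs <;> omega

lemma Φm_transpose (n3 m : ℕ) : (Φm n3 m)ᵀ = Φm n3 m := by
  ext t q
  simp only [Matrix.transpose_apply, Φm, Matrix.of_apply]
  rw [φnat_symm]

lemma ψv_comm (n3 : ℕ) : ∀ m, Φm n3 1 * ψv n3 m = ψv n3 m * Φm n3 1 := by
  intro m
  induction m using Nat.twoStepInduction with
  | zero =>
    show Φm n3 1 * ((2:ℂ) • 1) = ((2:ℂ) • 1) * Φm n3 1
    rw [Matrix.mul_smul, Matrix.smul_mul, mul_one, one_mul]
  | one => rfl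
  | more m ihm ihm1 =>
    calc Φm n3 1 * ψv n3 (m+2)
        = Φm n3 1 * (Φm n3 1 * ψv n3 (m+1)) - Φm n3 1 * ψv n3 m := by
          rw [ψv_rec, mul_sub]
      _ = Φm n3 1 * (ψv n3 (m+1) * Φm n3 1) - ψv n3 m * Φm n3 1 := by rw [ihm1, ihm]
      _ = (Φm n3 1 * ψv n3 (m+1)) * Φm n3 1 - ψv n3 m * Φm n3 1 := by rw [mul_assoc]
      _ = ψv n3 (m+2) * Φm n3 1 := by rw [ψv_rec, sub_mul]

lemma ψv_transpose (n3 : ℕ) : ∀ m, (ψv n3 m)ᵀ = ψv n3 m := by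
  intro m
  induction m using Nat.twoStepInduction with
  | zero =>
    show ((2:ℂ) • (1 : Matrix (Fin n3) (Fin n3) ℂ))ᵀ = _
    rw [Matrix.transpose_smul, Matrix.transpose_one]
    rfl
  | one => exact Φm_transpose n3 1
  | more m ihm ihm1 =>
    rw [ψv_rec, Matrix.transpose_sub, Matrix.transpose_mul, Φm_transpose, ihm, ihm1,
      ← ψv_comm]

lemma ψv_mul_J (n3 : ℕ) (j : ℕ) (hj : 1 ≤ j) :
    ψv n3 j * ψv n3 1 = ψv n3 (j+1) + ψv n3 (j-1) := by
  obtain ⟨j', rfl⟩ : ∃ j', j = j' + 1 := ⟨j - 1, by omega⟩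
  rw [show ψv n3 1 = Φm n3 1 from rfl, ← ψv_comm]
  have h := ψv_rec n3 j'
  rw [show j' + 1 + 1 = j' + 2 from rfl, show j' + 1 - 1 = j' from rfl, h]
  abel

lemma prod_le (n3 : ℕ) : ∀ k j, k ≤ j → ψv n3 j * ψv n3 k = ψv n3 (j+k) + ψv n3 (j-k) := by
  intro k
  induction k using Nat.strong_induction_on with
  | _ k ih =>
    match k with
    | 0 =>
      intro j _
      show ψv n3 j * ((2:ℂ) • 1) = _
      rw [Matrix.mul_smul, mul_one, Nat.add_zero, Nat.sub_zero, two_smul]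
    | 1 =>
      intro j hj
      exact ψv_mul_J n3 j hj
    | (k+2) =>
      intro j hj
      have e1 : ψv n3 j * ψv n3 (k+2) = ψv n3 j * (Φm n3 1 * ψv n3 (k+1)) - ψv n3 j * ψv n3 k := by
        rw [ψv_rec, mul_sub]
      have e2 : ψv n3 j * (Φm n3 1 * ψv n3 (k+1)) = (ψv n3 j * ψv n3 1) * ψv n3 (k+1) := by
        rw [mul_assoc]
        rfl
      rw [e1, e2, ψv_mul_J n3 j (by omega), add_mul,
        ih (k+1) (by omega) (j+1) (by omega), ih (k+1) (by omega) (j-1) (by omega),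
        ih k (by omega) j (by omega)]
      rw [show j+1+(k+1) = j+(k+2) by omega, show j+1-(k+1) = j-k by omega,
        show j-1+(k+1) = j+k by omega, show j-1-(k+1) = j-(k+2) by omega]
      abel

lemma ψv_prod (n3 : ℕ) (j k : ℕ) :
    ψv n3 j * ψv n3 k = ψv n3 (j+k) + ψv n3 ((j-k)+(k-j)) := by
  rcases le_total k j with h | h
  · rw [show (j-k)+(k-j) = j-k by omega]
    exact prod_le n3 k j h
  · have := prod_le n3 j k h
    have ht : ψv n3 j * ψv n3 k = (ψv n3 k * ψv n3 j)ᵀ := by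
      rw [Matrix.transpose_mul, ψv_transpose, ψv_transpose]
    rw [ht, this, Matrix.transpose_add, ψv_transpose, ψv_transpose]
    congr 1
    · exact congrArg _ (by omega)
    · exact congrArg _ (by omega)

lemma RM (n3 m : ℕ) (hm : 1 ≤ m) (h2 : 2 ≤ n3) :
    Φm n3 1 * NNm n3 m = NNm n3 (m+1) + NNm n3 (m-1) := by
  ext t q
  have ht := t.2
  have hq := q.2
  simp only [Matrix.mul_apply, NNm, Φm, Matrix.of_apply, Matrix.add_apply]
  have hrow : ∀ u : Fin n3, (φnat n3 1 t.1 u.1 : ℂ) * (nuN n3 m u.1 q.1 : ℂ)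
      = (if t.1+1 = u.1 then (1:ℂ) else 0) * (nuN n3 m u.1 q.1 : ℂ)
      + (if t.1-1 = u.1 ∧ 1 ≤ t.1 then (1:ℂ) else 0) * (nuN n3 m u.1 q.1 : ℂ)
      + (if t.1 = 0 ∧ u.1 = 0 then (1:ℂ) else 0) * (nuN n3 m u.1 q.1 : ℂ)
      + (if t.1+1 = n3 ∧ u.1+1 = n3 then (1:ℂ) else 0) * (nuN n3 m u.1 q.1 : ℂ) := by
    intro u
    have hu := u.2
    have hsplit : (φnat n3 1 t.1 u.1 : ℕ)
        = (if t.1+1 = u.1 then 1 else 0) + (if t.1-1 = u.1 ∧ 1 ≤ t.1 then 1 else 0)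
        + (if t.1 = 0 ∧ u.1 = 0 then 1 else 0) + (if t.1+1 = n3 ∧ u.1+1 = n3 then 1 else 0) := by
      unfold φnat
      split_ifs <;> omega
    rw [hsplit]
    push_cast
    ring
  rw [Finset.sum_congr rfl (fun u _ => hrow u), Finset.sum_add_distrib,
    Finset.sum_add_distrib, Finset.sum_add_distrib]
  have t1 : (∑ u : Fin n3, (if t.1+1 = u.1 then (1:ℂ) else 0) * (nuN n3 m u.1 q.1 : ℂ))
      = if t.1+1 < n3 then (nuN n3 m (t.1+1) q.1 : ℂ) else 0 := by
    by_cases h : t.1+1 < n3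
    · rw [if_pos h]
      exact sumIf (t.1+1) h _
    · rw [if_neg h]
      apply sumIf0 (fun u => t.1+1 = u)
      intro u hu hc; omega
  have t2 : (∑ u : Fin n3, (if t.1-1 = u.1 ∧ 1 ≤ t.1 then (1:ℂ) else 0) * (nuN n3 m u.1 q.1 : ℂ))
      = if 1 ≤ t.1 then (nuN n3 m (t.1-1) q.1 : ℂ) else 0 := by
    by_cases h : 1 ≤ t.1
    · rw [if_pos h]
      rw [Finset.sum_congr rfl (fun u _ => by
        rw [if_congr (show (t.1-1 = u.1 ∧ 1 ≤ t.1) ↔ (t.1-1 = u.1) by omega) rfl rfl])]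
      exact sumIf (t.1-1) (by omega) _
    · rw [if_neg h]
      apply sumIf0 (fun u => t.1-1 = u ∧ 1 ≤ t.1)
      intro u hu hc; omega
  have t3 : (∑ u : Fin n3, (if t.1 = 0 ∧ u.1 = 0 then (1:ℂ) else 0) * (nuN n3 m u.1 q.1 : ℂ))
      = if t.1 = 0 then (nuN n3 m 0 q.1 : ℂ) else 0 := by
    by_cases h : t.1 = 0
    · rw [if_pos h]
      rw [Finset.sum_congr rfl (fun u _ => by
        rw [if_congr (show (t.1 = 0 ∧ u.1 = 0) ↔ ((0:ℕ) = u.1) by omega) rfl rfl])]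
      exact sumIf 0 (by omega) _
    · rw [if_neg h]
      apply sumIf0 (fun u => t.1 = 0 ∧ u = 0)
      intro u hu hc; omega
  have t4 : (∑ u : Fin n3, (if t.1+1 = n3 ∧ u.1+1 = n3 then (1:ℂ) else 0) * (nuN n3 m u.1 q.1 : ℂ))
      = if t.1+1 = n3 then (nuN n3 m (n3-1) q.1 : ℂ) else 0 := by
    by_cases h : t.1+1 = n3
    · rw [if_pos h]
      rw [Finset.sum_congr rfl (fun u _ => by
        rw [if_congr (show (t.1+1 = n3 ∧ u.1+1 = n3) ↔ (n3-1 = u.1) by omega) rfl rfl])]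
      exact sumIf (n3-1) (by omega) _
    · rw [if_neg h]
      apply sumIf0 (fun u => t.1+1 = n3 ∧ u+1 = n3)
      intro u hu hc; omega
  rw [t1, t2, t3, t4]
  have hkey := keyR n3 m t.1 q.1 hm ht hq h2
  have hC := congrArg (Nat.cast : ℕ → ℂ) hkey
  push_cast at hC
  convert hC using 2 <;> simp

lemma NN0 (n3 : ℕ) : NNm n3 0 = (2:ℂ) • 1 := by
  ext t q
  have ht := t.2
  have hq := q.2
  simp only [NNm, Matrix.of_apply, Matrix.smul_apply, Matrix.one_apply, smul_eq_mul]
  unfold nuN ww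
  rw [cc_eq n3 _ (by omega) (by omega) (by omega), cc_eq n3 _ (by omega) (by omega) (by omega),
    cc_eq n3 _ (by omega) (by omega) (by omega), cc_eq n3 _ (by omega) (by omega) (by omega)]
  by_cases h : t = q
  · subst h
    rw [if_pos rfl]
    push_cast
    rw [if_pos (by omega), if_pos (by omega), if_neg (by omega), if_neg (by omega)]
    norm_num
  · rw [if_neg h]
    have : t.1 ≠ q.1 := fun hc => h (Fin.ext hc)
    rw [if_neg (by omega), if_neg (by omega), if_neg (by omega), if_neg (by omega)]
    norm_num

lemma Fm (n3 : ℕ) (h2 : 2 ≤ n3) : ∀ m, 1 ≤ m → ψv n3 m = NNm n3 m := by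
  have hNN1 : NNm n3 1 = Φm n3 1 := by
    ext t q
    have ht := t.2
    have hq := q.2
    simp only [NNm, Φm, Matrix.of_apply]
    congr 1
    unfold nuN ww φnat
    rw [cc_eq n3 _ (by omega) (by omega) (by omega), cc_eq n3 _ (by omega) (by omega) (by omega),
      cc_eq n3 _ (by omega) (by omega) (by omega), cc_eq n3 _ (by omega) (by omega) (by omega)]
    split_ifs <;> omega
  intro m
  induction m using Nat.twoStepInduction with
  | zero => intro h; exact absurd h (by omega)
  | one =>
    intro _
    show Φm n3 1 = NNm n3 1
    rw [hNN1]
  | more m ihm ihm1 =>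
    intro _
    rcases Nat.eq_zero_or_pos m with rfl | hm
    · -- m + 2 = 2
      have h := RM n3 1 le_rfl h2
      rw [hNN1] at h
      calc ψv n3 (0+2) = Φm n3 1 * Φm n3 1 - ((2:ℂ) • 1) := ψv_rec n3 0
        _ = (NNm n3 (1+1) + NNm n3 (1-1)) - NNm n3 (1-1) := by
            rw [h, ← NN0 n3]
        _ = NNm n3 (0+2) := by
            rw [show (1:ℕ)+1 = 0+2 from rfl, show (1:ℕ)-1 = 0 from rfl, add_sub_cancel_right]
    · have h := RM n3 (m+1) (by omega) h2
      rw [ψv_rec, ihm1 (by omega), ihm hm, h,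
        show m+1+1 = m+2 from rfl, show m+1-1 = m from rfl, add_sub_cancel_right]

/-! ### expansion of products in the basis -/


lemma cc_zero (n3 : ℕ) (x : ℤ) (hn : 0 < n3) (h1 : -(2*(n3:ℤ)) < x) (h2 : x < 2*(n3:ℤ)) :
    cc n3 x = if x = 0 then 1 else 0 := by
  rw [cc_eq n3 x hn (by omega) (by omega),
    if_congr (show (x = -(2*(n3:ℤ)) ∨ x = 0 ∨ x = 2*(n3:ℤ)) ↔ x = 0 by omega) rfl rfl]

lemma cc_p2 (n3 : ℕ) (x : ℤ) (hn : 0 < n3) (h1 : 0 < x) (h2 : x < 4*(n3:ℤ)) :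
    cc n3 x = if x = 2*(n3:ℤ) then 1 else 0 := by
  rw [cc_eq n3 x hn (by omega) (by omega),
    if_congr (show (x = -(2*(n3:ℤ)) ∨ x = 0 ∨ x = 2*(n3:ℤ)) ↔ x = 2*(n3:ℤ) by omega) rfl rfl]

lemma cc_m2 (n3 : ℕ) (x : ℤ) (hn : 0 < n3) (h1 : -(4*(n3:ℤ)) < x) (h2 : x < 0) :
    cc n3 x = if x = -(2*(n3:ℤ)) then 1 else 0 := by
  rw [cc_eq n3 x hn (by omega) (by omega),
    if_congr (show (x = -(2*(n3:ℤ)) ∨ x = 0 ∨ x = 2*(n3:ℤ)) ↔ x = -(2*(n3:ℤ)) by omega) rfl rfl]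

lemma nuN_eq_φnat (n3 s t q : ℕ) (hs1 : 1 ≤ s) (hs2 : s < n3) (ht : t < n3) (hq : q < n3) :
    nuN n3 s t q = φnat n3 s t q := by
  unfold nuN ww φnat
  rw [cc_zero n3 _ (by omega) (by omega) (by omega),
    if_congr (show ((t:ℤ) - q - s = 0) ↔ (t = q + s) by omega) rfl rfl,
    cc_zero n3 _ (by omega) (by omega) (by omega),
    if_congr (show ((t:ℤ) - q + s = 0) ↔ (q = t + s) by omega) rfl rfl,
    cc_zero n3 _ (by omega) (by omega) (by omega),
    if_congr (show ((t:ℤ) + q + 1 - s = 0) ↔ (t + q + 1 = s) by omega) rfl rfl,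
    cc_p2 n3 _ (by omega) (by omega) (by omega),
    if_congr (show ((t:ℤ) + q + 1 + s = 2*(n3:ℤ)) ↔ (t + q + 1 + s = 2*n3) by omega) rfl rfl]
  split_ifs <;> omega

lemma nuN_fold (n3 s t q : ℕ) (hs1 : n3 < s) (hs2 : s < 2*n3) (ht : t < n3) (hq : q < n3) :
    nuN n3 s t q = φnat n3 (2*n3 - s) t q := by
  unfold nuN ww φnat
  rw [cc_m2 n3 _ (by omega) (by omega) (by omega),
    if_congr (show ((t:ℤ) - q - s = -(2*(n3:ℤ))) ↔ (t + 2*n3 = q + s) by omega) rfl rfl,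
    cc_p2 n3 _ (by omega) (by omega) (by omega),
    if_congr (show ((t:ℤ) - q + s = 2*(n3:ℤ)) ↔ (t + s = q + 2*n3) by omega) rfl rfl,
    cc_zero n3 _ (by omega) (by omega) (by omega),
    if_congr (show ((t:ℤ) + q + 1 - s = 0) ↔ (t + q + 1 = s) by omega) rfl rfl,
    cc_p2 n3 _ (by omega) (by omega) (by omega),
    if_congr (show ((t:ℤ) + q + 1 + s = 2*(n3:ℤ)) ↔ (t + q + 1 + s = 2*n3) by omega) rfl rfl]
  split_ifs <;> omega

lemma nuN_mid (n3 t q : ℕ) (h2 : 2 ≤ n3) (ht : t < n3) (hq : q < n3) :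
    nuN n3 n3 t q = 2 * (if t+q+1 = n3 then 1 else 0) := by
  unfold nuN ww
  rw [cc_zero n3 _ (by omega) (by omega) (by omega),
    if_congr (show ((t:ℤ) - q - n3 = 0) ↔ (t = q + n3) by omega) rfl rfl,
    cc_zero n3 _ (by omega) (by omega) (by omega),
    if_congr (show ((t:ℤ) - q + n3 = 0) ↔ (q = t + n3) by omega) rfl rfl,
    cc_zero n3 _ (by omega) (by omega) (by omega),
    if_congr (show ((t:ℤ) + q + 1 - n3 = 0) ↔ (t + q + 1 = n3) by omega) rfl rfl,
    cc_p2 n3 _ (by omega) (by omega) (by omega),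
    if_congr (show ((t:ℤ) + q + 1 + n3 = 2*(n3:ℤ)) ↔ (t + q + 1 = n3) by omega) rfl rfl]
  split_ifs <;> omega

lemma ψ_eq_Φ (n3 s : ℕ) (h2 : 2 ≤ n3) (hs1 : 1 ≤ s) (hs2 : s < n3) :
    ψv n3 s = Φm n3 s := by
  rw [Fm n3 h2 s hs1]
  ext t q
  simp only [NNm, Φm, Matrix.of_apply]
  exact congrArg _ (nuN_eq_φnat n3 s t.1 q.1 hs1 hs2 t.2 q.2)

lemma ψ_fold (n3 s : ℕ) (h2 : 2 ≤ n3) (hs1 : n3 < s) (hs2 : s < 2*n3) :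
    ψv n3 s = Φm n3 (2*n3 - s) := by
  rw [Fm n3 h2 s (by omega)]
  ext t q
  simp only [NNm, Φm, Matrix.of_apply]
  exact congrArg _ (nuN_fold n3 s t.1 q.1 hs1 hs2 t.2 q.2)

lemma npow_eq (a b : ℕ) (h : a % 2 = b % 2) : (-1:ℂ)^a = (-1:ℂ)^b := by
  rcases Nat.even_or_odd a with ha | ha
  · rw [ha.neg_one_pow, (Nat.even_iff.mpr (by rw [← h]; exact Nat.even_iff.mp ha)).neg_one_pow]
  · rw [ha.neg_one_pow, (Nat.odd_iff.mpr (by rw [← h]; exact Nat.odd_iff.mp ha)).neg_one_pow]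

lemma npow_ne (a b : ℕ) (h : a % 2 ≠ b % 2) : (-1:ℂ)^a = -(-1:ℂ)^b := by
  rcases Nat.even_or_odd a with ha | ha
  · rw [ha.neg_one_pow, (Nat.odd_iff.mpr (by have := Nat.even_iff.mp ha; omega)).neg_one_pow]
    norm_num
  · rw [ha.neg_one_pow, (Nat.even_iff.mpr (by have := Nat.odd_iff.mp ha; omega)).neg_one_pow]

lemma sum_basis {n3 : ℕ} (v : Fin n3) (c : ℂ) (F : Fin n3 → Matrix (Fin n3) (Fin n3) ℂ) :
    (∑ m : Fin n3, (if m = v then c else 0) • F m) = c • F v := by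
  rw [Finset.sum_eq_single v]
  · rw [if_pos rfl]
  · intro b _ hb
    rw [if_neg hb, zero_smul]
  · intro h; exact absurd (Finset.mem_univ _) h

lemma Φm_zero (n3 : ℕ) : Φm n3 0 = 1 := by
  ext t q
  simp only [Φm, Matrix.of_apply, Matrix.one_apply]
  have ht := t.2
  have hq := q.2
  have : φnat n3 0 t.1 q.1 = if t = q then 1 else 0 := by
    unfold φnat
    by_cases h : t = q
    · rw [if_pos h, if_pos (by rw [h]; omega), if_neg (by omega), if_neg (by omega)]
    · rw [if_neg h, if_neg (fun hc => h (Fin.ext (by omega))), if_neg (by omega),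
        if_neg (by omega)]
  rw [this]
  split_ifs <;> simp

lemma ψ_mid (n3 : ℕ) (h2 : 2 ≤ n3) :
    ψv n3 n3 = ∑ m : Fin n3, ((2:ℂ) * (-1:ℂ)^(n3-1-m.1)) • Φm n3 m.1 := by
  rw [Fm n3 h2 n3 (by omega)]
  ext t q
  have ht := t.2
  have hq := q.2
  simp only [NNm, Φm, Matrix.of_apply, Matrix.sum_apply, Matrix.smul_apply, smul_eq_mul]
  rw [nuN_mid n3 t.1 q.1 h2 ht hq]
  set d : ℕ := (t.1 - q.1) + (q.1 - t.1) with hd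
  have hsplit : ∀ m : Fin n3, ((2:ℂ) * (-1:ℂ)^(n3-1-m.1)) * (φnat n3 m.1 t.1 q.1 : ℂ)
      = (if d = m.1 then (1:ℂ) else 0) * ((2:ℂ) * (-1:ℂ)^(n3-1-m.1))
      + (if t.1 + q.1 + 2 ≤ n3 ∧ t.1 + q.1 + 1 = m.1 then (1:ℂ) else 0) * ((2:ℂ) * (-1:ℂ)^(n3-1-m.1))
      + (if n3 ≤ t.1 + q.1 ∧ t.1 + q.1 + 1 + m.1 = 2*n3 then (1:ℂ) else 0) * ((2:ℂ) * (-1:ℂ)^(n3-1-m.1)) := by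
    intro m
    unfold φnat
    push_cast
    ring
  rw [Finset.sum_congr rfl (fun m _ => hsplit m), Finset.sum_add_distrib, Finset.sum_add_distrib]
  have s1 : (∑ m : Fin n3, (if d = m.1 then (1:ℂ) else 0) * ((2:ℂ) * (-1:ℂ)^(n3-1-m.1)))
      = (2:ℂ) * (-1:ℂ)^(n3-1-d) := by
    exact sumIf d (by omega) _
  by_cases h1 : t.1 + q.1 + 2 ≤ n3
  · have s2 : (∑ m : Fin n3, (if t.1 + q.1 + 2 ≤ n3 ∧ t.1 + q.1 + 1 = m.1 then (1:ℂ) else 0) * ((2:ℂ) * (-1:ℂ)^(n3-1-m.1)))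
        = (2:ℂ) * (-1:ℂ)^(n3-1-(t.1+q.1+1)) := by
      rw [Finset.sum_congr rfl (fun m _ => by
        rw [if_congr (show (t.1+q.1+2 ≤ n3 ∧ t.1+q.1+1 = m.1) ↔ (t.1+q.1+1 = m.1) by omega) rfl rfl])]
      exact sumIf (t.1+q.1+1) (by omega) _
    have s3 : (∑ m : Fin n3, (if n3 ≤ t.1 + q.1 ∧ t.1 + q.1 + 1 + m.1 = 2*n3 then (1:ℂ) else 0) * ((2:ℂ) * (-1:ℂ)^(n3-1-m.1))) = 0 := by
      apply sumIf0 (fun m => n3 ≤ t.1 + q.1 ∧ t.1 + q.1 + 1 + m = 2*n3)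
      intro m _ hc; omega
    rw [s1, s2, s3, if_neg (by omega), add_zero]
    have hp := npow_ne (n3-1-d) (n3-1-(t.1+q.1+1)) (by omega)
    rw [hp]
    push_cast
    ring
  · by_cases h0 : t.1 + q.1 + 1 = n3
    · have s2 : (∑ m : Fin n3, (if t.1 + q.1 + 2 ≤ n3 ∧ t.1 + q.1 + 1 = m.1 then (1:ℂ) else 0) * ((2:ℂ) * (-1:ℂ)^(n3-1-m.1))) = 0 := by
        apply sumIf0 (fun m => t.1 + q.1 + 2 ≤ n3 ∧ t.1 + q.1 + 1 = m)
        intro m _ hc; omega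
      have s3 : (∑ m : Fin n3, (if n3 ≤ t.1 + q.1 ∧ t.1 + q.1 + 1 + m.1 = 2*n3 then (1:ℂ) else 0) * ((2:ℂ) * (-1:ℂ)^(n3-1-m.1))) = 0 := by
        apply sumIf0 (fun m => n3 ≤ t.1 + q.1 ∧ t.1 + q.1 + 1 + m = 2*n3)
        intro m _ hc; omega
      rw [s1, s2, s3, if_pos h0, add_zero, add_zero]
      have hp := npow_eq (n3-1-d) 0 (by omega)
      rw [hp]
      norm_num
    · have h3 : n3 ≤ t.1 + q.1 := by omega
      have s2 : (∑ m : Fin n3, (if t.1 + q.1 + 2 ≤ n3 ∧ t.1 + q.1 + 1 = m.1 then (1:ℂ) else 0) * ((2:ℂ) * (-1:ℂ)^(n3-1-m.1))) = 0 := by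
        apply sumIf0 (fun m => t.1 + q.1 + 2 ≤ n3 ∧ t.1 + q.1 + 1 = m)
        intro m _ hc; omega
      have s3 : (∑ m : Fin n3, (if n3 ≤ t.1 + q.1 ∧ t.1 + q.1 + 1 + m.1 = 2*n3 then (1:ℂ) else 0) * ((2:ℂ) * (-1:ℂ)^(n3-1-m.1)))
          = (2:ℂ) * (-1:ℂ)^(n3-1-(2*n3-(t.1+q.1)-1)) := by
        rw [Finset.sum_congr rfl (fun m _ => by
          rw [if_congr (show (n3 ≤ t.1+q.1 ∧ t.1+q.1+1+m.1 = 2*n3) ↔ (2*n3-(t.1+q.1)-1 = m.1) by omega) rfl rfl])]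
        exact sumIf (2*n3-(t.1+q.1)-1) (by omega) _
      rw [s1, s2, s3, if_neg (by omega), add_zero]
      have hp := npow_ne (n3-1-d) (n3-1-(2*n3-(t.1+q.1)-1)) (by omega)
      rw [hp]
      push_cast
      ring

lemma span (n3 s : ℕ) (h2 : 2 ≤ n3) (hs : s ≤ 2*n3 - 2) :
    ∃ w : Fin n3 → ℂ, ψv n3 s = ∑ m : Fin n3, w m • Φm n3 m.1 := by
  rcases Nat.eq_zero_or_pos s with rfl | hs1
  · refine ⟨fun m => if m = (⟨0, by omega⟩ : Fin n3) then 2 else 0, ?_⟩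
    rw [sum_basis, Φm_zero]
    rfl
  · rcases Nat.lt_or_ge s n3 with h | h
    · refine ⟨fun m => if m = (⟨s, h⟩ : Fin n3) then 1 else 0, ?_⟩
      rw [sum_basis, one_smul]
      exact ψ_eq_Φ n3 s h2 hs1 h
    · rcases Nat.eq_or_lt_of_le h with heq | hlt
      · refine ⟨fun m => (2:ℂ) * (-1:ℂ)^(n3-1-m.1), ?_⟩
        rw [← heq]
        exact ψ_mid n3 h2
      · refine ⟨fun m => if m = (⟨2*n3 - s, by omega⟩ : Fin n3) then 1 else 0, ?_⟩
        rw [sum_basis, one_smul]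
        exact ψ_fold n3 s h2 hlt (by omega)

lemma pairSpan (n3 : ℕ) (j k : Fin n3) :
    ∃ w : Fin n3 → ℂ, Φm n3 j.1 * Φm n3 k.1 = ∑ m : Fin n3, w m • Φm n3 m.1 := by
  rcases Nat.eq_zero_or_pos j.1 with hj | hj
  · refine ⟨fun m => if m = k then 1 else 0, ?_⟩
    rw [sum_basis, one_smul, hj, Φm_zero, one_mul]
  · rcases Nat.eq_zero_or_pos k.1 with hk | hk
    · refine ⟨fun m => if m = j then 1 else 0, ?_⟩
      rw [sum_basis, one_smul, hk, Φm_zero, mul_one]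
    · have h2 : 2 ≤ n3 := by have := j.2; omega
      have hΦ : Φm n3 j.1 * Φm n3 k.1 = ψv n3 (j.1+k.1) + ψv n3 ((j.1-k.1)+(k.1-j.1)) := by
        rw [← ψ_eq_Φ n3 j.1 h2 hj j.2, ← ψ_eq_Φ n3 k.1 h2 hk k.2]
        exact ψv_prod n3 j.1 k.1
      obtain ⟨w1, hw1⟩ := span n3 (j.1+k.1) h2 (by have := j.2; have := k.2; omega)
      obtain ⟨w2, hw2⟩ := span n3 ((j.1-k.1)+(k.1-j.1)) h2 (by have := j.2; have := k.2; omega)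
      refine ⟨fun m => w1 m + w2 m, ?_⟩
      rw [hΦ, hw1, hw2, ← Finset.sum_add_distrib]
      apply Finset.sum_congr rfl
      intro m _
      rw [add_smul]

/-! ### closure: product of structured matrices is structured -/

lemma SM_mul {n1 n2 l n3 : ℕ} (A : Tensor n1 n2 n3) (B : Tensor n2 l n3) :
    ∃ D : Tensor n1 l n3, SM A * SM B = SM D := by
  choose w hw using fun (j k : Fin n3) => pairSpan n3 j k
  refine ⟨fun m => Matrix.of fun a b => ∑ j : Fin n3, ∑ k : Fin n3, w j k m * (A j * B k) a b, ?_⟩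
  ext ⟨t, a⟩ ⟨q, b⟩
  rw [Matrix.mul_apply]
  rw [Fintype.sum_prod_type]
  have step1 : ∀ u : Fin n3, ∀ c : Fin n2,
      SM A (t, a) (u, c) * SM B (u, c) (q, b)
      = ∑ j : Fin n3, ∑ k : Fin n3,
          ((φnat n3 j.1 t.1 u.1 : ℂ) * (φnat n3 k.1 u.1 q.1 : ℂ)) * (A j a c * B k c b) := by
    intro u c
    show (∑ j : Fin n3, (φnat n3 j.1 t.1 u.1 : ℂ) * A j a c)
        * (∑ k : Fin n3, (φnat n3 k.1 u.1 q.1 : ℂ) * B k c b) = _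
    rw [Finset.sum_mul_sum]
    apply Finset.sum_congr rfl
    intro j _
    apply Finset.sum_congr rfl
    intro k _
    ring
  rw [Finset.sum_congr rfl (fun u _ => Finset.sum_congr rfl (fun c _ => step1 u c))]
  -- swap sums: ∑ u ∑ c ∑ j ∑ k → ∑ j ∑ k ∑ u ∑ c
  rw [Finset.sum_congr rfl (fun u (_ : u ∈ Finset.univ) => Finset.sum_comm (s := Finset.univ)
    (t := Finset.univ) (f := fun c j => ∑ k : Fin n3,
      ((φnat n3 j.1 t.1 u.1 : ℂ) * (φnat n3 k.1 u.1 q.1 : ℂ)) * (A j a c * B k c b)))]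
  rw [Finset.sum_comm]
  have step2 : ∀ j : Fin n3,
      (∑ u : Fin n3, ∑ c : Fin n2, ∑ k : Fin n3,
        ((φnat n3 j.1 t.1 u.1 : ℂ) * (φnat n3 k.1 u.1 q.1 : ℂ)) * (A j a c * B k c b))
      = ∑ k : Fin n3, (Φm n3 j.1 * Φm n3 k.1) t q * (A j * B k) a b := by
    intro j
    rw [Finset.sum_congr rfl (fun u (_ : u ∈ Finset.univ) => Finset.sum_comm (s := Finset.univ)
      (t := Finset.univ) (f := fun c k =>
        ((φnat n3 j.1 t.1 u.1 : ℂ) * (φnat n3 k.1 u.1 q.1 : ℂ)) * (A j a c * B k c b)))]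
    rw [Finset.sum_comm]
    apply Finset.sum_congr rfl
    intro k _
    rw [Matrix.mul_apply, Matrix.mul_apply]
    show _ = (∑ u : Fin n3, Φm n3 j.1 t u * Φm n3 k.1 u q) * (∑ c : Fin n2, A j a c * B k c b)
    rw [Finset.sum_mul_sum]
    apply Finset.sum_congr rfl
    intro u _
    apply Finset.sum_congr rfl
    intro c _
    rfl
  rw [Finset.sum_congr rfl (fun j _ => step2 j)]
  -- use hw
  have step3 : ∀ j k : Fin n3, (Φm n3 j.1 * Φm n3 k.1) t q
      = ∑ m : Fin n3, w j k m * (φnat n3 m.1 t.1 q.1 : ℂ) := by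
    intro j k
    rw [hw j k]
    rw [Matrix.sum_apply]
    apply Finset.sum_congr rfl
    intro m _
    rw [Matrix.smul_apply, smul_eq_mul]
    rfl
  show _ = ∑ m : Fin n3, (φnat n3 m.1 t.1 q.1 : ℂ)
      * (∑ j : Fin n3, ∑ k : Fin n3, w j k m * (A j * B k) a b)
  calc (∑ j : Fin n3, ∑ k : Fin n3, (Φm n3 j.1 * Φm n3 k.1) t q * (A j * B k) a b)
      = ∑ j : Fin n3, ∑ k : Fin n3, ∑ m : Fin n3,
          (φnat n3 m.1 t.1 q.1 : ℂ) * (w j k m * (A j * B k) a b) := by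
        apply Finset.sum_congr rfl
        intro j _
        apply Finset.sum_congr rfl
        intro k _
        rw [step3 j k, Finset.sum_mul]
        apply Finset.sum_congr rfl
        intro m _
        ring
    _ = ∑ m : Fin n3, ∑ j : Fin n3, ∑ k : Fin n3,
          (φnat n3 m.1 t.1 q.1 : ℂ) * (w j k m * (A j * B k) a b) := by
        rw [Finset.sum_congr rfl (fun j (_ : j ∈ Finset.univ) => Finset.sum_comm
          (s := Finset.univ) (t := Finset.univ)
          (f := fun k m => (φnat n3 m.1 t.1 q.1 : ℂ) * (w j k m * (A j * B k) a b)))]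
        rw [Finset.sum_comm]
    _ = ∑ m : Fin n3, (φnat n3 m.1 t.1 q.1 : ℂ)
          * (∑ j : Fin n3, ∑ k : Fin n3, w j k m * (A j * B k) a b) := by
        apply Finset.sum_congr rfl
        intro m _
        rw [Finset.mul_sum]
        apply Finset.sum_congr rfl
        intro j _
        rw [Finset.mul_sum]

lemma matT_cmul {n1 n2 l n3 : ℕ} (A : Tensor n1 n2 n3) (B : Tensor n2 l n3) :
    matT (cmul A B) = matT A * matT B := by
  unfold cmul
  obtain ⟨D, hD⟩ := SM_mul A B
  rw [L1 A, L1 B, hD, L2, L1]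

/-! ### blocks -/

def EL (n3 r s : ℕ) : (Fin n3 × Fin (r+s)) ≃ ((Fin n3 × Fin r) ⊕ (Fin n3 × Fin s)) :=
  (Equiv.prodCongr (Equiv.refl (Fin n3)) finSumFinEquiv.symm).trans
    (Equiv.prodSumDistrib (Fin n3) (Fin r) (Fin s))

lemma matT_block {r s t u n3 : ℕ} (A : Tensor r t n3) (B : Tensor r u n3)
    (C : Tensor s t n3) (D : Tensor s u n3) :
    matT (blockT A B C D) =
      ((Matrix.fromBlocks (matT A) (matT B) (matT C) (matT D)).submatrix
        (EL n3 r s) (EL n3 t u)) := by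
  ext ⟨i, x⟩ ⟨j, y⟩
  rcases hx : finSumFinEquiv.symm x with a | a <;> rcases hy : finSumFinEquiv.symm y with b | b <;>
    · simp only [matT, blockT, Matrix.submatrix_apply, EL, Equiv.trans_apply,
        Equiv.prodCongr_apply, Equiv.coe_refl, Prod.map, id_eq, hx, hy,
        Equiv.prodSumDistrib_apply_left, Equiv.prodSumDistrib_apply_right,
        Matrix.reindex_apply, Matrix.fromBlocks,
        Matrix.of_apply, Sum.elim_inl, Sum.elim_inr]

end CHS

open Tensor CHS
open scoped Matrix

set_option maxHeartbeats 1000000 in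
theorem stmt9 {r s n3 : ℕ} (A U : Tensor (r + s) (r + s) n3)
    (Sr Si K : Tensor r r n3) (L : Tensor r s n3)
    (hU : Unitary U) (hSi : IsInverse Sr Si)
    (hKL : cmul K (conjT K) + cmul L (conjT L) = idT)
    (hA : A = cmul (cmul U (blockT (cmul Sr K) (cmul Sr L) 0 0)) (conjT U)) :
    IsMP A (cmul (cmul U (blockT (cmul (conjT K) Si) 0 (cmul (conjT L) Si) 0)) (conjT U)) := by
  set X := cmul (cmul U (blockT (cmul (conjT K) Si) 0 (cmul (conjT L) Si) 0)) (conjT U) with hX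
  set MU := matT U with hMU
  set MS := matT Sr with hMS
  set MSi := matT Si with hMSi
  set MK := matT K with hMK
  set ML := matT L with hML
  set E := EL n3 r s with hE
  set P : Matrix ((Fin n3 × Fin r) ⊕ (Fin n3 × Fin s)) ((Fin n3 × Fin r) ⊕ (Fin n3 × Fin s)) ℂ :=
    Matrix.fromBlocks (MS * MK) (MS * ML) 0 0 with hP
  set Q : Matrix ((Fin n3 × Fin r) ⊕ (Fin n3 × Fin s)) ((Fin n3 × Fin r) ⊕ (Fin n3 × Fin s)) ℂ :=
    Matrix.fromBlocks (MKᴴ * MSi) 0 (MLᴴ * MSi) 0 with hQ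
  have hU1 : MUᴴ * MU = 1 := by
    have h := congrArg matT hU.1
    rwa [matT_cmul, matT_conjT, matT_idT] at h
  have hS1 : MS * MSi = 1 := by
    have h := congrArg matT hSi.1
    rwa [matT_cmul, matT_idT] at h
  have hS2 : MSi * MS = 1 := by
    have h := congrArg matT hSi.2
    rwa [matT_cmul, matT_idT] at h
  have hKL' : MK * MKᴴ + ML * MLᴴ = 1 := by
    have h := congrArg matT hKL
    rwa [matT_add, matT_cmul, matT_cmul, matT_conjT, matT_conjT, matT_idT] at h
  have hMA : matT A = MU * P.submatrix E E * MUᴴ := by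
    rw [hA, matT_cmul, matT_cmul, matT_conjT, matT_block, matT_cmul, matT_cmul,
      matT_zero, matT_zero]
  have hMX : matT X = MU * Q.submatrix E E * MUᴴ := by
    rw [hX, matT_cmul, matT_cmul, matT_conjT, matT_block, matT_cmul, matT_cmul,
      matT_conjT, matT_conjT, matT_zero, matT_zero]
  have hsand : ∀ Y Z : Matrix ((Fin n3 × Fin r) ⊕ (Fin n3 × Fin s)) ((Fin n3 × Fin r) ⊕ (Fin n3 × Fin s)) ℂ,
      (MU * Y.submatrix E E * MUᴴ) * (MU * Z.submatrix E E * MUᴴ)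
        = MU * (Y * Z).submatrix E E * MUᴴ := by
    intro Y Z
    rw [← Matrix.submatrix_mul_equiv Y Z E E E]
    calc (MU * Y.submatrix E E * MUᴴ) * (MU * Z.submatrix E E * MUᴴ)
        = MU * Y.submatrix E E * (MUᴴ * MU * (Z.submatrix E E * MUᴴ)) := by
          simp only [Matrix.mul_assoc]
      _ = MU * Y.submatrix E E * (Z.submatrix E E * MUᴴ) := by
          rw [hU1, Matrix.one_mul]
      _ = MU * (Y.submatrix E E * Z.submatrix E E) * MUᴴ := by
          simp only [Matrix.mul_assoc]
  have hherm : ∀ Y : Matrix ((Fin n3 × Fin r) ⊕ (Fin n3 × Fin s)) ((Fin n3 × Fin r) ⊕ (Fin n3 × Fin s)) ℂ,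
      Yᴴ = Y → (MU * Y.submatrix E E * MUᴴ)ᴴ = MU * Y.submatrix E E * MUᴴ := by
    intro Y hY
    rw [Matrix.conjTranspose_mul, Matrix.conjTranspose_mul,
      Matrix.conjTranspose_conjTranspose, Matrix.conjTranspose_submatrix, hY,
      Matrix.mul_assoc]
  have hPQ : P * Q = Matrix.fromBlocks 1 0 0 0 := by
    rw [hP, hQ, Matrix.fromBlocks_multiply]
    have hTL : MS * MK * (MKᴴ * MSi) + MS * ML * (MLᴴ * MSi) = 1 := by
      have e : MS * MK * (MKᴴ * MSi) + MS * ML * (MLᴴ * MSi)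
          = MS * ((MK * MKᴴ + ML * MLᴴ) * MSi) := by
        rw [Matrix.add_mul, Matrix.mul_add]
        simp only [Matrix.mul_assoc]
      rw [e, hKL', Matrix.one_mul, hS1]
    rw [hTL]
    congr 1 <;> simp
  have hsMS : ∀ {p : Type} (W : Matrix (Fin n3 × Fin r) p ℂ), MSi * (MS * W) = W := by
    intro p W
    rw [← Matrix.mul_assoc, hS2, Matrix.one_mul]
  have hQP : Q * P = Matrix.fromBlocks (MKᴴ * MK) (MKᴴ * ML) (MLᴴ * MK) (MLᴴ * ML) := by
    rw [hP, hQ, Matrix.fromBlocks_multiply]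
    simp only [Matrix.mul_assoc, hsMS, Matrix.zero_mul, Matrix.mul_zero, add_zero,
      zero_add]
  have hPQP : (P * Q) * P = P := by
    rw [hPQ, hP, Matrix.fromBlocks_multiply]
    simp
  have hQPQ : (Q * P) * Q = Q := by
    rw [hQP, hQ, Matrix.fromBlocks_multiply]
    have e1 : MKᴴ * MK * (MKᴴ * MSi) + MKᴴ * ML * (MLᴴ * MSi)
        = MKᴴ * ((MK * MKᴴ + ML * MLᴴ) * MSi) := by
      rw [Matrix.add_mul, Matrix.mul_add]
      simp only [Matrix.mul_assoc]
    have e2 : MLᴴ * MK * (MKᴴ * MSi) + MLᴴ * ML * (MLᴴ * MSi)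
        = MLᴴ * ((MK * MKᴴ + ML * MLᴴ) * MSi) := by
      rw [Matrix.add_mul, Matrix.mul_add]
      simp only [Matrix.mul_assoc]
    rw [e1, e2, hKL', Matrix.one_mul]
    congr 1 <;> simp
  have hPQH : (P * Q)ᴴ = P * Q := by
    rw [hPQ, Matrix.fromBlocks_conjTranspose]
    simp
  have hQPH : (Q * P)ᴴ = Q * P := by
    rw [hQP, Matrix.fromBlocks_conjTranspose]
    simp [Matrix.conjTranspose_mul]
  refine ⟨?_, ?_, ?_, ?_⟩
  · apply matT_inj
    rw [matT_cmul, matT_cmul, hMA, hMX, hsand P Q, hsand (P*Q) P, hPQP]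
  · apply matT_inj
    rw [matT_cmul, matT_cmul, hMA, hMX, hsand Q P, hsand (Q*P) Q, hQPQ]
  · apply matT_inj
    rw [matT_conjT, matT_cmul, hMA, hMX, hsand P Q]
    exact hherm (P*Q) hPQH
  · apply matT_inj
    rw [matT_conjT, matT_cmul, hMA, hMX, hsand Q P]
    exact hherm (Q*P) hQPH
end
end

section
/- Let A ∈ ℂ^{n1×n2×n3} and G ∈ ℂ^{n2×n1×n3}. Suppose G = U *_c [[S_r, O],[O, O]] *_c V^H, where U ∈ ℂ^{n2×n2×n3} and V ∈ ℂ^{n1×n1×n3} are unitary tensors and S_r ∈ ℂ^{r×r×n3} is an invertible F-diagonal tensor, and suppose A = V *_c [[X, B],[C, E]] *_c U^H with X ∈ ℂ^{r×r×n3}. Then the inverse of A along G exists if and only if X is an invertible tensor, in which case A^{∥G} = U *_c [[X^{-1}, O],[O, O]] *_c V^H. -/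
noncomputable section

open Tensor


theorem telescope_aux (g : ℕ → ℂ) (i n : ℕ) (hn : i + 1 ≤ n) :
    ∑ t ∈ Finset.Ico i n, ((-1:ℂ)^(t-i) * (g t + if t+2 ≤ n then g (t+1) else 0)) = g i := by
  induction n, hn using Nat.le_induction with
  | base => simp
  | succ n hn ih =>
    rw [Finset.sum_Ico_succ_top (by omega)]
    have h1 : ∑ t ∈ Finset.Ico i n, ((-1:ℂ)^(t-i) * (g t + if t+2 ≤ n+1 then g (t+1) else 0))
        = (∑ t ∈ Finset.Ico i n, ((-1:ℂ)^(t-i) * (g t + if t+2 ≤ n then g (t+1) else 0)))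
          + (-1:ℂ)^(n-1-i) * g n := by
      have h2 : ∀ t ∈ Finset.Ico i n,
          ((-1:ℂ)^(t-i) * (g t + if t+2 ≤ n+1 then g (t+1) else 0))
          = ((-1:ℂ)^(t-i) * (g t + if t+2 ≤ n then g (t+1) else 0))
            + (if t = n-1 then (-1:ℂ)^(t-i) * g (t+1) else 0) := by
        intro t ht
        simp only [Finset.mem_Ico] at ht
        by_cases h : t = n - 1
        · subst h
          have e1 : n - 1 + 2 ≤ n + 1 := by omega
          have e2 : ¬ (n - 1 + 2 ≤ n) := by omega
          simp [e1, e2]; ring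
        · have e3 : (t+2 ≤ n+1) ↔ (t+2 ≤ n) := by omega
          simp [e3, h]
      rw [Finset.sum_congr rfl h2, Finset.sum_add_distrib, Finset.sum_ite_eq' _ (n-1)]
      have : n - 1 ∈ Finset.Ico i n := by simp; omega
      simp [this]
      have : n - 1 + 1 = n := by omega
      rw [this]
    rw [h1, ih, if_neg (by omega)]
    have : n - i = (n - 1 - i) + 1 := by omega
    rw [this]; ring

namespace Tensor
variable {n1 n2 n3 l : ℕ}

theorem tenT_matT (A : Tensor n1 n2 n3) : tenT (matT A) = A := by
  funext i
  ext a b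
  set g : ℕ → ℂ := fun m => if h : m < n3 then A ⟨m, h⟩ a b else 0 with hg
  have key : ∀ t : Fin n3, matT A (t, a) (⟨0, i.pos⟩, b)
      = g t.1 + (if t.1 + 2 ≤ n3 then g (t.1+1) else 0) := by
    intro t
    simp only [matT, hg, Nat.sub_zero, Nat.zero_sub, Nat.add_zero]
    rw [dif_pos t.isLt]
    congr 1
    · by_cases h : t.1 + 2 ≤ n3
      · rw [dif_pos (by omega : t.1 + 0 + 2 ≤ n3), if_pos h, dif_pos (by omega)]
      · rw [dif_neg (by omega : ¬ (t.1 + 0 + 2 ≤ n3)), if_neg h, dif_neg (by omega)]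
  show (∑ t : Fin n3, if i.1 ≤ t.1 then (-1 : ℂ) ^ (t.1 - i.1) * matT A (t, a) (⟨0, i.pos⟩, b) else 0) = _
  calc (∑ t : Fin n3, if i.1 ≤ t.1 then (-1 : ℂ) ^ (t.1 - i.1) * matT A (t, a) (⟨0, i.pos⟩, b) else 0)
      = ∑ t ∈ Finset.range n3, if i.1 ≤ t then (-1:ℂ)^(t - i.1) * (g t + if t+2 ≤ n3 then g (t+1) else 0) else 0 := by
        rw [Finset.sum_range fun t => _]
        exact Finset.sum_congr rfl fun t _ => by rw [key t]
    _ = ∑ t ∈ (Finset.range n3).filter (fun t => i.1 ≤ t), ((-1:ℂ)^(t - i.1) * (g t + if t+2 ≤ n3 then g (t+1) else 0)) := by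
        rw [Finset.sum_filter]
    _ = ∑ t ∈ Finset.Ico i.1 n3, ((-1:ℂ)^(t - i.1) * (g t + if t+2 ≤ n3 then g (t+1) else 0)) := by
        congr 1
        ext t
        simp [Finset.mem_Ico, and_comm]
    _ = g i.1 := telescope_aux g i.1 n3 i.isLt
    _ = A i a b := by rw [hg]; simp [dif_pos i.isLt]

end Tensor

namespace Tensor
variable {n1 n2 n3 l : ℕ}

/-- symmetric periodic extension of the slices -/
def extT (A : Tensor n1 n2 n3) (d : ℤ) : Matrix (Fin n1) (Fin n2) ℂ :=
  if h : (min (d % (2*n3)).toNat (2*n3 - (d % (2*n3)).toNat)) < n3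
  then A ⟨_, h⟩ else 0

theorem extT_emod (A : Tensor n1 n2 n3) (d : ℤ) :
    extT A (d % (2*n3)) = extT A d := by
  simp only [extT, Int.emod_emod_of_dvd _ dvd_rfl]

theorem extT_natCast (hn : 0 < n3) (A : Tensor n1 n2 n3) (e : ℕ) (he : e < 2*n3) :
    extT A e = if h : min e (2*n3 - e) < n3 then A ⟨min e (2*n3-e), h⟩ else 0 := by
  have h1 : ((e : ℤ)) % (2*n3) = e := Int.emod_eq_of_lt (by positivity) (by exact_mod_cast he)
  simp only [extT, h1, Int.toNat_natCast]

theorem extT_neg (hn : 0 < n3) (A : Tensor n1 n2 n3) (d : ℤ) :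
    extT A (-d) = extT A d := by
  have hm : (0:ℤ) < 2*n3 := by positivity
  have h1 : 0 ≤ d % (2*n3) := Int.emod_nonneg d (by omega)
  have h2 : d % (2*n3) < 2*n3 := Int.emod_lt_of_pos d hm
  have h3 : 0 ≤ (-d) % (2*n3) := Int.emod_nonneg _ (by omega)
  have h4 : (-d) % (2*n3) < 2*n3 := Int.emod_lt_of_pos _ hm
  have hdvd : (2*(n3:ℤ)) ∣ (d % (2*n3) + (-d) % (2*n3)) := by
    have e1 := Int.emod_add_mul_ediv d (2*n3)
    have e2 := Int.emod_add_mul_ediv (-d) (2*n3)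
    exact ⟨-(d / (2*n3)) - ((-d) / (2*n3)), by linarith⟩
  obtain ⟨k, hk⟩ := hdvd
  have hk0 : k = 0 ∨ k = 1 := by
    rcases lt_trichotomy k 0 with h | h | h
    · nlinarith
    · left; exact h
    · right; nlinarith
  have key : min ((-d) % (2*n3)).toNat (2*n3 - ((-d) % (2*n3)).toNat)
      = min (d % (2*n3)).toNat (2*n3 - (d % (2*n3)).toNat) := by
    have b1 : ((d % (2*n3)).toNat : ℤ) = d % (2*n3) := Int.toNat_of_nonneg h1
    have b2 : (((-d) % (2*n3)).toNat : ℤ) = (-d) % (2*n3) := Int.toNat_of_nonneg h3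
    rcases hk0 with h | h <;> subst h <;> omega
  simp only [extT, key]

section withPos
variable [NeZero (2*n3)]

/-- extension as a function on `ZMod (2*n3)` -/
def extz (A : Tensor n1 n2 n3) (x : ZMod (2*n3)) : Matrix (Fin n1) (Fin n2) ℂ :=
  extT A (x.val)

theorem extT_eq_extz (A : Tensor n1 n2 n3) (d : ℤ) :
    extT A d = extz A (d : ZMod (2*n3)) := by
  unfold extz
  have h1 : (((d : ZMod (2*n3)).val : ℤ)) = d % (2*n3) := ZMod.val_intCast d
  rw [← extT_emod A d, ← h1]

theorem extz_intCast (A : Tensor n1 n2 n3) (d : ℤ) :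
    extz A ((d : ZMod (2*n3))) = extT A d := (extT_eq_extz A d).symm

theorem extz_neg (hn : 0 < n3) (A : Tensor n1 n2 n3) (x : ZMod (2*n3)) :
    extz A (-x) = extz A x := by
  have hx : ((x.val : ℕ) : ZMod (2*n3)) = x := by
    rw [ZMod.natCast_val, ZMod.cast_id]
  have h1 : -x = (((-(x.val : ℤ)) : ℤ) : ZMod (2*n3)) := by push_cast; rw [hx]
  rw [h1, extz_intCast, extT_neg hn, extT_eq_extz, Int.cast_natCast, hx]

end withPos
end Tensor

namespace Tensor
variable {n1 n2 n3 l : ℕ}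

theorem extT_eval (hn : 0 < n3) (A : Tensor n1 n2 n3) (e : ℕ) (he : e < n3) :
    extT A e = A ⟨e, he⟩ := by
  rw [extT_natCast hn A e (by omega)]
  have h1 : min e (2*n3 - e) = e := by omega
  simp only [h1]
  rw [dif_pos he]

theorem extT_eval_n3 (hn : 0 < n3) (A : Tensor n1 n2 n3) :
    extT A (n3 : ℕ) = 0 := by
  rw [extT_natCast hn A n3 (by omega)]
  have h1 : min n3 (2*n3 - n3) = n3 := by omega
  simp only [h1]
  rw [dif_neg (lt_irrefl n3)]

theorem extT_eval_big (hn : 0 < n3) (A : Tensor n1 n2 n3) (e : ℕ)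
    (h1 : n3 < e) (h2 : e < 2*n3) :
    extT A e = A ⟨2*n3 - e, by omega⟩ := by
  rw [extT_natCast hn A e h2]
  have h3 : min e (2*n3 - e) = 2*n3 - e := by omega
  simp only [h3]
  rw [dif_pos (by omega)]

section conv
variable [NeZero (2*n3)]

noncomputable def convK (A : Tensor n1 n2 n3) (B : Tensor n2 l n3) (x : ZMod (2*n3)) :
    Matrix (Fin n1) (Fin l) ℂ :=
  ∑ u : ZMod (2*n3), extz A (x - u) * extz B u

theorem convK_neg (hn : 0 < n3) (A : Tensor n1 n2 n3) (B : Tensor n2 l n3)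
    (x : ZMod (2*n3)) : convK A B (-x) = convK A B x := by
  unfold convK
  refine Fintype.sum_equiv (Equiv.neg (ZMod (2*n3))) _ _ fun u => ?_
  simp only [Equiv.neg_apply]
  rw [show x - -u = -(-x - u) by ring, extz_neg hn, extz_neg hn]

/-- the bijection `Fin n3 ⊕ Fin n3 ≃ ZMod (2*n3)` used to fold convolutions -/
noncomputable def sumEquiv (c : ZMod (2*n3)) : (Fin n3 ⊕ Fin n3) ≃ ZMod (2*n3) :=
  Equiv.ofBijective
    (Sum.elim (fun u : Fin n3 => c + (u.1 : ZMod (2*n3)))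
      (fun u : Fin n3 => c - ((u.1 : ZMod (2*n3)) + 1))) <| by
    have hn : 0 < n3 := by have := NeZero.pos (2*n3); omega
    rw [Fintype.bijective_iff_injective_and_card]
    constructor
    · rintro (u|u) (v|v) h <;> simp only [Sum.elim_inl, Sum.elim_inr] at h
      · have h2 : ((u.1 : ℕ) : ZMod (2*n3)) = (v.1 : ℕ) := by linear_combination h
        have h3 := congrArg ZMod.val h2
        rw [ZMod.val_natCast_of_lt (by omega), ZMod.val_natCast_of_lt (by omega)] at h3
        exact congrArg Sum.inl (Fin.ext h3)
      · exfalso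
        have h2 : ((u.1 + v.1 + 1 : ℕ) : ZMod (2*n3)) = 0 := by push_cast; linear_combination h
        rw [ZMod.natCast_eq_zero_iff] at h2
        have := Nat.le_of_dvd (by omega) h2
        omega
      · exfalso
        have h2 : ((v.1 + u.1 + 1 : ℕ) : ZMod (2*n3)) = 0 := by push_cast; linear_combination -h
        rw [ZMod.natCast_eq_zero_iff] at h2
        have := Nat.le_of_dvd (by omega) h2
        omega
      · have h2 : ((u.1 : ℕ) : ZMod (2*n3)) = (v.1 : ℕ) := by linear_combination -h
        have h3 := congrArg ZMod.val h2
        rw [ZMod.val_natCast_of_lt (by omega), ZMod.val_natCast_of_lt (by omega)] at h3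
        exact congrArg Sum.inr (Fin.ext h3)
    · simp [ZMod.card]; omega

@[simp] theorem sumEquiv_inl (c : ZMod (2*n3)) (u : Fin n3) :
    sumEquiv c (Sum.inl u) = c + (u.1 : ZMod (2*n3)) := rfl
@[simp] theorem sumEquiv_inr (c : ZMod (2*n3)) (u : Fin n3) :
    sumEquiv c (Sum.inr u) = c - ((u.1 : ZMod (2*n3)) + 1) := rfl

theorem conv_main (hn : 0 < n3) (A : Tensor n1 n2 n3) (B : Tensor n2 l n3) (t s : Fin n3) :
    ∑ u : Fin n3,
      ((extz A ((t.1 : ZMod (2*n3)) - (u.1 : ZMod (2*n3)))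
          + extz A ((t.1 : ZMod (2*n3)) + (u.1 : ZMod (2*n3)) + 1)) *
        (extz B ((u.1 : ZMod (2*n3)) - (s.1 : ZMod (2*n3)))
          + extz B ((u.1 : ZMod (2*n3)) + (s.1 : ZMod (2*n3)) + 1)))
    = convK A B ((t.1 : ZMod (2*n3)) - (s.1 : ZMod (2*n3)))
      + convK A B ((t.1 : ZMod (2*n3)) + (s.1 : ZMod (2*n3)) + 1) := by
  set T := ((t.1 : ZMod (2*n3))) with hT
  set S := ((s.1 : ZMod (2*n3))) with hS
  have h14 : convK A B (T - S)
      = (∑ u : Fin n3, extz A (T - (u.1 : ZMod (2*n3))) * extz B ((u.1 : ZMod (2*n3)) - S))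
      + ∑ u : Fin n3, extz A (T + (u.1 : ZMod (2*n3)) + 1) * extz B ((u.1 : ZMod (2*n3)) + S + 1) := by
    have e1 : convK A B (T - S) = ∑ w : ZMod (2*n3), extz A (T - w) * extz B (w - S) := by
      unfold convK
      refine (Fintype.sum_equiv (Equiv.subRight S) _ _ fun w => ?_).symm
      simp only [Equiv.subRight_apply]
      rw [show T - S - (w - S) = T - w by ring]
    rw [e1, ← Equiv.sum_comp (sumEquiv (0 : ZMod (2*n3)))
      (fun w => extz A (T - w) * extz B (w - S)), Fintype.sum_sum_type]
    congr 1
    · refine Finset.sum_congr rfl fun u _ => ?_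
      simp only [sumEquiv_inl, zero_add]
    · refine Finset.sum_congr rfl fun u _ => ?_
      simp only [sumEquiv_inr]
      rw [show T - (0 - ((u.1 : ZMod (2*n3)) + 1)) = T + (u.1 : ZMod (2*n3)) + 1 by ring,
        show (0 - ((u.1 : ZMod (2*n3)) + 1)) - S = -((u.1 : ZMod (2*n3)) + S + 1) by ring,
        extz_neg hn]
  have h23 : convK A B (T + S + 1)
      = (∑ u : Fin n3, extz A (T - (u.1 : ZMod (2*n3))) * extz B ((u.1 : ZMod (2*n3)) + S + 1))
      + ∑ u : Fin n3, extz A (T + (u.1 : ZMod (2*n3)) + 1) * extz B ((u.1 : ZMod (2*n3)) - S) := by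
    unfold convK
    rw [← Equiv.sum_comp (sumEquiv (S + 1 : ZMod (2*n3)))
      (fun w => extz A (T + S + 1 - w) * extz B w), Fintype.sum_sum_type]
    congr 1
    · refine Finset.sum_congr rfl fun u _ => ?_
      simp only [sumEquiv_inl]
      rw [show T + S + 1 - (S + 1 + (u.1 : ZMod (2*n3))) = T - (u.1 : ZMod (2*n3)) by ring,
        show S + 1 + (u.1 : ZMod (2*n3)) = (u.1 : ZMod (2*n3)) + S + 1 by ring]
    · refine Finset.sum_congr rfl fun u _ => ?_
      simp only [sumEquiv_inr]
      rw [show T + S + 1 - (S + 1 - ((u.1 : ZMod (2*n3)) + 1)) = T + (u.1 : ZMod (2*n3)) + 1 by ring,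
        show S + 1 - ((u.1 : ZMod (2*n3)) + 1) = -((u.1 : ZMod (2*n3)) - S) by ring,
        extz_neg hn]
  calc ∑ u : Fin n3,
      ((extz A (T - (u.1 : ZMod (2*n3))) + extz A (T + (u.1 : ZMod (2*n3)) + 1)) *
        (extz B ((u.1 : ZMod (2*n3)) - S) + extz B ((u.1 : ZMod (2*n3)) + S + 1)))
      = ∑ u : Fin n3,
        ((extz A (T - (u.1 : ZMod (2*n3))) * extz B ((u.1 : ZMod (2*n3)) - S)
          + extz A (T + (u.1 : ZMod (2*n3)) + 1) * extz B ((u.1 : ZMod (2*n3)) + S + 1))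
        + (extz A (T - (u.1 : ZMod (2*n3))) * extz B ((u.1 : ZMod (2*n3)) + S + 1)
          + extz A (T + (u.1 : ZMod (2*n3)) + 1) * extz B ((u.1 : ZMod (2*n3)) - S))) := by
        refine Finset.sum_congr rfl fun u _ => ?_
        rw [Matrix.add_mul, Matrix.mul_add, Matrix.mul_add]
        abel
    _ = (∑ u : Fin n3,
          (extz A (T - (u.1 : ZMod (2*n3))) * extz B ((u.1 : ZMod (2*n3)) - S)
          + extz A (T + (u.1 : ZMod (2*n3)) + 1) * extz B ((u.1 : ZMod (2*n3)) + S + 1)))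
        + ∑ u : Fin n3,
          (extz A (T - (u.1 : ZMod (2*n3))) * extz B ((u.1 : ZMod (2*n3)) + S + 1)
          + extz A (T + (u.1 : ZMod (2*n3)) + 1) * extz B ((u.1 : ZMod (2*n3)) - S)) :=
        Finset.sum_add_distrib
    _ = convK A B (T - S) + convK A B (T + S + 1) := by
        rw [Finset.sum_add_distrib, Finset.sum_add_distrib, h14, h23]

end conv
end Tensor

namespace Tensor
variable {n1 n2 n3 l : ℕ}

theorem matT_eq_ext (hn : 0 < n3) (A : Tensor n1 n2 n3) (t s : Fin n3)
    (a : Fin n1) (b : Fin n2) :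
    matT A (t, a) (s, b)
      = (extT A ((t.1 : ℤ) - (s.1 : ℤ)) + extT A ((t.1 : ℤ) + (s.1 : ℤ) + 1)) a b := by
  rw [Matrix.add_apply]
  unfold matT
  congr 1
  · -- Toeplitz part
    by_cases h : s.1 ≤ t.1
    · have h1 : (t.1 : ℤ) - s.1 = ((t.1 - s.1 : ℕ) : ℤ) := by push_cast; omega
      rw [h1, extT_eval hn A (t.1 - s.1) (by omega)]
      have h2 : t.1 - s.1 + (s.1 - t.1) = t.1 - s.1 := by omega
      simp only [h2]
    · have h1 : (t.1 : ℤ) - s.1 = -((s.1 - t.1 : ℕ) : ℤ) := by push_cast; omega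
      rw [h1, extT_neg hn, extT_eval hn A (s.1 - t.1) (by omega)]
      have h2 : t.1 - s.1 + (s.1 - t.1) = s.1 - t.1 := by omega
      simp only [h2]
  · -- Hankel part
    have h1 : (t.1 : ℤ) + s.1 + 1 = ((t.1 + s.1 + 1 : ℕ) : ℤ) := by push_cast; ring
    rw [h1]
    by_cases h : t.1 + s.1 + 2 ≤ n3
    · rw [dif_pos h, extT_eval hn A (t.1 + s.1 + 1) (by omega)]
    · rw [dif_neg h]
      by_cases h2 : n3 ≤ t.1 + s.1
      · rw [dif_pos h2, extT_eval_big hn A (t.1 + s.1 + 1) (by omega) (by omega)]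
        have h3 : 2*n3 - (t.1 + s.1 + 1) = 2*n3 - (t.1+s.1) - 1 := by omega
        simp only [h3]
      · rw [dif_neg h2]
        have h3 : t.1 + s.1 + 1 = n3 := by omega
        rw [h3, extT_eval_n3 hn A]
        simp
end Tensor

theorem neg_one_pow_parity {a b : ℕ} (h : a % 2 = b % 2) : (-1:ℂ)^a = (-1)^b := by
  have key : ∀ n : ℕ, (-1:ℂ)^n = (-1)^(n % 2) := fun n => by
    conv_lhs => rw [← Nat.mod_add_div n 2]
    rw [pow_add, pow_mul]
    norm_num
  rw [key a, key b, h]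

theorem neg_one_pow_cancel {v1 v2 : ℕ} (h : (v1 + v2) % 2 = 1) (k : ℕ) :
    (-1:ℂ)^(k + v1 + 1) + (-1:ℂ)^(k + v2 + 1) = 0 := by
  rcases Nat.even_or_odd (k + v1 + 1) with h1 | h1
  · have h2 : Odd (k + v2 + 1) := by
      rw [Nat.odd_iff]
      rw [Nat.even_iff] at h1
      omega
    rw [h1.neg_one_pow, h2.neg_one_pow]
    ring
  · have h2 : Even (k + v2 + 1) := by
      rw [Nat.even_iff]
      rw [Nat.odd_iff] at h1
      omega
    rw [h1.neg_one_pow, h2.neg_one_pow]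
    ring

namespace Tensor
variable {n1 n2 n3 l : ℕ}

theorem zmod_val_cast [NeZero (2*n3)] (x : ZMod (2*n3)) :
    ((x.val : ℕ) : ZMod (2*n3)) = x := by
  rw [ZMod.natCast_val, ZMod.cast_id]

theorem exists_matT_mul (hn : 0 < n3) (A : Tensor n1 n2 n3) (B : Tensor n2 l n3) :
    ∃ C : Tensor n1 l n3, matT A * matT B = matT C := by
  haveI : NeZero (2*n3) := ⟨by omega⟩
  set C : Tensor n1 l n3 := fun m => convK A B ((m.1 : ℕ) : ZMod (2*n3))
      + ((-1:ℂ)^(n3 + m.1 + 1)) • convK A B ((n3 : ℕ) : ZMod (2*n3)) with hCdef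
  refine ⟨C, ?_⟩
  have hC : ∀ x : ZMod (2*n3), extz C x
      = convK A B x + ((-1:ℂ)^(n3 + x.val + 1)) • convK A B ((n3:ℕ) : ZMod (2*n3)) := by
    intro x
    rcases lt_trichotomy x.val n3 with h | h | h
    · show extT C (x.val : ℕ) = _
      rw [extT_eval hn C x.val h, hCdef]
      simp only [zmod_val_cast]
    · show extT C (x.val : ℕ) = _
      rw [h, extT_eval_n3 hn C]
      have hx : x = ((n3:ℕ) : ZMod (2*n3)) := by rw [← zmod_val_cast x, h]
      rw [hx]
      have hodd : Odd (n3 + n3 + 1) := ⟨n3, by ring⟩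
      rw [hodd.neg_one_pow]
      simp
    · show extT C (x.val : ℕ) = _
      have hlt : x.val < 2*n3 := ZMod.val_lt x
      rw [extT_eval_big hn C x.val h hlt, hCdef]
      have hneg : ((2*n3 - x.val : ℕ) : ZMod (2*n3)) = -x := by
        have h1 : ((2*n3 - x.val : ℕ) : ZMod (2*n3)) + ((x.val : ℕ) : ZMod (2*n3))
            = ((2*n3 : ℕ) : ZMod (2*n3)) := by
          rw [← Nat.cast_add]; congr 1; omega
        rw [ZMod.natCast_self, zmod_val_cast] at h1
        linear_combination h1
      simp only []
      rw [hneg, convK_neg hn, neg_one_pow_parity (a := n3 + (2*n3 - x.val) + 1)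
        (b := n3 + x.val + 1) (by omega)]
  ext pp qq
  obtain ⟨t, a⟩ := pp
  obtain ⟨s, b⟩ := qq
  have hcast1 : ∀ i j : ℕ, (((i:ℤ) - (j:ℤ) : ℤ) : ZMod (2*n3))
      = (i : ZMod (2*n3)) - (j : ZMod (2*n3)) := by intros; push_cast; ring
  have hcast2 : ∀ i j : ℕ, (((i:ℤ) + (j:ℤ) + 1 : ℤ) : ZMod (2*n3))
      = (i : ZMod (2*n3)) + (j : ZMod (2*n3)) + 1 := by intros; push_cast; ring
  have lhs_eq : (matT A * matT B) (t,a) (s,b)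
      = (convK A B ((t.1 : ZMod (2*n3)) - (s.1 : ZMod (2*n3)))
        + convK A B ((t.1 : ZMod (2*n3)) + (s.1 : ZMod (2*n3)) + 1)) a b := by
    rw [Matrix.mul_apply, ← conv_main hn A B t s, Fintype.sum_prod_type, Matrix.sum_apply]
    refine Finset.sum_congr rfl fun u _ => ?_
    rw [Matrix.mul_apply]
    refine Finset.sum_congr rfl fun c _ => ?_
    rw [matT_eq_ext hn A t u a c, matT_eq_ext hn B u s c b]
    congr 2
    · rw [extT_eq_extz, extT_eq_extz, hcast1, hcast2]
    · rw [extT_eq_extz, extT_eq_extz, hcast1, hcast2]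
  rw [lhs_eq, matT_eq_ext hn C t s a b]
  rw [Matrix.add_apply, Matrix.add_apply, extT_eq_extz, extT_eq_extz, hcast1, hcast2,
    hC, hC]
  have hv : (((t.1 : ZMod (2*n3)) - (s.1 : ZMod (2*n3))).val
      + ((t.1 : ZMod (2*n3)) + (s.1 : ZMod (2*n3)) + 1).val) % 2 = 1 := by
    have e1 : ((t.1 : ZMod (2*n3)) - (s.1 : ZMod (2*n3)))
        = (((t.1 : ℤ) - (s.1 : ℤ) : ℤ) : ZMod (2*n3)) := (hcast1 _ _).symm
    have e2 : ((t.1 : ZMod (2*n3)) + (s.1 : ZMod (2*n3)) + 1)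
        = (((t.1 : ℤ) + (s.1 : ℤ) + 1 : ℤ) : ZMod (2*n3)) := (hcast2 _ _).symm
    have v1 := ZMod.val_intCast (n := 2*n3) ((t.1 : ℤ) - (s.1 : ℤ))
    have v2 := ZMod.val_intCast (n := 2*n3) ((t.1 : ℤ) + (s.1 : ℤ) + 1)
    rw [← e1] at v1
    rw [← e2] at v2
    have w1 : (((t.1 : ZMod (2*n3)) - (s.1 : ZMod (2*n3))).val : ℤ) % 2
        = ((t.1 : ℤ) - (s.1 : ℤ)) % 2 := by
      rw [v1, Int.emod_emod_of_dvd _ ⟨(n3:ℤ), by push_cast; ring⟩]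
    have w2 : ((((t.1 : ZMod (2*n3)) + (s.1 : ZMod (2*n3)) + 1)).val : ℤ) % 2
        = ((t.1 : ℤ) + (s.1 : ℤ) + 1) % 2 := by
      rw [v2, Int.emod_emod_of_dvd _ ⟨(n3:ℤ), by push_cast; ring⟩]
    omega
  simp only [Matrix.add_apply, Matrix.smul_apply, smul_eq_mul]
  have hcancel := neg_one_pow_cancel hv n3
  linear_combination -(convK A B ((n3:ℕ) : ZMod (2*n3)) a b) * hcancel

end Tensor

namespace Tensor
variable {n1 n2 n3 l n : ℕ}

theorem matT_cmul (A : Tensor n1 n2 n3) (B : Tensor n2 l n3) :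
    matT (cmul A B) = matT A * matT B := by
  rcases Nat.eq_zero_or_pos n3 with h | h
  · subst h
    ext p q
    exact absurd p.1.isLt (by omega)
  · obtain ⟨C, hC⟩ := exists_matT_mul h A B
    rw [cmul, hC, tenT_matT]

theorem matT_injective : Function.Injective (matT : Tensor n1 n2 n3 → _) :=
  fun A B h => by rw [← tenT_matT A, ← tenT_matT B, h]

theorem matT_zero : matT (0 : Tensor n1 n2 n3) = 0 := by
  ext p q
  simp only [matT, Matrix.zero_apply, Pi.zero_apply]
  split_ifs <;> simp

theorem matT_idT : matT (idT : Tensor n n n3) = 1 := by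
  ext p q
  obtain ⟨t, a⟩ := p; obtain ⟨s, b⟩ := q
  have key : ∀ (k : ℕ) (hk : k < n3), (idT : Tensor n n n3) ⟨k, hk⟩ a b
      = if k = 0 ∧ a = b then 1 else 0 := by
    intro k hk
    simp only [idT]
    rcases eq_or_ne k 0 with h | h
    · simp [h, Matrix.one_apply]
    · simp [h]
  simp only [matT, key, Matrix.one_apply, Prod.mk.injEq]
  split_ifs <;> simp_all [Fin.ext_iff] <;> omega

theorem matT_conjT (A : Tensor n1 n2 n3) : matT (conjT A) = (matT A).conjTranspose := by
  ext p q
  obtain ⟨t, a⟩ := p; obtain ⟨s, b⟩ := q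
  simp only [matT, conjT, Matrix.conjTranspose_apply]
  have h1 : s.1 - t.1 + (t.1 - s.1) = t.1 - s.1 + (s.1 - t.1) := by omega
  have h2 : s.1 + t.1 = t.1 + s.1 := by omega
  simp only [h1, h2, star_add]
  congr 1
  split_ifs <;> simp

theorem matT_add (A B : Tensor n1 n2 n3) : matT (A + B) = matT A + matT B := by
  ext p q
  simp only [matT, Matrix.add_apply, Pi.add_apply]
  split_ifs <;> ring

theorem matT_smul (c : ℂ) (A : Tensor n1 n2 n3) : matT (c • A) = c • matT A := by
  ext p q
  simp only [matT, Matrix.smul_apply, Pi.smul_apply, smul_eq_mul]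
  split_ifs <;> ring

theorem tenT_add (M N : Matrix (Fin n3 × Fin n1) (Fin n3 × Fin n2) ℂ) :
    tenT (M + N) = tenT M + tenT N := by
  funext i
  ext a b
  simp only [tenT, Matrix.of_apply, Pi.add_apply, Matrix.add_apply,
    ← Finset.sum_add_distrib]
  refine Finset.sum_congr rfl fun t _ => ?_
  split_ifs <;> ring

theorem tenT_smul (c : ℂ) (M : Matrix (Fin n3 × Fin n1) (Fin n3 × Fin n2) ℂ) :
    tenT (c • M) = c • tenT M := by
  funext i
  ext a b
  simp only [tenT, Matrix.of_apply, Pi.smul_apply, Matrix.smul_apply, smul_eq_mul,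
    Finset.mul_sum]
  refine Finset.sum_congr rfl fun t _ => ?_
  split_ifs <;> ring

theorem cmul_add (A : Tensor n1 n2 n3) (B C : Tensor n2 l n3) :
    cmul A (B + C) = cmul A B + cmul A C := by
  unfold cmul
  rw [matT_add, Matrix.mul_add, tenT_add]

theorem cmul_smul (A : Tensor n1 n2 n3) (c : ℂ) (B : Tensor n2 l n3) :
    cmul A (c • B) = c • cmul A B := by
  unfold cmul
  rw [matT_smul, Matrix.mul_smul, tenT_smul]

/-- If `matT X` is invertible as a matrix, then `X` has a tensor inverse. -/
theorem exists_isInverse_of_isUnit {X : Tensor n n n3} (h : IsUnit (matT X)) :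
    ∃ W, IsInverse X W := by
  let L : Tensor n n n3 →ₗ[ℂ] Tensor n n n3 :=
    { toFun := fun Y => cmul X Y
      map_add' := fun Y Z => cmul_add X Y Z
      map_smul' := fun c Y => cmul_smul X c Y }
  have hinj : Function.Injective L := by
    intro Y Z hyz
    have h1 : matT (cmul X Y) = matT (cmul X Z) := congrArg matT hyz
    rw [matT_cmul, matT_cmul] at h1
    exact matT_injective (h.mul_left_cancel h1)
  have hsurj : Function.Surjective L := by
    rw [← LinearMap.injective_iff_surjective]
    exact hinj
  obtain ⟨W, hW⟩ := hsurj idT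
  have hW' : cmul X W = idT := hW
  refine ⟨W, hW', ?_⟩
  apply matT_injective
  rw [matT_cmul, matT_idT]
  have h1 : matT X * matT W = 1 := by
    have := congrArg matT hW'
    rw [matT_cmul, matT_idT] at this
    exact this
  exact mul_eq_one_comm.mp h1

/-- the index equivalence used to relate `matT` of a block tensor to `fromBlocks` -/
def blkEquiv (n3 m k : ℕ) : ((Fin n3 × Fin m) ⊕ (Fin n3 × Fin k)) ≃ (Fin n3 × Fin (m+k)) :=
  (Equiv.prodSumDistrib (Fin n3) (Fin m) (Fin k)).symm.trans
    ((Equiv.refl (Fin n3)).prodCongr finSumFinEquiv)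

theorem blkEquiv_inl {m k : ℕ} (i : Fin n3) (a : Fin m) :
    blkEquiv n3 m k (Sum.inl (i, a)) = (i, finSumFinEquiv (Sum.inl a)) := rfl

theorem blkEquiv_inr {m k : ℕ} (i : Fin n3) (a : Fin k) :
    blkEquiv n3 m k (Sum.inr (i, a)) = (i, finSumFinEquiv (Sum.inr a)) := rfl

theorem blkEquiv_symm_inl {m k : ℕ} (i : Fin n3) (a : Fin m) :
    (blkEquiv n3 m k).symm (i, finSumFinEquiv (Sum.inl a)) = Sum.inl (i, a) := by
  rw [← blkEquiv_inl, Equiv.symm_apply_apply]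

theorem blkEquiv_symm_inr {m k : ℕ} (i : Fin n3) (a : Fin k) :
    (blkEquiv n3 m k).symm (i, finSumFinEquiv (Sum.inr a)) = Sum.inr (i, a) := by
  rw [← blkEquiv_inr, Equiv.symm_apply_apply]

theorem matT_entry_congr {m1 m2 : ℕ} (T : Tensor n1 n2 n3) (T' : Tensor m1 m2 n3)
    (t s : Fin n3) (a : Fin n1) (b : Fin n2) (a' : Fin m1) (b' : Fin m2)
    (h : ∀ i : Fin n3, T i a b = T' i a' b') :
    matT T (t, a) (s, b) = matT T' (t, a') (s, b') := by
  simp only [matT]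
  rw [h]
  congr 1
  split_ifs <;> simp [h]

theorem matT_blockT {r s t u : ℕ} (A : Tensor r t n3) (B : Tensor r u n3)
    (C : Tensor s t n3) (D : Tensor s u n3) :
    matT (blockT A B C D) =
      ((Matrix.fromBlocks (matT A) (matT B) (matT C) (matT D)).submatrix
        (blkEquiv n3 r s).symm (blkEquiv n3 t u).symm) := by
  ext p q
  obtain ⟨i, a⟩ := p; obtain ⟨j, b⟩ := q
  rcases finSumFinEquiv.surjective a with ⟨a', rfl⟩
  rcases finSumFinEquiv.surjective b with ⟨b', rfl⟩
  rcases a' with a' | a' <;> rcases b' with b' | b'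
  · rw [Matrix.submatrix_apply, blkEquiv_symm_inl, blkEquiv_symm_inl,
      Matrix.fromBlocks_apply₁₁]
    exact matT_entry_congr _ _ _ _ _ _ _ _ fun k => by
      simp [blockT, Matrix.fromBlocks_apply₁₁]
  · rw [Matrix.submatrix_apply, blkEquiv_symm_inl, blkEquiv_symm_inr,
      Matrix.fromBlocks_apply₁₂]
    exact matT_entry_congr _ _ _ _ _ _ _ _ fun k => by
      simp [blockT, Matrix.fromBlocks_apply₁₂]
  · rw [Matrix.submatrix_apply, blkEquiv_symm_inr, blkEquiv_symm_inl,
      Matrix.fromBlocks_apply₂₁]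
    exact matT_entry_congr _ _ _ _ _ _ _ _ fun k => by
      simp [blockT, Matrix.fromBlocks_apply₂₁]
  · rw [Matrix.submatrix_apply, blkEquiv_symm_inr, blkEquiv_symm_inr,
      Matrix.fromBlocks_apply₂₂]
    exact matT_entry_congr _ _ _ _ _ _ _ _ fun k => by
      simp [blockT, Matrix.fromBlocks_apply₂₂]

end Tensor
namespace Tensor

theorem adj_cancel {I K : Type*} [Fintype I] [DecidableEq I] (v1 v2 : Matrix I I ℂ) (h : v1 * v2 = 1)
    (Z : Matrix I K ℂ) : v1 * (v2 * Z) = Z := by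
  rw [← Matrix.mul_assoc, h, Matrix.one_mul]

section Final
variable {r p q n3 : ℕ}

/-- `G`-shaped matrices -/
def shapeP (U : Tensor (r+q) (r+q) n3) (V : Tensor (r+p) (r+p) n3)
    (M : Matrix ((Fin n3 × Fin r) ⊕ (Fin n3 × Fin q)) ((Fin n3 × Fin r) ⊕ (Fin n3 × Fin p)) ℂ) :
    Matrix (Fin n3 × Fin (r+q)) (Fin n3 × Fin (r+p)) ℂ :=
  matT U * M.submatrix (blkEquiv n3 r q).symm (blkEquiv n3 r p).symm * (matT V).conjTranspose

/-- `A`-shaped matrices -/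
def shapeQ (U : Tensor (r+q) (r+q) n3) (V : Tensor (r+p) (r+p) n3)
    (N : Matrix ((Fin n3 × Fin r) ⊕ (Fin n3 × Fin p)) ((Fin n3 × Fin r) ⊕ (Fin n3 × Fin q)) ℂ) :
    Matrix (Fin n3 × Fin (r+p)) (Fin n3 × Fin (r+q)) ℂ :=
  matT V * N.submatrix (blkEquiv n3 r p).symm (blkEquiv n3 r q).symm * (matT U).conjTranspose

def shapeR1 (V : Tensor (r+p) (r+p) n3)
    (N : Matrix ((Fin n3 × Fin r) ⊕ (Fin n3 × Fin p)) ((Fin n3 × Fin r) ⊕ (Fin n3 × Fin p)) ℂ) :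
    Matrix (Fin n3 × Fin (r+p)) (Fin n3 × Fin (r+p)) ℂ :=
  matT V * N.submatrix (blkEquiv n3 r p).symm (blkEquiv n3 r p).symm * (matT V).conjTranspose

def shapeR2 (U : Tensor (r+q) (r+q) n3)
    (M : Matrix ((Fin n3 × Fin r) ⊕ (Fin n3 × Fin q)) ((Fin n3 × Fin r) ⊕ (Fin n3 × Fin q)) ℂ) :
    Matrix (Fin n3 × Fin (r+q)) (Fin n3 × Fin (r+q)) ℂ :=
  matT U * M.submatrix (blkEquiv n3 r q).symm (blkEquiv n3 r q).symm * (matT U).conjTranspose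

variable (U : Tensor (r+q) (r+q) n3) (V : Tensor (r+p) (r+p) n3)

theorem mulPQ (hv : (matT V).conjTranspose * matT V = 1) (M N) :
    shapeP U V M * shapeQ U V N = shapeR2 U (M * N) := by
  unfold shapeP shapeQ shapeR2
  simp only [Matrix.mul_assoc]
  rw [adj_cancel _ _ hv, ← Matrix.mul_assoc
    (M.submatrix (blkEquiv n3 r q).symm ⇑(blkEquiv n3 r p).symm),
    Matrix.submatrix_mul_equiv]

theorem mulR2P (hu : (matT U).conjTranspose * matT U = 1) (M N) :
    shapeR2 U M * shapeP U V N = shapeP U V (M * N) := by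
  unfold shapeP shapeR2
  simp only [Matrix.mul_assoc]
  rw [adj_cancel _ _ hu, ← Matrix.mul_assoc
    (M.submatrix (blkEquiv n3 r q).symm ⇑(blkEquiv n3 r q).symm),
    Matrix.submatrix_mul_equiv]

theorem mulQR2 (hu : (matT U).conjTranspose * matT U = 1) (M N) :
    shapeQ U V M * shapeR2 U N = shapeQ U V (M * N) := by
  unfold shapeQ shapeR2
  simp only [Matrix.mul_assoc]
  rw [adj_cancel _ _ hu, ← Matrix.mul_assoc
    (M.submatrix (blkEquiv n3 r p).symm ⇑(blkEquiv n3 r q).symm),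
    Matrix.submatrix_mul_equiv]

theorem mulPR1 (hv : (matT V).conjTranspose * matT V = 1) (M N) :
    shapeP U V M * shapeR1 V N = shapeP U V (M * N) := by
  unfold shapeP shapeR1
  simp only [Matrix.mul_assoc]
  rw [adj_cancel _ _ hv, ← Matrix.mul_assoc
    (M.submatrix (blkEquiv n3 r q).symm ⇑(blkEquiv n3 r p).symm),
    Matrix.submatrix_mul_equiv]

theorem adjP (M) : (shapeP U V M).conjTranspose = shapeQ U V M.conjTranspose := by
  unfold shapeP shapeQ
  simp only [Matrix.conjTranspose_mul, Matrix.conjTranspose_conjTranspose,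
    Matrix.conjTranspose_submatrix, Matrix.mul_assoc]

theorem mulP_any (hv2 : matT V * (matT V).conjTranspose = 1) (M)
    (Z : Matrix (Fin n3 × Fin (r+p)) (Fin n3 × Fin (r+p)) ℂ) :
    shapeP U V M * Z = shapeP U V
      (M * ((matT V).conjTranspose * Z * matT V).submatrix (blkEquiv n3 r p) (blkEquiv n3 r p)) := by
  unfold shapeP
  have hsub : (((matT V).conjTranspose * Z * matT V).submatrix (blkEquiv n3 r p)
      (blkEquiv n3 r p)).submatrix (blkEquiv n3 r p).symm (blkEquiv n3 r p).symm
      = (matT V).conjTranspose * Z * matT V := by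
    simp [Matrix.submatrix_submatrix]
  rw [← Matrix.submatrix_mul_equiv M _ _ (blkEquiv n3 r p).symm, hsub]
  simp only [Matrix.mul_assoc]
  rw [hv2, Matrix.mul_one]

theorem injP (hu : (matT U).conjTranspose * matT U = 1)
    (hv : (matT V).conjTranspose * matT V = 1) (M N) (h : shapeP U V M = shapeP U V N) :
    M = N := by
  unfold shapeP at h
  have h2 := congrArg (fun Z => ((matT U).conjTranspose * Z * matT V).submatrix
    (blkEquiv n3 r q) (blkEquiv n3 r p)) h
  simp only [Matrix.mul_assoc] at h2
  rw [adj_cancel _ _ hu, adj_cancel _ _ hu, hv, Matrix.mul_one, Matrix.mul_one] at h2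
  simpa [Matrix.submatrix_submatrix, Equiv.symm_comp_self] using h2

end Final
end Tensor

open Tensor

theorem stmt10 {r p q n3 : ℕ} (A : Tensor (r + p) (r + q) n3)
    (G : Tensor (r + q) (r + p) n3)
    (U : Tensor (r + q) (r + q) n3) (V : Tensor (r + p) (r + p) n3)
    (Sr X : Tensor r r n3) (B : Tensor r q n3) (C : Tensor p r n3) (E : Tensor p q n3)
    (hU : Unitary U) (hV : Unitary V)
    (hSr : FDiag Sr) (hSrInv : ∃ W, IsInverse Sr W)
    (hG : G = cmul (cmul U (blockT Sr 0 0 0)) (conjT V))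
    (hA : A = cmul (cmul V (blockT X B C E)) (conjT U)) :
    ((∃ Y, IsInvAlong A G Y) ↔ ∃ W, IsInverse X W) ∧
      ∀ W, IsInverse X W →
        IsInvAlong A G (cmul (cmul U (blockT W 0 0 0)) (conjT V)) := by
  obtain ⟨hU1, hU2⟩ := hU
  obtain ⟨hV1, hV2⟩ := hV
  have uu1 : (matT U).conjTranspose * matT U = 1 := by
    have h := congrArg matT hU1; rwa [matT_cmul, matT_conjT, matT_idT] at h
  have uu2 : matT U * (matT U).conjTranspose = 1 := by
    have h := congrArg matT hU2; rwa [matT_cmul, matT_conjT, matT_idT] at h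
  have vv1 : (matT V).conjTranspose * matT V = 1 := by
    have h := congrArg matT hV1; rwa [matT_cmul, matT_conjT, matT_idT] at h
  have vv2 : matT V * (matT V).conjTranspose = 1 := by
    have h := congrArg matT hV2; rwa [matT_cmul, matT_conjT, matT_idT] at h
  obtain ⟨W0, hW01, hW02⟩ := hSrInv
  have hs1 : matT Sr * matT W0 = 1 := by
    have h := congrArg matT hW01; rwa [matT_cmul, matT_idT] at h
  have hs2 : matT W0 * matT Sr = 1 := by
    have h := congrArg matT hW02; rwa [matT_cmul, matT_idT] at h
  have hGm : matT G = shapeP U V (Matrix.fromBlocks (matT Sr) 0 0 0) := by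
    rw [hG, matT_cmul, matT_cmul, matT_conjT, matT_blockT]
    simp only [matT_zero]
    rfl
  have hAm : matT A = shapeQ U V
      (Matrix.fromBlocks (matT X) (matT B) (matT C) (matT E)) := by
    rw [hA, matT_cmul, matT_cmul, matT_conjT, matT_blockT]
    rfl
  have hYm : ∀ W' : Tensor r r n3,
      matT (cmul (cmul U (blockT W' 0 0 0)) (conjT V))
        = shapeP U V (Matrix.fromBlocks (matT W') 0 0 0) := by
    intro W'
    rw [matT_cmul, matT_cmul, matT_conjT, matT_blockT]
    simp only [matT_zero]
    rfl
  have hZm : ∀ Z : Tensor r r n3,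
      matT (cmul (cmul V (blockT Z 0 0 0)) (conjT V))
        = shapeR1 V (Matrix.fromBlocks (matT Z) 0 0 0) := by
    intro Z
    rw [matT_cmul, matT_cmul, matT_conjT, matT_blockT]
    simp only [matT_zero]
    rfl
  have hZm2 : ∀ Z : Tensor r r n3,
      matT (cmul (cmul U (blockT Z 0 0 0)) (conjT U))
        = shapeR2 U (Matrix.fromBlocks (matT Z) 0 0 0) := by
    intro Z
    rw [matT_cmul, matT_cmul, matT_conjT, matT_blockT]
    simp only [matT_zero]
    rfl
  have part2 : ∀ W, IsInverse X W →
      IsInvAlong A G (cmul (cmul U (blockT W 0 0 0)) (conjT V)) := by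
    intro W hW
    obtain ⟨hXW, hWX⟩ := hW
    have hx1 : matT X * matT W = 1 := by
      have h := congrArg matT hXW; rwa [matT_cmul, matT_idT] at h
    have hx2 : matT W * matT X = 1 := by
      have h := congrArg matT hWX; rwa [matT_cmul, matT_idT] at h
    refine ⟨?_, ?_, ?_, ?_⟩
    · -- (Y A) G = G
      apply matT_injective
      rw [matT_cmul, matT_cmul, hYm W, hAm, hGm, mulPQ U V vv1, mulR2P U V uu1]
      refine congrArg (shapeP U V) ?_
      simp [Matrix.fromBlocks_multiply, hx2]
    · -- (G A) Y = G
      apply matT_injective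
      rw [matT_cmul, matT_cmul, hYm W, hAm, hGm, mulPQ U V vv1, mulR2P U V uu1]
      refine congrArg (shapeP U V) ?_
      simp [Matrix.fromBlocks_multiply, Matrix.mul_assoc, hx1]
    · -- Y = G * U1
      refine ⟨cmul (cmul V (blockT (cmul W0 W) 0 0 0)) (conjT V), ?_⟩
      apply matT_injective
      rw [hYm W, matT_cmul, hGm, hZm (cmul W0 W), mulPR1 U V vv1]
      refine (congrArg (shapeP U V) ?_).symm
      rw [matT_cmul]
      simp [Matrix.fromBlocks_multiply, ← Matrix.mul_assoc, hs1]
    · -- conjT Y = conjT G * V1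
      refine ⟨cmul (cmul U (blockT (conjT (cmul W W0)) 0 0 0)) (conjT U), ?_⟩
      apply matT_injective
      rw [matT_cmul (conjT G), matT_conjT G, matT_conjT (cmul (cmul U (blockT W 0 0 0)) (conjT V)),
        hYm W, hGm, hZm2 (conjT (cmul W W0)), adjP, adjP, mulQR2 U V uu1]
      refine (congrArg (shapeQ U V) ?_).symm
      rw [matT_conjT, matT_cmul]
      simp only [Matrix.fromBlocks_conjTranspose, Matrix.conjTranspose_zero,
        Matrix.fromBlocks_multiply, Matrix.mul_zero, Matrix.zero_mul, add_zero, zero_add]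
      congr 1
      rw [← Matrix.conjTranspose_mul, Matrix.mul_assoc, hs2, Matrix.mul_one]
  refine ⟨⟨?_, fun ⟨W, hW⟩ => ⟨_, part2 W hW⟩⟩, part2⟩
  rintro ⟨Y, hY1, hY2, ⟨U1, hU1y⟩, -⟩
  -- forward direction : X is invertible
  rw [hU1y] at hY2
  have e1 := congrArg matT hY2
  rw [matT_cmul, matT_cmul, matT_cmul, hGm, hAm, mulPQ U V vv1] at e1
  rw [← Matrix.mul_assoc, mulR2P U V uu1, mulP_any U V vv2] at e1
  have e2 := injP U V uu1 vv1 _ _ e1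
  set N := ((matT V).conjTranspose * matT U1 * matT V).submatrix
    (blkEquiv n3 r p) (blkEquiv n3 r p) with hN
  rw [← Matrix.fromBlocks_toBlocks N, Matrix.fromBlocks_multiply,
    Matrix.fromBlocks_multiply, Matrix.fromBlocks_multiply] at e2
  have h11 := congrArg Matrix.toBlocks₁₁ e2
  simp only [Matrix.toBlocks_fromBlocks₁₁, Matrix.zero_mul, Matrix.mul_zero,
    add_zero, zero_add] at h11
  rw [Matrix.mul_assoc, Matrix.mul_assoc] at h11
  have h12 := congrArg (fun Z => matT W0 * Z) h11
  rw [adj_cancel _ _ hs2, hs2] at h12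
  haveI := invertibleOfRightInverse (h := h12)
  exact exists_isInverse_of_isUnit (isUnit_of_invertible _)
end
end
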